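/- arXiv:2102.07245 — 6 statements merged into one kernel-verified Lean document; each statement's English description precedes it below -/
import Mathlib

section
/- Let f_1, …, f_n : ℝ^d → ℝ be differentiable, convex, bounded below and L_i-smooth for symmetric positive semidefinite matrices L_i, and f = (1/n) Σ_i f_i. Let C_1, …, C_n be mutually independent sketches, C_i associated with a proper sampling S_i with matrix P̃_i, and define g(x) = (1/n) Σ_{i=1}^n L_i^{1/2} C_i L_i^{†1/2} ∇f_i(x). Then E[g(x)] = ∇f(x) for every x, and for every x, y ∈ ℝ^d: E[‖g(x) − ∇f(y)‖²] = ‖∇f(x) − ∇f(y)‖² + (1/n²) Σ_{i=1}^n ‖L_i^{†1/2} ∇f_i(x)‖²_{P̃_i ∘ L_i}. -/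
open scoped BigOperators RealInnerProductSpace
open Matrix

noncomputable section

/-- A proper sampling on `{1,…,d}`: a finitely supported probability distribution over
subsets of `Fin d` whose marginal probabilities are all positive. -/
structure Sampling (d : ℕ) where
  prob : Finset (Fin d) → ℝ
  nonneg : ∀ S, 0 ≤ prob S
  total : ∑ S : Finset (Fin d), prob S = 1
  margPos : ∀ j : Fin d, 0 < ∑ S : Finset (Fin d), if j ∈ S then prob S else 0

namespace Sampling

variable {d : ℕ} (μ : Sampling d)

/-- Marginal probability `p_j = Prob(j ∈ S)`. -/
def marg (j : Fin d) : ℝ := ∑ S : Finset (Fin d), if j ∈ S then μ.prob S else 0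

/-- Probability matrix `P`, with entries `p_{jl} = Prob({j,l} ⊆ S)`. -/
def probMatrix : Matrix (Fin d) (Fin d) ℝ :=
  Matrix.of fun j l => ∑ S : Finset (Fin d), if j ∈ S ∧ l ∈ S then μ.prob S else 0

/-- The matrix `P̄` with entries `p_{jl}/(p_j p_l)`. -/
def Pbar : Matrix (Fin d) (Fin d) ℝ :=
  Matrix.of fun j l => μ.probMatrix j l / (μ.marg j * μ.marg l)

/-- The matrix `P̃ = P̄ − E` where `E` is the all-ones matrix. -/
def Ptilde : Matrix (Fin d) (Fin d) ℝ := μ.Pbar - Matrix.of fun _ _ => (1 : ℝ)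

/-- The unbiased diagonal sketch `C` associated with a realization `S` of the sampling. -/
def sketch (S : Finset (Fin d)) : Matrix (Fin d) (Fin d) ℝ :=
  Matrix.diagonal fun j => if j ∈ S then (μ.marg j)⁻¹ else 0

end Sampling

/-- Largest eigenvalue of a symmetric matrix, via the Rayleigh quotient. -/
def lambdaMax {d : ℕ} (M : Matrix (Fin d) (Fin d) ℝ) : ℝ :=
  sSup {r : ℝ | ∃ v : Fin d → ℝ, v ⬝ᵥ v = 1 ∧ r = v ⬝ᵥ M.mulVec v}

/-- Smallest eigenvalue of a symmetric matrix, via the Rayleigh quotient. -/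
def lambdaMin {d : ℕ} (M : Matrix (Fin d) (Fin d) ℝ) : ℝ :=
  sInf {r : ℝ | ∃ v : Fin d → ℝ, v ⬝ᵥ v = 1 ∧ r = v ⬝ᵥ M.mulVec v}

/-- `Mdag` is the Moore–Penrose pseudoinverse of `M`. -/
def IsMoorePenrose {m n : Type*} [Fintype m] [Fintype n]
    (M : Matrix m n ℝ) (Mdag : Matrix n m ℝ) : Prop :=
  M * Mdag * M = M ∧ Mdag * M * Mdag = Mdag ∧
    (M * Mdag)ᵀ = M * Mdag ∧ (Mdag * M)ᵀ = Mdag * M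

/-- Vectors in `ℝ^d` with the Euclidean inner product. -/
abbrev Vec (d : ℕ) := EuclideanSpace ℝ (Fin d)

/-- Action of a matrix on a Euclidean vector. -/
def mact {d e : ℕ} (M : Matrix (Fin e) (Fin d) ℝ) (x : Vec d) : Vec e :=
  Matrix.toEuclideanLin M x

/-- Quadratic form `xᵀ M x`, i.e. the squared `M`-seminorm `‖x‖²_M`. -/
def quad {d : ℕ} (M : Matrix (Fin d) (Fin d) ℝ) (x : Vec d) : ℝ := ⟪x, mact M x⟫

/-- `f` is `M`-smooth: `f x ≤ f y + ⟨∇f(y), x−y⟩ + ½ (x−y)ᵀ M (x−y)` for all `x, y`. -/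
def MSmooth {d : ℕ} (f : Vec d → ℝ) (M : Matrix (Fin d) (Fin d) ℝ) : Prop :=
  ∀ x y : Vec d, f x ≤ f y + ⟪gradient f y, x - y⟫ + (1 / 2) * quad M (x - y)

/-- Random iterates driven by i.i.d. draws: `traj x0 step k ω` is the `k`-th iterate along
the sample path `ω` of `k` draws. -/
def traj {V Ω : Type*} (x0 : V) (step : V → Ω → V) : ∀ k : ℕ, (Fin k → Ω) → V
  | 0, _ => x0
  | k + 1, ω => step (traj x0 step k fun i => ω i.castSucc) (ω (Fin.last k))

/-- Expectation `E[φ(x^k)]` of a functional of the `k`-th iterate, over `k` i.i.d. draws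
with one-step distribution `P`. -/
def trajExp {V Ω : Type*} [Fintype Ω] (P : Ω → ℝ) (x0 : V) (step : V → Ω → V)
    (φ : V → ℝ) (k : ℕ) : ℝ :=
  ∑ ω : Fin k → Ω, (∏ i, P (ω i)) * φ (traj x0 step k ω)



namespace Matrix.PosSemidef
variable {n : Type*} [Fintype n] [DecidableEq n]
noncomputable def sqrt {A : Matrix n n ℝ} (hA : A.PosSemidef) : Matrix n n ℝ :=
  (hA.1.eigenvectorUnitary : Matrix n n ℝ) *
    Matrix.diagonal (RCLike.ofReal ∘ Real.sqrt ∘ hA.1.eigenvalues) *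
    star (hA.1.eigenvectorUnitary : Matrix n n ℝ)
open scoped MatrixOrder in
lemma sqrt_eq_cfc {A : Matrix n n ℝ} (hA : A.PosSemidef) : hA.sqrt = CFC.sqrt A := by
  rw [CFC.sqrt_eq_cfc, cfc_nnreal_eq_real _ A hA.nonneg, hA.1.cfc_eq]
  simp only [IsHermitian.cfc, sqrt, Real.coe_sqrt, Real.coe_toNNReal']
  rw [Unitary.conjStarAlgAut_apply]
  congr 3
  funext j
  simp [hA.eigenvalues_nonneg j]
open scoped MatrixOrder in
lemma posSemidef_sqrt {A : Matrix n n ℝ} (hA : A.PosSemidef) : hA.sqrt.PosSemidef := by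
  rw [sqrt_eq_cfc]; exact (CFC.sqrt_nonneg A).posSemidef
open scoped MatrixOrder in
lemma sqrt_mul_self {A : Matrix n n ℝ} (hA : A.PosSemidef) : hA.sqrt * hA.sqrt = A := by
  rw [sqrt_eq_cfc]; exact CFC.sqrt_mul_sqrt_self A hA.nonneg
open scoped MatrixOrder in
lemma eq_sqrt_of_sq_eq {A B : Matrix n n ℝ} (hB : B.PosSemidef) (hA : A.PosSemidef)
    (h : B ^ 2 = A) : B = hA.sqrt := by
  rw [sqrt_eq_cfc, ← h, CFC.sqrt_sq B hB.nonneg]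
open scoped MatrixOrder in
lemma eq_of_sq_eq_sq {A B : Matrix n n ℝ} (hA : A.PosSemidef) (hB : B.PosSemidef)
    (h : A ^ 2 = B ^ 2) : A = B := by
  rw [← CFC.sqrt_sq A hA.nonneg, h, CFC.sqrt_sq B hB.nonneg]
end Matrix.PosSemidef

section SpAux

open Finset in
private lemma vec_sum_apply {d : ℕ} {ι : Type*} (s : Finset ι) (c : ι → ℝ) (v : ι → Vec d)
    (k : Fin d) : (∑ i ∈ s, c i • v i) k = ∑ i ∈ s, c i * v i k := by
  induction s using Finset.cons_induction with
  | empty => rfl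
  | cons a s ha ih => rw [Finset.sum_cons, Finset.sum_cons, ← ih]; rfl

namespace SpAux

/-! ### Matrix algebra: Moore–Penrose, square roots, commutation -/

variable {n : Type*} [Fintype n] [DecidableEq n]

omit [DecidableEq n] in
lemma mp_unique {A B C : Matrix n n ℝ}
    (hB : IsMoorePenrose A B) (hC : IsMoorePenrose A C) : B = C := by
  obtain ⟨b1, b2, b3, b4⟩ := hB
  obtain ⟨c1, c2, c3, c4⟩ := hC
  have hABC : A * B = A * C := by
    have h2 : A * C * (A * B) = A * B := by
      rw [← mul_assoc, c1]
    calc A * B = (A * B)ᵀ := b3.symm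
      _ = (A * C * (A * B))ᵀ := by rw [h2]
      _ = (A * B)ᵀ * (A * C)ᵀ := by rw [transpose_mul]
      _ = (A * B) * (A * C) := by rw [b3, c3]
      _ = (A * B * A) * C := by rw [← mul_assoc]
      _ = A * C := by rw [b1]
  have hBCA : B * A = C * A := by
    have h2 : B * A * (C * A) = B * A := by
      rw [mul_assoc, ← mul_assoc A C A, c1]
    calc B * A = (B * A)ᵀ := b4.symm
      _ = (B * A * (C * A))ᵀ := by rw [h2]
      _ = (C * A)ᵀ * (B * A)ᵀ := by rw [transpose_mul]
      _ = (C * A) * (B * A) := by rw [b4, c4]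
      _ = C * (A * B * A) := by rw [mul_assoc, ← mul_assoc A B A]
      _ = C * A := by rw [b1]
  calc B = B * A * B := b2.symm
    _ = B * (A * C) := by rw [mul_assoc, hABC]
    _ = (B * A) * C := by rw [mul_assoc]
    _ = (C * A) * C := by rw [hBCA]
    _ = C := by rw [c2]

omit [DecidableEq n] in
lemma mp_transpose {A B : Matrix n n ℝ} (hA : Aᵀ = A) (h : IsMoorePenrose A B) :
    IsMoorePenrose A Bᵀ := by
  obtain ⟨b1, b2, b3, b4⟩ := h
  refine ⟨?_, ?_, ?_, ?_⟩
  · simpa [transpose_mul, hA, mul_assoc] using congrArg Matrix.transpose b1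
  · simpa [transpose_mul, hA, mul_assoc] using congrArg Matrix.transpose b2
  · rw [transpose_mul, transpose_transpose, hA, ← b4, transpose_mul, hA]
  · rw [transpose_mul, transpose_transpose, hA, ← b3, transpose_mul, hA]

omit [DecidableEq n] in
lemma mp_symm {A B : Matrix n n ℝ} (hA : Aᵀ = A) (h : IsMoorePenrose A B) : Bᵀ = B :=
  mp_unique (mp_transpose hA h) h

omit [DecidableEq n] in
lemma mp_comm {A B : Matrix n n ℝ} (hA : Aᵀ = A) (h : IsMoorePenrose A B) :
    A * B = B * A := by
  have hB := mp_symm hA h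
  calc A * B = (A * B)ᵀ := h.2.2.1.symm
    _ = Bᵀ * Aᵀ := transpose_mul _ _
    _ = B * A := by rw [hA, hB]

omit [DecidableEq n] in
lemma psd_transpose_eq {A : Matrix n n ℝ} (hA : A.PosSemidef) : Aᵀ = A := by
  have h := hA.1
  rwa [Matrix.IsHermitian, conjTranspose_eq_transpose_of_trivial] at h

lemma sqrt_comm {A B : Matrix n n ℝ} (hA : A.PosSemidef) (hAB : A * B = B * A) :
    hA.sqrt * B = B * hA.sqrt := by
  set U : Matrix n n ℝ := (hA.1.eigenvectorUnitary : Matrix n n ℝ) with hU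
  have hU1 : star U * U = 1 := Unitary.coe_star_mul_self _
  have hU2 : U * star U = 1 := Unitary.coe_mul_star_self _
  set lam := hA.1.eigenvalues with hlamdef
  set D : Matrix n n ℝ := Matrix.diagonal (RCLike.ofReal ∘ lam) with hD
  set E : Matrix n n ℝ := Matrix.diagonal (RCLike.ofReal ∘ Real.sqrt ∘ lam) with hE
  have hspec : A = U * D * star U := hA.1.spectral_theorem
  set B' := star U * B * U with hB'
  have hDB' : D * B' = B' * D := by
    have h1 : star U * (A * B) * U = D * B' := by
      rw [hspec]
      calc star U * (U * D * star U * B) * U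
          = (star U * U) * D * (star U * B * U) := by
            simp only [mul_assoc]
        _ = D * B' := by rw [hU1, one_mul, hB']
    have h2 : star U * (B * A) * U = B' * D := by
      rw [hspec]
      calc star U * (B * (U * D * star U)) * U
          = (star U * B * U) * D * (star U * U) := by simp only [mul_assoc]
        _ = B' * D := by rw [hU1, mul_one, hB']
    rw [← h1, ← h2, hAB]
  have hEB' : E * B' = B' * E := by
    ext j k
    have h := congrFun (congrFun hDB' j) k
    simp only [hD, hE, diagonal_mul, mul_diagonal, Function.comp_apply] at h ⊢
    simp only [RCLike.ofReal_real_eq_id, id_eq] at h ⊢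
    rcases eq_or_ne (B' j k) 0 with h0 | h0
    · simp [h0]
    · have hlk : lam j = lam k := by
        rw [mul_comm (lam j)] at h
        exact mul_left_cancel₀ h0 h
      rw [hlk, mul_comm]
  have hBeq : B = U * B' * star U := by
    rw [hB']
    calc B = 1 * B * 1 := by rw [one_mul, mul_one]
      _ = (U * star U) * B * (U * star U) := by rw [hU2]
      _ = U * (star U * B * U) * star U := by simp only [mul_assoc]
  have hsqrt : hA.sqrt = U * E * star U := rfl
  rw [hsqrt, hBeq]
  calc U * E * star U * (U * B' * star U)
      = U * (E * ((star U * U) * B')) * star U := by simp only [mul_assoc]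
    _ = U * (E * B') * star U := by rw [hU1, one_mul]
    _ = U * (B' * E) * star U := by rw [hEB']
    _ = U * (B' * ((star U * U) * E)) * star U := by rw [hU1, one_mul]
    _ = U * B' * star U * (U * E * star U) := by simp only [mul_assoc]

lemma comm_of_psd_root {A H B : Matrix n n ℝ} (hH : H.PosSemidef) (hHA : H * H = A)
    (hAB : A * B = B * A) : H * B = B * H := by
  have hA : A.PosSemidef := by
    have h := hH.pow 2
    rwa [pow_two, hHA] at h
  have hHs : H = hA.sqrt := hH.eq_sqrt_of_sq_eq hA (by rw [pow_two, hHA])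
  rw [hHs]
  exact sqrt_comm hA hAB

/-- The crucial matrix identity: `L^{1/2} * L^{†1/2} = L * L†`. -/
lemma half_dag_half {L Lih Ldag Lidh : Matrix n n ℝ}
    (hL : L.PosSemidef) (hLih : Lih.PosSemidef) (hLih2 : Lih * Lih = L)
    (hmp : IsMoorePenrose L Ldag)
    (hLidh : Lidh.PosSemidef) (hLidh2 : Lidh * Lidh = Ldag) :
    Lih * Lidh = L * Ldag := by
  have hLt : Lᵀ = L := psd_transpose_eq hL
  have hcomm : L * Ldag = Ldag * L := mp_comm hLt hmp
  have c1 : Lidh * L = L * Lidh :=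
    comm_of_psd_root hLidh hLidh2 hcomm.symm
  have c2 : Lih * Lidh = Lidh * Lih :=
    comm_of_psd_root hLih hLih2 c1.symm
  have hPt : (L * Ldag)ᵀ = L * Ldag := hmp.2.2.1
  have hPP : (L * Ldag) * (L * Ldag) = L * Ldag := by
    calc L * Ldag * (L * Ldag) = L * Ldag * L * Ldag := by rw [← mul_assoc]
      _ = L * Ldag := by rw [hmp.1]
  have hPpsd : (L * Ldag).PosSemidef := by
    have h : L * Ldag = (L * Ldag)ᴴ * (L * Ldag) := by
      rw [conjTranspose_eq_transpose_of_trivial, hPt, hPP]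
    rw [h]
    exact posSemidef_conjTranspose_mul_self _
  have hT := hLidh.posSemidef_sqrt
  have hTT : hLidh.sqrt * hLidh.sqrt = Lidh := hLidh.sqrt_mul_self
  have c3 : hLidh.sqrt * Lih = Lih * hLidh.sqrt :=
    comm_of_psd_root hT hTT c2.symm
  have hRform : Lih * Lidh = hLidh.sqrt * Lih * hLidh.sqrtᴴ := by
    rw [conjTranspose_eq_transpose_of_trivial, psd_transpose_eq hT]
    calc Lih * Lidh = Lih * (hLidh.sqrt * hLidh.sqrt) := by rw [hTT]
      _ = (Lih * hLidh.sqrt) * hLidh.sqrt := by rw [mul_assoc]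
      _ = hLidh.sqrt * Lih * hLidh.sqrt := by rw [← c3]
  have hRpsd : (Lih * Lidh).PosSemidef := by
    rw [hRform]
    exact hLih.mul_mul_conjTranspose_same _
  have hRR : (Lih * Lidh) * (Lih * Lidh) = L * Ldag := by
    calc (Lih * Lidh) * (Lih * Lidh) = Lih * (Lidh * Lih) * Lidh := by
          simp only [mul_assoc]
      _ = Lih * (Lih * Lidh) * Lidh := by rw [← c2]
      _ = (Lih * Lih) * (Lidh * Lidh) := by simp only [mul_assoc]
      _ = L * Ldag := by rw [hLih2, hLidh2]
  have hsq : (Lih * Lidh) ^ 2 = (L * Ldag) ^ 2 := by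
    rw [pow_two, pow_two, hRR, hPP]
  exact hRpsd.eq_of_sq_eq_sq hPpsd hsq

/-! ### `mact` and `quad` toolkit -/

variable {d : ℕ}

lemma mact_mul (A B : Matrix (Fin d) (Fin d) ℝ) (x : Vec d) :
    mact (A * B) x = mact A (mact B x) := by
  ext j
  simp [mact, Matrix.toEuclideanLin_apply, Matrix.mulVec_mulVec]

lemma mact_sub (A B : Matrix (Fin d) (Fin d) ℝ) (x : Vec d) :
    mact (A - B) x = mact A x - mact B x := by
  unfold mact; rw [map_sub]; rfl

lemma mact_vsub (M : Matrix (Fin d) (Fin d) ℝ) (x y : Vec d) :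
    mact M (x - y) = mact M x - mact M y := by
  unfold mact; rw [map_sub]

lemma mact_vsmul (M : Matrix (Fin d) (Fin d) ℝ) (c : ℝ) (x : Vec d) :
    mact M (c • x) = c • mact M x := by
  unfold mact; rw [_root_.map_smul]

lemma mact_sum {ι : Type*} (s : Finset ι) (c : ι → ℝ) (A : ι → Matrix (Fin d) (Fin d) ℝ)
    (x : Vec d) : mact (∑ i ∈ s, c i • A i) x = ∑ i ∈ s, c i • mact (A i) x := by
  unfold mact
  rw [map_sum, LinearMap.sum_apply]
  exact Finset.sum_congr rfl fun i _ => by rw [_root_.map_smul]; rfl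

lemma inner_mact_left (M : Matrix (Fin d) (Fin d) ℝ) (x y : Vec d) :
    ⟪mact M x, y⟫ = ⟪x, mact Mᵀ y⟫ := by
  unfold mact
  rw [← Matrix.conjTranspose_eq_transpose_of_trivial,
    Matrix.toEuclideanLin_conjTranspose_eq_adjoint, LinearMap.adjoint_inner_right]

lemma inner_eq_sum (x y : Vec d) : ⟪x, y⟫ = ∑ j, x j * y j := by
  simp [PiLp.inner_apply, RCLike.inner_apply, mul_comm]

lemma quad_sum {ι : Type*} (s : Finset ι) (c : ι → ℝ) (A : ι → Matrix (Fin d) (Fin d) ℝ)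
    (x : Vec d) : quad (∑ i ∈ s, c i • A i) x = ∑ i ∈ s, c i * quad (A i) x := by
  unfold quad
  rw [mact_sum, inner_sum]
  exact Finset.sum_congr rfl fun i _ => real_inner_smul_right _ _ _

lemma quad_sub (A B : Matrix (Fin d) (Fin d) ℝ) (x : Vec d) :
    quad (A - B) x = quad A x - quad B x := by
  unfold quad
  rw [mact_sub, inner_sub_right]

/-! ### Gradients -/

/-- The gradient of a bounded-below `L`-smooth function is fixed by `L L†`. -/
lemma grad_fixed {L Ldag : Matrix (Fin d) (Fin d) ℝ} (hL : L.PosSemidef)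
    (hmp : IsMoorePenrose L Ldag) {f : Vec d → ℝ} (hbd : BddBelow (Set.range f))
    (hsm : MSmooth f L) (x : Vec d) :
    mact (L * Ldag) (gradient f x) = gradient f x := by
  set G := gradient f x with hG
  set v : Vec d := G - mact (L * Ldag) G with hv
  have hLt : Lᵀ = L := psd_transpose_eq hL
  have hcomm : L * Ldag = Ldag * L := mp_comm hLt hmp
  have hPt : (L * Ldag)ᵀ = L * Ldag := hmp.2.2.1
  have hLP : L * (L * Ldag) = L := by
    rw [hcomm, ← mul_assoc, hmp.1]
  have hPP : (L * Ldag) * (L * Ldag) = L * Ldag := by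
    calc L * Ldag * (L * Ldag) = L * Ldag * L * Ldag := by rw [← mul_assoc]
      _ = L * Ldag := by rw [hmp.1]
  have hLv : mact L v = 0 := by
    rw [hv, mact_vsub, ← mact_mul, hLP, sub_self]
  have hPv : mact (L * Ldag) v = 0 := by
    rw [hv, mact_vsub, ← mact_mul, hPP, sub_self]
  have hGv : ⟪G, v⟫ = ‖v‖ ^ 2 := by
    have hsplit : G = v + mact (L * Ldag) G := by rw [hv]; abel
    have h2 : ⟪mact (L * Ldag) G, v⟫ = 0 := by
      rw [inner_mact_left, hPt, hPv, inner_zero_right]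
    calc ⟪G, v⟫ = ⟪v + mact (L * Ldag) G, v⟫ := by rw [← hsplit]
      _ = ⟪v, v⟫ + ⟪mact (L * Ldag) G, v⟫ := inner_add_left _ _ _
      _ = ‖v‖ ^ 2 := by rw [h2, add_zero, real_inner_self_eq_norm_sq]
  obtain ⟨c, hc⟩ := hbd
  have key : ∀ t : ℝ, f (x - t • v) ≤ f x - t * ‖v‖ ^ 2 := by
    intro t
    have h := hsm (x - t • v) x
    have hxy : x - t • v - x = -(t • v) := by abel
    have hq : quad L (x - t • v - x) = 0 := by
      unfold quad
      rw [hxy]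
      have hz : mact L (-(t • v)) = 0 := by
        rw [show -(t • v) = (-t) • v by rw [neg_smul], mact_vsmul, hLv, smul_zero]
      rw [hz, inner_zero_right]
    have hip : ⟪gradient f x, x - t • v - x⟫ = -(t * ‖v‖ ^ 2) := by
      rw [hxy, show -(t • v) = (-t) • v by rw [neg_smul], real_inner_smul_right, ← hG, hGv]
      ring
    rw [hq, hip] at h
    linarith
  have hv0 : ‖v‖ ^ 2 = 0 := by
    by_contra h0
    have hpos : 0 < ‖v‖ ^ 2 := lt_of_le_of_ne (by positivity) (Ne.symm h0)
    have ht := key ((f x - c + 1) / ‖v‖ ^ 2)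
    have hcx : c ≤ f (x - ((f x - c + 1) / ‖v‖ ^ 2) • v) := hc ⟨_, rfl⟩
    rw [div_mul_cancel₀ _ (ne_of_gt hpos)] at ht
    linarith
  have hveq : v = 0 := by
    rwa [pow_eq_zero_iff (by norm_num : (2:ℕ) ≠ 0), norm_eq_zero] at hv0
  exact (sub_eq_zero.mp (hv ▸ hveq)).symm

lemma gradient_combo {n : ℕ} (fi : Fin n → Vec d → ℝ)
    (hdiff : ∀ i, Differentiable ℝ (fi i)) (x : Vec d) :
    gradient (fun y => (1 / (n : ℝ)) * ∑ i, fi i y) x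
      = (1 / (n : ℝ)) • ∑ i, gradient (fi i) x := by
  have hgi : ∀ i, HasGradientAt (fi i) (gradient (fi i) x) x := fun i =>
    ((hdiff i).differentiableAt).hasGradientAt
  have hfd : ∀ i, HasFDerivAt (fi i)
      (InnerProductSpace.toDual ℝ (Vec d) (gradient (fi i) x)) x := fun i =>
    (hasGradientAt_iff_hasFDerivAt.mp (hgi i))
  have hsum : HasFDerivAt (fun y => ∑ i, fi i y)
      (∑ i, InnerProductSpace.toDual ℝ (Vec d) (gradient (fi i) x)) x :=
    HasFDerivAt.fun_sum fun i _ => hfd i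
  have hmul : HasFDerivAt (fun y => (1 / (n : ℝ)) * ∑ i, fi i y)
      ((1 / (n : ℝ)) • ∑ i, InnerProductSpace.toDual ℝ (Vec d) (gradient (fi i) x)) x :=
    hsum.const_mul _
  have heq : ((1 / (n : ℝ)) • ∑ i, InnerProductSpace.toDual ℝ (Vec d) (gradient (fi i) x))
      = InnerProductSpace.toDual ℝ (Vec d) ((1 / (n : ℝ)) • ∑ i, gradient (fi i) x) := by
    rw [_root_.map_smul, map_sum]
  rw [heq] at hmul
  exact (hasGradientAt_iff_hasFDerivAt.mpr hmul).gradient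

/-! ### Sampling expectations -/

lemma marg_pos (μ : Sampling d) (j : Fin d) : 0 < μ.marg j := μ.margPos j

lemma sketch_mean (μ : Sampling d) :
    ∑ S : Finset (Fin d), μ.prob S • μ.sketch S = 1 := by
  ext j l
  rw [Matrix.sum_apply]
  simp only [Matrix.smul_apply, Sampling.sketch, smul_eq_mul]
  rcases eq_or_ne j l with rfl | hne
  · rw [Matrix.one_apply_eq]
    have h : ∀ S : Finset (Fin d), μ.prob S * Matrix.diagonal
        (fun k => if k ∈ S then (μ.marg k)⁻¹ else 0) j j
        = (if j ∈ S then μ.prob S else 0) * (μ.marg j)⁻¹ := by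
      intro S
      rw [Matrix.diagonal_apply_eq]
      split_ifs <;> ring
    rw [Finset.sum_congr rfl fun S _ => h S, ← Finset.sum_mul]
    rw [show (∑ S : Finset (Fin d), if j ∈ S then μ.prob S else 0) = μ.marg j from rfl]
    exact mul_inv_cancel₀ (ne_of_gt (marg_pos μ j))
  · rw [Matrix.one_apply_ne hne]
    refine Finset.sum_eq_zero fun S _ => ?_
    rw [Matrix.diagonal_apply_ne _ hne, mul_zero]

lemma sketch_conj_mean (μ : Sampling d) (M : Matrix (Fin d) (Fin d) ℝ) :
    ∑ S : Finset (Fin d), μ.prob S • (μ.sketch S * M * μ.sketch S)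
      = Matrix.hadamard μ.Pbar M := by
  ext j l
  rw [Matrix.sum_apply]
  have hentry : ∀ S : Finset (Fin d),
      (μ.prob S • (μ.sketch S * M * μ.sketch S)) j l
        = (if j ∈ S ∧ l ∈ S then μ.prob S else 0) * ((μ.marg j)⁻¹ * (μ.marg l)⁻¹) * M j l := by
    intro S
    rw [Matrix.smul_apply, Sampling.sketch, Matrix.mul_diagonal, Matrix.diagonal_mul,
      smul_eq_mul]
    split_ifs with h1 h2 h3 <;> simp_all <;> ring
  rw [Finset.sum_congr rfl fun S _ => hentry S, ← Finset.sum_mul, ← Finset.sum_mul]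
  rw [Matrix.hadamard_apply, Sampling.Pbar]
  rw [show (∑ S : Finset (Fin d), if j ∈ S ∧ l ∈ S then μ.prob S else 0)
    = μ.probMatrix j l from rfl]
  simp only [Matrix.of_apply]
  rw [div_eq_mul_inv, mul_inv]

lemma ptilde_hadamard (μ : Sampling d) (M : Matrix (Fin d) (Fin d) ℝ) :
    Matrix.hadamard μ.Ptilde M = Matrix.hadamard μ.Pbar M - M := by
  ext j l
  simp [Matrix.hadamard_apply, Sampling.Ptilde, Matrix.sub_apply, sub_mul]

lemma exp_sandwich (μ : Sampling d) (A B : Matrix (Fin d) (Fin d) ℝ) :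
    ∑ S : Finset (Fin d), μ.prob S • (A * μ.sketch S * B) = A * B := by
  have h : ∑ S : Finset (Fin d), μ.prob S • (A * μ.sketch S * B)
      = A * (∑ S : Finset (Fin d), μ.prob S • μ.sketch S) * B := by
    rw [Finset.mul_sum, Finset.sum_mul]
    exact Finset.sum_congr rfl fun S _ => by
      rw [Matrix.mul_smul, Matrix.smul_mul]
  rw [h, sketch_mean, mul_one]

/-! ### Product measure marginalization -/

variable {N : ℕ} {Ω : Type*} [Fintype Ω] [DecidableEq Ω]

omit [DecidableEq Ω] in
lemma sum_prod_pi (F : Fin N → Ω → ℝ) :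
    ∑ ω : Fin N → Ω, ∏ j, F j (ω j) = ∏ j, ∑ T, F j T := by
  rw [Finset.prod_univ_sum]
  rw [← Fintype.piFinset_univ]

omit [DecidableEq Ω] in
lemma exp_one (μ : Fin N → Ω → ℝ) (htot : ∀ j, ∑ T, μ j T = 1) :
    ∑ ω : Fin N → Ω, ∏ j, μ j (ω j) = 1 := by
  rw [sum_prod_pi]
  simp [htot]

lemma exp_marg1 (μ : Fin N → Ω → ℝ) (htot : ∀ j, ∑ T, μ j T = 1) (i : Fin N) (ψ : Ω → ℝ) :
    ∑ ω : Fin N → Ω, (∏ j, μ j (ω j)) * ψ (ω i) = ∑ T, μ i T * ψ T := by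
  have h1 : ∀ ω : Fin N → Ω, (∏ j, μ j (ω j)) * ψ (ω i)
      = ∏ j, (μ j (ω j) * if j = i then ψ (ω j) else 1) := by
    intro ω
    rw [Finset.prod_mul_distrib]
    congr 1
    rw [Finset.prod_ite_eq' Finset.univ i (fun j => ψ (ω j))]
    simp
  rw [Finset.sum_congr rfl fun ω _ => h1 ω,
    sum_prod_pi (fun j T => μ j T * if j = i then ψ T else 1)]
  rw [Finset.prod_eq_single i]
  · simp
  · intro j _ hj
    simp only [if_neg hj, mul_one, htot j]
  · simp

lemma exp_marg2 (μ : Fin N → Ω → ℝ) (htot : ∀ j, ∑ T, μ j T = 1) {i i' : Fin N}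
    (hii : i ≠ i') (ψ φ : Ω → ℝ) :
    ∑ ω : Fin N → Ω, (∏ j, μ j (ω j)) * (ψ (ω i) * φ (ω i'))
      = (∑ T, μ i T * ψ T) * (∑ T, μ i' T * φ T) := by
  have h1 : ∀ ω : Fin N → Ω, (∏ j, μ j (ω j)) * (ψ (ω i) * φ (ω i'))
      = ∏ j, (μ j (ω j) * ((if j = i then ψ (ω j) else 1) * (if j = i' then φ (ω j) else 1))) := by
    intro ω
    rw [Finset.prod_mul_distrib, Finset.prod_mul_distrib]
    congr 1
    rw [Finset.prod_ite_eq' Finset.univ i (fun j => ψ (ω j)),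
      Finset.prod_ite_eq' Finset.univ i' (fun j => φ (ω j))]
    simp
  rw [Finset.sum_congr rfl fun ω _ => h1 ω,
    sum_prod_pi (fun j T => μ j T * ((if j = i then ψ T else 1) * (if j = i' then φ T else 1)))]
  have hsplit : (Finset.univ : Finset (Fin N)) = insert i (Finset.univ.erase i) := by
    rw [Finset.insert_erase (Finset.mem_univ i)]
  rw [hsplit, Finset.prod_insert (Finset.notMem_erase i _)]
  rw [Finset.prod_eq_single_of_mem i' (Finset.mem_erase.mpr ⟨hii.symm, Finset.mem_univ i'⟩)]
  · simp [if_neg hii, if_neg hii.symm]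
  · intro j hj hji'
    have hji : j ≠ i := (Finset.mem_erase.mp hj).1
    simp only [if_neg hji, if_neg hji', mul_one, htot j]

lemma exp_marg1v (μ : Fin N → Ω → ℝ) (htot : ∀ j, ∑ T, μ j T = 1) (i : Fin N)
    (ψ : Ω → Vec d) :
    ∑ ω : Fin N → Ω, (∏ j, μ j (ω j)) • ψ (ω i) = ∑ T, μ i T • ψ T := by
  ext k
  rw [vec_sum_apply, vec_sum_apply]
  exact exp_marg1 μ htot i (fun T => ψ T k)

/-! ### Norm expansion -/

lemma expand_sq {N : ℕ} (c : ℝ) (u : Fin N → Vec d) (W : Vec d) :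
    ‖c • ∑ i, u i - W‖ ^ 2
      = c ^ 2 * ∑ i, ∑ i', ⟪u i, u i'⟫ - 2 * (c * ∑ i, ⟪u i, W⟫) + ‖W‖ ^ 2 := by
  rw [norm_sub_sq_real]
  have h1 : ‖c • ∑ i, u i‖ ^ 2 = c ^ 2 * ∑ i, ∑ i', ⟪u i, u i'⟫ := by
    rw [← real_inner_self_eq_norm_sq, real_inner_smul_left, real_inner_smul_right, sum_inner]
    simp_rw [inner_sum]
    ring
  have h2 : ⟪c • ∑ i, u i, W⟫ = c * ∑ i, ⟪u i, W⟫ := by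
    rw [real_inner_smul_left, sum_inner]
  rw [h1, h2]

/-! ### The master second-moment computation -/

lemma main2 {N : ℕ} (μ : Fin N → Finset (Fin d) → ℝ)
    (htot : ∀ j, ∑ T, μ j T = 1)
    (h : Fin N → Finset (Fin d) → Vec d) (G : Fin N → Vec d) (W : Vec d) (q : Fin N → ℝ)
    (hmean : ∀ i, ∑ T, μ i T • h i T = G i)
    (hsec : ∀ i, ∑ T, μ i T * ⟪h i T, h i T⟫ = q i) :
    ∑ ω : Fin N → Finset (Fin d),
        (∏ j, μ j (ω j)) * ‖(1 / (N : ℝ)) • ∑ i, h i (ω i) - W‖ ^ 2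
      = ‖(1 / (N : ℝ)) • ∑ i, G i - W‖ ^ 2 + (1 / (N : ℝ) ^ 2) * ∑ i, (q i - ⟪G i, G i⟫) := by
  have hGk : ∀ i k, ∑ T, μ i T * h i T k = G i k := by
    intro i k
    have e := congrArg (fun z : Vec d => z k) (hmean i)
    simpa [vec_sum_apply] using e
  have hpair : ∀ i i', ∑ ω : Fin N → Finset (Fin d),
      (∏ j, μ j (ω j)) * ⟪h i (ω i), h i' (ω i')⟫
      = if i = i' then q i else ⟪G i, G i'⟫ := by
    intro i i'
    by_cases hii : i = i'
    · subst hii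
      rw [if_pos rfl, exp_marg1 μ htot i (fun T => ⟪h i T, h i T⟫)]
      exact hsec i
    · rw [if_neg hii]
      have e : ∀ ω : Fin N → Finset (Fin d), (∏ j, μ j (ω j)) * ⟪h i (ω i), h i' (ω i')⟫
          = ∑ k, (∏ j, μ j (ω j)) * (h i (ω i) k * h i' (ω i') k) := by
        intro ω
        rw [inner_eq_sum, Finset.mul_sum]
      rw [Finset.sum_congr rfl fun ω _ => e ω, Finset.sum_comm]
      have e2 : ∀ k, ∑ ω : Fin N → Finset (Fin d),
          (∏ j, μ j (ω j)) * (h i (ω i) k * h i' (ω i') k) = G i k * G i' k := by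
        intro k
        rw [exp_marg2 μ htot hii (fun T => h i T k) (fun T => h i' T k), hGk, hGk]
      rw [Finset.sum_congr rfl fun k _ => e2 k, ← inner_eq_sum]
  have hhW : ∀ i, ∑ ω : Fin N → Finset (Fin d),
      (∏ j, μ j (ω j)) * ⟪h i (ω i), W⟫ = ⟪G i, W⟫ := by
    intro i
    rw [exp_marg1 μ htot i (fun T => ⟪h i T, W⟫)]
    calc ∑ T, μ i T * ⟪h i T, W⟫ = ∑ T, ⟪μ i T • h i T, W⟫ :=
          Finset.sum_congr rfl fun T _ => (real_inner_smul_left _ _ _).symm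
      _ = ⟪∑ T, μ i T • h i T, W⟫ := (sum_inner _ _ _).symm
      _ = ⟪G i, W⟫ := by rw [hmean i]
  have hexp : ∀ ω : Fin N → Finset (Fin d),
      (∏ j, μ j (ω j)) * ‖(1 / (N : ℝ)) • ∑ i, h i (ω i) - W‖ ^ 2
      = (1 / (N : ℝ)) ^ 2 * (∑ i, ∑ i', (∏ j, μ j (ω j)) * ⟪h i (ω i), h i' (ω i')⟫)
        - 2 * ((1 / (N : ℝ)) * ∑ i, (∏ j, μ j (ω j)) * ⟪h i (ω i), W⟫)
        + (∏ j, μ j (ω j)) * ‖W‖ ^ 2 := by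
    intro ω
    rw [expand_sq]
    have e1 : ∑ i, ∑ i', (∏ j, μ j (ω j)) * ⟪h i (ω i), h i' (ω i')⟫
        = (∏ j, μ j (ω j)) * ∑ i, ∑ i', ⟪h i (ω i), h i' (ω i')⟫ := by
      simp_rw [Finset.mul_sum]
    have e2 : ∑ i, (∏ j, μ j (ω j)) * ⟪h i (ω i), W⟫
        = (∏ j, μ j (ω j)) * ∑ i, ⟪h i (ω i), W⟫ := by
      rw [Finset.mul_sum]
    rw [e1, e2]
    ring
  rw [Finset.sum_congr rfl fun ω _ => hexp ω]
  rw [Finset.sum_add_distrib, Finset.sum_sub_distrib]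
  have p1 : ∑ ω : Fin N → Finset (Fin d),
      (1 / (N : ℝ)) ^ 2 * (∑ i, ∑ i', (∏ j, μ j (ω j)) * ⟪h i (ω i), h i' (ω i')⟫)
      = (1 / (N : ℝ)) ^ 2 * ∑ i, ∑ i', (if i = i' then q i else ⟪G i, G i'⟫) := by
    rw [← Finset.mul_sum]
    congr 1
    rw [Finset.sum_comm]
    refine Finset.sum_congr rfl fun i _ => ?_
    rw [Finset.sum_comm]
    exact Finset.sum_congr rfl fun i' _ => hpair i i'
  have p2 : ∑ ω : Fin N → Finset (Fin d),
      2 * ((1 / (N : ℝ)) * ∑ i, (∏ j, μ j (ω j)) * ⟪h i (ω i), W⟫)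
      = 2 * ((1 / (N : ℝ)) * ∑ i, ⟪G i, W⟫) := by
    rw [← Finset.mul_sum, ← Finset.mul_sum, Finset.sum_comm]
    congr 2
    exact Finset.sum_congr rfl fun i _ => hhW i
  have p3 : ∑ ω : Fin N → Finset (Fin d), (∏ j, μ j (ω j)) * ‖W‖ ^ 2 = ‖W‖ ^ 2 := by
    rw [← Finset.sum_mul, exp_one μ htot, one_mul]
  rw [p1, p2, p3]
  rw [expand_sq]
  have hsplit : ∑ i, ∑ i', (if i = i' then q i else ⟪G i, G i'⟫)
      = (∑ i, ∑ i', ⟪G i, G i'⟫) + ∑ i, (q i - ⟪G i, G i⟫) := by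
    rw [← Finset.sum_add_distrib]
    refine Finset.sum_congr rfl fun i _ => ?_
    have e : ∀ i', (if i = i' then q i else ⟪G i, G i'⟫)
        = ⟪G i, G i'⟫ + (if i = i' then q i - ⟪G i, G i⟫ else 0) := by
      intro i'
      by_cases hii : i = i'
      · subst hii; simp
      · simp [hii]
    rw [Finset.sum_congr rfl fun i' _ => e i', Finset.sum_add_distrib, Finset.sum_ite_eq]
    simp
  rw [hsplit]
  have hN : (1 / (N : ℝ)) ^ 2 = 1 / (N : ℝ) ^ 2 := by rw [div_pow, one_pow]
  rw [mul_add, hN]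
  ring

end SpAux

end SpAux


/-- unbiasedness and exact second-moment decomposition of the sparsified
gradient estimator `g(x) = (1/n) Σ_i L_i^{1/2} C_i L_i^{†1/2} ∇f_i(x)` with mutually
independent sketches. -/
theorem statement9 {d n : ℕ} (hn : 0 < n) (μs : Fin n → Sampling d)
    (fi : Fin n → Vec d → ℝ) (Li Lih Lidag Lidh : Fin n → Matrix (Fin d) (Fin d) ℝ)
    (hLi : ∀ i, (Li i).PosSemidef)
    (hfi : ∀ i, Differentiable ℝ (fi i) ∧ ConvexOn ℝ Set.univ (fi i) ∧
      BddBelow (Set.range (fi i)) ∧ MSmooth (fi i) (Li i))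
    (hLih : ∀ i, (Lih i).PosSemidef ∧ Lih i * Lih i = Li i)
    (hLidag : ∀ i, IsMoorePenrose (Li i) (Lidag i))
    (hLidh : ∀ i, (Lidh i).PosSemidef ∧ Lidh i * Lidh i = Lidag i)
    (f : Vec d → ℝ) (hf : f = fun x => (1 / (n : ℝ)) * ∑ i, fi i x)
    (g : Vec d → (Fin n → Finset (Fin d)) → Vec d)
    (hg : g = fun x ω => (1 / (n : ℝ)) •
      ∑ i, mact (Lih i * (μs i).sketch (ω i) * Lidh i) (gradient (fi i) x)) :
    (∀ x : Vec d,
      (∑ ω : Fin n → Finset (Fin d), (∏ i, (μs i).prob (ω i)) • g x ω) = gradient f x) ∧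
    ∀ x y : Vec d,
      (∑ ω : Fin n → Finset (Fin d),
          (∏ i, (μs i).prob (ω i)) * ‖g x ω - gradient f y‖ ^ 2)
        = ‖gradient f x - gradient f y‖ ^ 2
          + (1 / (n : ℝ) ^ 2) * ∑ i,
              quad (Matrix.hadamard (μs i).Ptilde (Li i)) (mact (Lidh i) (gradient (fi i) x)) := by
  simp only [hf, hg]
  have htot : ∀ j : Fin n, ∑ T : Finset (Fin d), (μs j).prob T = 1 := fun j => (μs j).total
  have hkey : ∀ i, Lih i * Lidh i = Li i * Lidag i := fun i =>
    SpAux.half_dag_half (hLi i) (hLih i).1 (hLih i).2 (hLidag i) (hLidh i).1 (hLidh i).2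
  have hfix : ∀ i (x : Vec d),
      mact (Lih i * Lidh i) (gradient (fi i) x) = gradient (fi i) x := by
    intro i x
    rw [hkey i]
    exact SpAux.grad_fixed (hLi i) (hLidag i) (hfi i).2.2.1 (hfi i).2.2.2 x
  have hunb : ∀ i (x : Vec d),
      ∑ S : Finset (Fin d),
        (μs i).prob S • mact (Lih i * (μs i).sketch S * Lidh i) (gradient (fi i) x)
      = gradient (fi i) x := by
    intro i x
    rw [← SpAux.mact_sum, SpAux.exp_sandwich, hfix]
  have hgrad : ∀ x : Vec d, gradient (fun y => (1 / (n : ℝ)) * ∑ i, fi i y) x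
      = (1 / (n : ℝ)) • ∑ i, gradient (fi i) x := fun x =>
    SpAux.gradient_combo fi (fun i => (hfi i).1) x
  have hquadL : ∀ i (x : Vec d),
      quad (Li i) (mact (Lidh i) (gradient (fi i) x))
        = ⟪gradient (fi i) x, gradient (fi i) x⟫ := by
    intro i x
    set G := gradient (fi i) x with hGdef
    show ⟪mact (Lidh i) G, mact (Li i) (mact (Lidh i) G)⟫ = ⟪G, G⟫
    have e1 : mact (Li i) (mact (Lidh i) G) = mact (Lih i) G := by
      rw [← SpAux.mact_mul,
        show Li i * Lidh i = Lih i * (Lih i * Lidh i) from by rw [← (hLih i).2, mul_assoc],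
        SpAux.mact_mul, hfix]
    rw [e1, real_inner_comm, SpAux.inner_mact_left, SpAux.psd_transpose_eq (hLih i).1,
      ← SpAux.mact_mul (Lih i) (Lidh i), hfix]
  have hsec : ∀ i (x : Vec d),
      ∑ S : Finset (Fin d), (μs i).prob S *
        ⟪mact (Lih i * (μs i).sketch S * Lidh i) (gradient (fi i) x),
          mact (Lih i * (μs i).sketch S * Lidh i) (gradient (fi i) x)⟫
      = quad (Matrix.hadamard (μs i).Pbar (Li i)) (mact (Lidh i) (gradient (fi i) x)) := by
    intro i x
    set G := gradient (fi i) x with hGdef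
    have hhq : ∀ S : Finset (Fin d),
        ⟪mact (Lih i * (μs i).sketch S * Lidh i) G,
          mact (Lih i * (μs i).sketch S * Lidh i) G⟫
        = quad ((μs i).sketch S * Li i * (μs i).sketch S) (mact (Lidh i) G) := by
      intro S
      have e1 : mact (Lih i * (μs i).sketch S * Lidh i) G
          = mact (Lih i) (mact ((μs i).sketch S) (mact (Lidh i) G)) := by
        rw [SpAux.mact_mul, SpAux.mact_mul]
      have hsT : ((μs i).sketch S)ᵀ = (μs i).sketch S := Matrix.diagonal_transpose _
      rw [e1, SpAux.inner_mact_left, SpAux.psd_transpose_eq (hLih i).1,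
        ← SpAux.mact_mul (Lih i) (Lih i), (hLih i).2,
        ← SpAux.mact_mul (Li i) ((μs i).sketch S), SpAux.inner_mact_left, hsT,
        ← SpAux.mact_mul ((μs i).sketch S) (Li i * (μs i).sketch S), ← mul_assoc]
      rfl
    rw [Finset.sum_congr rfl fun S _ => by rw [hhq S]]
    rw [← SpAux.quad_sum, SpAux.sketch_conj_mean]
  constructor
  · intro x
    have hstep : ∀ ω : Fin n → Finset (Fin d),
        (∏ j, (μs j).prob (ω j)) • ((1 / (n : ℝ)) •
          ∑ i, mact (Lih i * (μs i).sketch (ω i) * Lidh i) (gradient (fi i) x))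
        = (1 / (n : ℝ)) • ∑ i, (∏ j, (μs j).prob (ω j)) •
          mact (Lih i * (μs i).sketch (ω i) * Lidh i) (gradient (fi i) x) := by
      intro ω
      rw [smul_comm, Finset.smul_sum]
    rw [Finset.sum_congr rfl fun ω _ => hstep ω, ← Finset.smul_sum, Finset.sum_comm, hgrad x]
    congr 1
    refine Finset.sum_congr rfl fun i _ => ?_
    rw [SpAux.exp_marg1v (fun j T => (μs j).prob T) htot i
      (fun S => mact (Lih i * (μs i).sketch S * Lidh i) (gradient (fi i) x))]
    exact hunb i x
  · intro x y
    rw [hgrad x]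
    have hPt : ∀ i, quad (Matrix.hadamard (μs i).Ptilde (Li i))
        (mact (Lidh i) (gradient (fi i) x))
        = quad (Matrix.hadamard (μs i).Pbar (Li i)) (mact (Lidh i) (gradient (fi i) x))
          - ⟪gradient (fi i) x, gradient (fi i) x⟫ := by
      intro i
      rw [SpAux.ptilde_hadamard, SpAux.quad_sub, hquadL i x]
    rw [Finset.sum_congr rfl fun i _ => hPt i]
    exact SpAux.main2 (fun j T => (μs j).prob T) htot
      (fun i S => mact (Lih i * (μs i).sketch S * Lidh i) (gradient (fi i) x))
      (fun i => gradient (fi i) x)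
      (gradient (fun y => (1 / (n : ℝ)) * ∑ i, fi i y) y)
      (fun i => quad (Matrix.hadamard (μs i).Pbar (Li i)) (mact (Lidh i) (gradient (fi i) x)))
      (fun i => hunb i x) (fun i => hsec i x)

end
end

section
/- (DIANA+ shift recursion.) Let f_1, …, f_n : ℝ^d → ℝ be differentiable, convex, bounded below and L_i-smooth for symmetric positive semidefinite matrices L_i, and f = (1/n) Σ_i f_i. Let C_1, …, C_n be sketches of proper samplings S_i with marginals p_{i;j}, set ω_i = max_j (1/p_{i;j}) − 1 and ω_max = max_i ω_i, and let 0 < α ≤ 1/(1 + ω_max). Let h_1, …, h_n be vectors with h_i ∈ range(L_i), and define h_i⁺ = h_i + α L_i^{1/2} C_i L_i^{†1/2} (∇f_i(x) − h_i). Then for all x, y ∈ ℝ^d: E[ (1/n) Σ_{i=1}^n ‖h_i⁺ − ∇f_i(y)‖²_{L_i†} ] ≤ (1 − α) · (1/n) Σ_{i=1}^n ‖h_i − ∇f_i(y)‖²_{L_i†} + 2 α D_f(x, y), where D_f(x,y) = f(x) − f(y) − ⟨∇f(y), x − y⟩. -/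
open scoped BigOperators RealInnerProductSpace
open Matrix

noncomputable section

namespace S12H

variable {d : ℕ}

/-- view a Euclidean vector as a plain function -/
def ev {d : ℕ} (x : Vec d) : Fin d → ℝ := fun j => x j

lemma ev_add (x y : Vec d) : ev (x + y) = ev x + ev y := by funext j; simp [ev]

lemma ev_sub (x y : Vec d) : ev (x - y) = ev x - ev y := by funext j; simp [ev]

lemma ev_smul (c : ℝ) (x : Vec d) : ev (c • x) = c • ev x := by funext j; simp [ev]

lemma ev_mact (M : Matrix (Fin d) (Fin d) ℝ) (x : Vec d) :
    ev (mact M x) = M *ᵥ ev x := by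
  funext j
  simp [ev, mact, Matrix.toEuclideanLin_apply]
  rfl

lemma inner_eq (x y : Vec d) : ⟪x, y⟫ = ev x ⬝ᵥ ev y := by
  simp [ev, PiLp.inner_apply, dotProduct, mul_comm]

lemma quad_eq (M : Matrix (Fin d) (Fin d) ℝ) (x : Vec d) :
    quad M x = ev x ⬝ᵥ (M *ᵥ ev x) := by
  rw [quad, inner_eq, ev_mact]

lemma dotT (M : Matrix (Fin d) (Fin d) ℝ) (v w : Fin d → ℝ) :
    (M *ᵥ v) ⬝ᵥ w = v ⬝ᵥ (Mᵀ *ᵥ w) := by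
  simp [Matrix.dotProduct_mulVec, Matrix.vecMul_transpose]

lemma rct (A : Matrix (Fin d) (Fin d) ℝ) : Aᴴ = Aᵀ := by
  ext i j; simp [Matrix.conjTranspose_apply]

/-- Uniqueness of the Moore–Penrose pseudoinverse. -/
lemma mp_unique {A B C : Matrix (Fin d) (Fin d) ℝ}
    (hB : IsMoorePenrose A B) (hC : IsMoorePenrose A C) : B = C := by
  obtain ⟨hB1, hB2, hB3, hB4⟩ := hB
  obtain ⟨hC1, hC2, hC3, hC4⟩ := hC
  have hAB : A * B = A * C := by
    calc A * B = (A * B)ᵀ := hB3.symm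
      _ = Bᵀ * Aᵀ := Matrix.transpose_mul _ _
      _ = Bᵀ * (A * C * A)ᵀ := by rw [hC1]
      _ = Bᵀ * (Aᵀ * (A * C)ᵀ) := by rw [Matrix.transpose_mul]
      _ = (Bᵀ * Aᵀ) * (A * C)ᵀ := by simp only [mul_assoc]
      _ = (A * B)ᵀ * (A * C) := by rw [← Matrix.transpose_mul, hC3]
      _ = (A * B) * (A * C) := by rw [hB3]
      _ = (A * B * A) * C := by simp only [mul_assoc]
      _ = A * C := by rw [hB1]
  have hBA : B * A = C * A := by
    calc B * A = (B * A)ᵀ := hB4.symm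
      _ = Aᵀ * Bᵀ := Matrix.transpose_mul _ _
      _ = (A * C * A)ᵀ * Bᵀ := by rw [hC1]
      _ = ((C * A)ᵀ * Aᵀ) * Bᵀ := by rw [show A * C * A = A * (C * A) by
            simp only [mul_assoc], Matrix.transpose_mul]
      _ = (C * A)ᵀ * (Aᵀ * Bᵀ) := by rw [mul_assoc]
      _ = (C * A) * (B * A)ᵀ := by rw [hC4, ← Matrix.transpose_mul]
      _ = (C * A) * (B * A) := by rw [hB4]
      _ = C * (A * B * A) := by simp only [mul_assoc]
      _ = C * A := by rw [hB1]
  calc B = B * A * B := hB2.symm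
    _ = C * A * B := by rw [hBA]
    _ = C * (A * B) := by rw [mul_assoc]
    _ = C * (A * C) := by rw [hAB]
    _ = C * A * C := by rw [← mul_assoc]
    _ = C := hC2

open scoped MatrixOrder in
lemma psd_eq_sqrt {A B : Matrix (Fin d) (Fin d) ℝ} (hB : B.PosSemidef) (hA : A.PosSemidef)
    (h : B ^ 2 = A) : B = CFC.sqrt A := by
  exact (CFC.sqrt_unique (by rw [← pow_two]; exact h) (Matrix.nonneg_iff_posSemidef.2 hB)).symm

open scoped MatrixOrder in
/-- Structure of `Π = L^{†1/2} L^{1/2}` extracted via the spectral theorem. -/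
lemma struct {L Lh Ld Ldh : Matrix (Fin d) (Fin d) ℝ}
    (hL : L.PosSemidef) (hLhp : Lh.PosSemidef) (hLh2 : Lh * Lh = L)
    (hLd : IsMoorePenrose L Ld)
    (hLdhp : Ldh.PosSemidef) (hLdh2 : Ldh * Ldh = Ld) :
    (Ldh * Lh) * Ldh = Ldh ∧ (Ldh * Lh)ᵀ = Ldh * Lh ∧
      ∀ v : Fin d → ℝ, ((Ldh * Lh) *ᵥ v) ⬝ᵥ ((Ldh * Lh) *ᵥ v) ≤ v ⬝ᵥ v := by
  classical
  set U : Matrix (Fin d) (Fin d) ℝ := (hL.1.eigenvectorUnitary : Matrix (Fin d) (Fin d) ℝ)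
    with hUdef
  set e : Fin d → ℝ := hL.1.eigenvalues with hedef
  have he0 : ∀ j, 0 ≤ e j := fun j => hL.eigenvalues_nonneg j
  have hU1 : Uᵀ * U = 1 := by
    have := hL.1.eigenvectorUnitary.property.1
    rwa [Matrix.star_eq_conjTranspose, rct] at this
  have hU2 : U * Uᵀ = 1 := by
    have := hL.1.eigenvectorUnitary.property.2
    rwa [Matrix.star_eq_conjTranspose, rct] at this
  have hcancel : ∀ X : Matrix (Fin d) (Fin d) ℝ, Uᵀ * (U * X) = X := by
    intro X; rw [← mul_assoc, hU1, one_mul]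
  set Dg : (Fin d → ℝ) → Matrix (Fin d) (Fin d) ℝ :=
    fun a => U * Matrix.diagonal a * Uᵀ with hDgdef
  have hmul : ∀ a b, Dg a * Dg b = Dg (a * b) := by
    intro a b
    calc Dg a * Dg b = U * (Matrix.diagonal a * (Uᵀ * (U * (Matrix.diagonal b * Uᵀ)))) := by
          simp only [hDgdef, mul_assoc]
      _ = U * (Matrix.diagonal a * (Matrix.diagonal b * Uᵀ)) := by rw [hcancel]
      _ = U * (Matrix.diagonal a * Matrix.diagonal b) * Uᵀ := by simp only [mul_assoc]
      _ = Dg (a * b) := by rw [Matrix.diagonal_mul_diagonal]; rfl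
  have hDgc : ∀ a b : Fin d → ℝ, (∀ j, a j = b j) → Dg a = Dg b := by
    intro a b hab
    rw [show a = b from funext hab]
  have hT : ∀ a, (Dg a)ᵀ = Dg a := by
    intro a
    simp [hDgdef, Matrix.transpose_mul, Matrix.diagonal_transpose, mul_assoc]
  have hpsd : ∀ a, (∀ j, 0 ≤ a j) → (Dg a).PosSemidef := by
    intro a ha
    have := (Matrix.posSemidef_diagonal_iff.2 ha).mul_mul_conjTranspose_same U
    rwa [rct] at this
  have hspec : L = Dg e := by
    have h1 := hL.1.spectral_theorem
    simp only [Unitary.conjStarAlgAut_apply, Unitary.coe_star, Matrix.star_eq_conjTranspose, rct] at h1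
    convert h1 using 3 <;> simp [hedef]
  -- the pseudoinverse is Dg e⁻¹
  have hMP2 : IsMoorePenrose L (Dg (fun j => (e j)⁻¹)) := by
    refine ⟨?_, ?_, ?_, ?_⟩
    · rw [hspec, hmul, hmul]
      refine hDgc _ _ fun j => ?_
      by_cases hj : e j = 0 <;> simp [Pi.mul_apply, hj]
    · rw [hspec, hmul, hmul]
      refine hDgc _ _ fun j => ?_
      by_cases hj : e j = 0 <;> simp [Pi.mul_apply, hj]
    · rw [hspec, hmul, hT]
    · rw [hspec, hmul, hT]
  have hLd_eq : Ld = Dg (fun j => (e j)⁻¹) := mp_unique hLd hMP2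
  have hLh_eq : Lh = Dg (fun j => Real.sqrt (e j)) := by
    have h1 : Lh = CFC.sqrt L := psd_eq_sqrt hLhp hL (by rw [pow_two, hLh2])
    have h2 : Dg (fun j => Real.sqrt (e j)) = CFC.sqrt L := by
      refine psd_eq_sqrt (hpsd _ fun j => Real.sqrt_nonneg _) hL ?_
      rw [pow_two, hmul, hspec]
      refine hDgc _ _ fun j => ?_
      simp [Pi.mul_apply, Real.mul_self_sqrt (he0 j)]
    rw [h1, ← h2]
  have hLdh_eq : Ldh = Dg (fun j => Real.sqrt ((e j)⁻¹)) := by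
    have hdpsd : (Dg fun j => (e j)⁻¹).PosSemidef :=
      hpsd _ fun j => inv_nonneg.2 (he0 j)
    have h1 : Ldh = CFC.sqrt (Dg fun j => (e j)⁻¹) := by
      refine psd_eq_sqrt hLdhp hdpsd ?_
      rw [pow_two, hLdh2, hLd_eq]
    have h2 : Dg (fun j => Real.sqrt ((e j)⁻¹)) = CFC.sqrt (Dg fun j => (e j)⁻¹) := by
      refine psd_eq_sqrt (hpsd _ fun j => Real.sqrt_nonneg _) hdpsd ?_
      rw [pow_two, hmul]
      refine hDgc _ _ fun j => ?_
      simp only [Pi.mul_apply]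
      exact Real.mul_self_sqrt (inv_nonneg.2 (he0 j))
    rw [h1, ← h2]
  set δ : Fin d → ℝ := fun j => if e j = 0 then 0 else 1 with hδdef
  have hPi : Ldh * Lh = Dg δ := by
    rw [hLdh_eq, hLh_eq, hmul]
    refine hDgc _ _ fun j => ?_
    by_cases hj : e j = 0
    · simp [hδdef, Pi.mul_apply, hj]
    · have hs0 : Real.sqrt (e j) ≠ 0 := by
        rw [Real.sqrt_ne_zero' ]
        exact lt_of_le_of_ne (he0 j) (Ne.symm hj)
      have h3 : (Real.sqrt (e j))⁻¹ * Real.sqrt (e j) = 1 := inv_mul_cancel₀ hs0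
      simp only [Pi.mul_apply, hδdef, if_neg hj]
      rw [Real.sqrt_inv]
      exact h3
  refine ⟨?_, ?_, ?_⟩
  · rw [hPi, hLdh_eq, hmul]
    refine hDgc _ _ fun j => ?_
    by_cases hj : e j = 0 <;> simp [hδdef, Pi.mul_apply, hj]
  · rw [hPi, hT]
  · intro v
    rw [hPi]
    have hv1 : (Dg δ) *ᵥ v = U *ᵥ (Matrix.diagonal δ *ᵥ (Uᵀ *ᵥ v)) := by
      simp [hDgdef, Matrix.mulVec_mulVec, mul_assoc]
    set w : Fin d → ℝ := Uᵀ *ᵥ v with hwdef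
    have hUdot : ∀ z : Fin d → ℝ, (U *ᵥ z) ⬝ᵥ (U *ᵥ z) = z ⬝ᵥ z := by
      intro z
      rw [dotT, Matrix.mulVec_mulVec, hU1, Matrix.one_mulVec]
    have hvv : v ⬝ᵥ v = w ⬝ᵥ w := by
      rw [hwdef, dotT, Matrix.mulVec_mulVec, Matrix.transpose_transpose, hU2,
        Matrix.one_mulVec]
    rw [hv1, hUdot, hvv]
    have hdiag : ∀ j, (Matrix.diagonal δ *ᵥ w) j = δ j * w j := by
      intro j; simp [Matrix.mulVec_diagonal]
    simp only [dotProduct]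
    refine Finset.sum_le_sum fun j _ => ?_
    rw [hdiag]
    by_cases hj : e j = 0
    · simp only [hδdef, hj, if_true, zero_mul, mul_zero]
      exact mul_self_nonneg _
    · simp [hδdef, hj]

end S12H
namespace S12H

/-- First-order condition for a differentiable convex function. -/
lemma convex_tangent {d : ℕ} {f : Vec d → ℝ} (hdiff : Differentiable ℝ f)
    (hconv : ConvexOn ℝ Set.univ f) (y z : Vec d) :
    f y + ⟪gradient f y, z - y⟫ ≤ f z := by
  set c : ℝ → Vec d := fun t => t • (z - y) + y with hc
  have hline : HasDerivAt c (z - y) 0 := by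
    have := ((hasDerivAt_id (0 : ℝ)).smul_const (z - y)).add_const y
    rw [one_smul] at this; exact this
  have hc0 : c 0 = y := by simp [hc]
  have hfd : HasFDerivAt f (fderiv ℝ f y) (c 0) := by
    rw [hc0]; exact (hdiff y).hasFDerivAt
  have hg : HasDerivAt (f ∘ c) (fderiv ℝ f y (z - y)) 0 := hfd.comp_hasDerivAt 0 hline
  have hgrad : ⟪gradient f y, z - y⟫ = fderiv ℝ f y (z - y) :=
    InnerProductSpace.toDual_symm_apply
  have hconvg : ConvexOn ℝ Set.univ (f ∘ c) := by
    have h2 : f ∘ c = f ∘ (AffineMap.lineMap y z) := by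
      funext t
      simp [hc, AffineMap.lineMap_apply]
    rw [h2]
    simpa using hconv.comp_affineMap (AffineMap.lineMap y z)
  have hslope := hconvg.le_slope_of_hasDerivAt (Set.mem_univ (0 : ℝ))
    (Set.mem_univ (1 : ℝ)) zero_lt_one hg
  have h1 : (f ∘ c) 1 = f z := by simp [hc]
  have h0 : (f ∘ c) 0 = f y := by simp [hc]
  rw [slope_def_field] at hslope
  rw [h1, h0] at hslope
  rw [hgrad]
  have : (f z - f y) / (1 - 0) = f z - f y := by norm_num
  rw [this] at hslope
  linarith

/-- Cocoercivity w.r.t. the pseudoinverse seminorm. -/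
lemma coco {d : ℕ} {f : Vec d → ℝ} {L Ld : Matrix (Fin d) (Fin d) ℝ}
    (hdiff : Differentiable ℝ f) (hconv : ConvexOn ℝ Set.univ f) (hsm : MSmooth f L)
    (hLdT : Ldᵀ = Ld) (hLdL : Ld * L * Ld = Ld) (x y : Vec d) :
    quad Ld (gradient f x - gradient f y) ≤ 2 * (f x - f y - ⟪gradient f y, x - y⟫) := by
  set g : Vec d := gradient f x - gradient f y with hgdef
  set z : Vec d := x - mact Ld g with hzdef
  have hzx : z - x = -(mact Ld g) := by rw [hzdef]; abel
  have hquad : quad L (z - x) = quad Ld g := by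
    rw [hzx]
    have hev : ev (-(mact Ld g)) = -(Ld *ᵥ ev g) := by
      rw [← ev_mact]; funext j; simp [ev]
    rw [quad_eq, hev]
    rw [quad_eq]
    rw [Matrix.mulVec_neg, dotProduct_neg, neg_dotProduct, neg_neg]
    rw [Matrix.mulVec_mulVec, dotT, hLdT, Matrix.mulVec_mulVec, ← Matrix.mul_assoc, hLdL]
  have hsmooth := hsm z x
  have hcvx := convex_tangent hdiff hconv y z
  have hinner1 : ⟪gradient f x, z - x⟫ = -⟪gradient f x, mact Ld g⟫ := by
    rw [hzx, inner_neg_right]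
  have hinner2 : ⟪gradient f y, z - y⟫ = ⟪gradient f y, x - y⟫ - ⟪gradient f y, mact Ld g⟫ := by
    have : z - y = (x - y) - mact Ld g := by rw [hzdef]; abel
    rw [this, inner_sub_right]
  have hinner3 : ⟪gradient f x, mact Ld g⟫ - ⟪gradient f y, mact Ld g⟫ = quad Ld g := by
    rw [← inner_sub_left, ← hgdef, quad]
  have hq2 : quad L (z - x) = quad Ld g := hquad
  -- combine
  have := hcvx
  rw [hinner2] at this
  rw [hinner1, hq2] at hsmooth
  -- this : f y + (⟪gfy, x-y⟫ - ⟪gfy, mLg⟫) ≤ f z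
  -- hsmooth : f z ≤ f x + (-⟪gfx, mLg⟫) + (1/2) * quad Ld g
  have hkey : ⟪gradient f x, mact Ld g⟫ - ⟪gradient f y, mact Ld g⟫
      ≤ f x - f y - ⟪gradient f y, x - y⟫ + (1/2) * quad Ld g := by linarith
  rw [hinner3] at hkey
  linarith

lemma inner_gradient {d : ℕ} (f : Vec d → ℝ) (y v : Vec d) :
    ⟪gradient f y, v⟫ = fderiv ℝ f y v :=
  InnerProductSpace.toDual_symm_apply

/-- Gradient of the average. -/
lemma grad_avg {d n : ℕ} (fi : Fin n → Vec d → ℝ) (hfi : ∀ i, Differentiable ℝ (fi i))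
    (y v : Vec d) :
    ⟪gradient (fun z => (1 / (n : ℝ)) * ∑ i, fi i z) y, v⟫
      = (1 / (n : ℝ)) * ∑ i, ⟪gradient (fi i) y, v⟫ := by
  rw [inner_gradient]
  have hdsum : DifferentiableAt ℝ (fun z => ∑ i, fi i z) y := by
    apply DifferentiableAt.fun_sum
    intro i _
    exact (hfi i).differentiableAt
  have h1 : fderiv ℝ (fun z => (1 / (n : ℝ)) * ∑ i, fi i z) y
      = (1 / (n : ℝ)) • fderiv ℝ (fun z => ∑ i, fi i z) y := fderiv_const_mul hdsum _
  have h2 : fderiv ℝ (fun z => ∑ i, fi i z) y = ∑ i, fderiv ℝ (fi i) y :=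
    fderiv_fun_sum fun i _ => (hfi i).differentiableAt
  rw [h1, h2]
  simp only [ContinuousLinearMap.smul_apply, ContinuousLinearMap.sum_apply, smul_eq_mul]
  congr 1
  exact Finset.sum_congr rfl fun i _ => (inner_gradient (fi i) y v).symm

/-- Factorization of product-measure expectations of a single-coordinate functional. -/
lemma expect_factor {n : ℕ} {Ω : Type*} [Fintype Ω] (P : Fin n → Ω → ℝ)
    (htot : ∀ k, ∑ S : Ω, P k S = 1) (i : Fin n) (q : Ω → ℝ) :
    ∑ ω : Fin n → Ω, (∏ k, P k (ω k)) * q (ω i) = ∑ S : Ω, P i S * q S := by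
  classical
  have h1 : ∀ ω : Fin n → Ω, (∏ k, P k (ω k)) * q (ω i)
      = ∏ k, (P k (ω k) * if k = i then q (ω k) else 1) := by
    intro ω
    rw [Finset.prod_mul_distrib, Finset.prod_ite_eq' Finset.univ i (fun k => q (ω k))]
    simp
  simp_rw [h1]
  have h2 := Finset.prod_univ_sum (fun _ : Fin n => (Finset.univ : Finset Ω))
    (fun k S => P k S * if k = i then q S else 1)
  rw [Fintype.piFinset_univ] at h2
  rw [← h2]
  have h3 : ∀ k, (∑ S : Ω, (P k S * if k = i then q S else 1))
      = if k = i then (∑ S : Ω, P i S * q S) else 1 := by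
    intro k
    by_cases hk : k = i
    · subst hk; simp
    · simp [hk, htot k]
  simp_rw [h3]
  rw [Finset.prod_ite_eq' Finset.univ i (fun _ => ∑ S : Ω, P i S * q S)]
  simp

end S12H
namespace S12H

/-- One-client recursion bound: expectation over the sampling. -/
lemma per_i {d : ℕ} (μ : Sampling d) {L Lh Ld Ldh : Matrix (Fin d) (Fin d) ℝ}
    (hL : L.PosSemidef) (hLhp : Lh.PosSemidef) (hLh2 : Lh * Lh = L)
    (hLd : IsMoorePenrose L Ld) (hLdhp : Ldh.PosSemidef) (hLdh2 : Ldh * Ldh = Ld)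
    {α : ℝ} (hα0 : 0 < α) (hαp : ∀ j, (μ.marg j)⁻¹ ≤ α⁻¹)
    (A Mv : Vec d) :
    ∑ S : Finset (Fin d), μ.prob S *
        quad Ld (A + α • mact (Lh * μ.sketch S * Ldh) Mv)
      ≤ (1 - α) * quad Ld A + α * quad Ld (A + Mv) := by
  classical
  obtain ⟨hPL, hPT, hPbound⟩ := struct hL hLhp hLh2 hLd hLdhp hLdh2
  have hLdhT : Ldhᵀ = Ldh := by rw [← rct]; exact hLdhp.1
  set a : Fin d → ℝ := ev A with hadef
  set m : Fin d → ℝ := ev Mv with hmdef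
  set b : Fin d → ℝ := Ldh *ᵥ a with hbdef
  set u : Fin d → ℝ := Ldh *ᵥ m with hudef
  set c : Finset (Fin d) → Fin d → ℝ := fun S j => if j ∈ S then (μ.marg j)⁻¹ else 0
    with hcdef
  have hmargpos : ∀ j, 0 < μ.marg j := fun j => μ.margPos j
  have hquadv : ∀ v : Vec d, quad Ld v = (Ldh *ᵥ ev v) ⬝ᵥ (Ldh *ᵥ ev v) := by
    intro v
    rw [quad_eq, ← hLdh2, ← Matrix.mulVec_mulVec, dotT, hLdhT]
  have hsketch : ∀ S, μ.sketch S = Matrix.diagonal (c S) := fun S => rfl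
  have hev_term : ∀ S, Ldh *ᵥ ev (A + α • mact (Lh * μ.sketch S * Ldh) Mv)
      = b + α • ((Ldh * Lh) *ᵥ fun j => c S j * u j) := by
    intro S
    rw [ev_add, ev_smul, ev_mact, Matrix.mulVec_add, Matrix.mulVec_smul]
    have hmid : Ldh *ᵥ ((Lh * μ.sketch S * Ldh) *ᵥ ev Mv)
        = (Ldh * Lh) *ᵥ fun j => c S j * u j := by
      have hdiagvec : (fun j => c S j * u j) = Matrix.diagonal (c S) *ᵥ u := by
        funext j; simp [Matrix.mulVec_diagonal]
      rw [hdiagvec, hsketch, hudef, hmdef]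
      simp only [Matrix.mulVec_mulVec]
      congr 1
      simp only [mul_assoc]
    rw [hmid, hbdef, hadef]
  have hbt : ∀ x : Fin d → ℝ, b ⬝ᵥ ((Ldh * Lh) *ᵥ x) = b ⬝ᵥ x := by
    intro x
    rw [dotProduct_comm, dotT, hPT]
    have : (Ldh * Lh) *ᵥ b = b := by
      rw [hbdef, Matrix.mulVec_mulVec, hPL]
    rw [this, dotProduct_comm]
  -- sum of marginals
  have hsum_c : ∀ j, ∑ S : Finset (Fin d), μ.prob S * c S j = 1 := by
    intro j
    have h1 : ∀ S : Finset (Fin d), μ.prob S * c S j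
        = (μ.marg j)⁻¹ * (if j ∈ S then μ.prob S else 0) := by
      intro S; by_cases hS : j ∈ S <;> simp [hcdef, hS] <;> ring
    simp_rw [h1]
    rw [← Finset.mul_sum]
    have hm : (∑ S : Finset (Fin d), if j ∈ S then μ.prob S else 0) = μ.marg j := rfl
    rw [hm, inv_mul_cancel₀ (hmargpos j).ne']
  have hsum_c2 : ∀ j, ∑ S : Finset (Fin d), μ.prob S * (c S j * c S j) = (μ.marg j)⁻¹ := by
    intro j
    have h1 : ∀ S : Finset (Fin d), μ.prob S * (c S j * c S j)
        = (μ.marg j)⁻¹ * ((μ.marg j)⁻¹ * (if j ∈ S then μ.prob S else 0)) := by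
      intro S; by_cases hS : j ∈ S <;> simp [hcdef, hS] <;> ring
    simp_rw [h1]
    rw [← Finset.mul_sum, ← Finset.mul_sum]
    have hm : (∑ S : Finset (Fin d), if j ∈ S then μ.prob S else 0) = μ.marg j := rfl
    rw [hm, inv_mul_cancel₀ (hmargpos j).ne', mul_one]
  -- linear term
  have hsum2 : ∑ S : Finset (Fin d), μ.prob S * (b ⬝ᵥ fun j => c S j * u j) = b ⬝ᵥ u := by
    simp only [dotProduct]
    simp_rw [Finset.mul_sum]
    rw [Finset.sum_comm]
    refine Finset.sum_congr rfl fun j _ => ?_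
    have h1 : ∀ S : Finset (Fin d), μ.prob S * (b j * (c S j * u j))
        = (b j * u j) * (μ.prob S * c S j) := by intro S; ring
    simp_rw [h1]
    rw [← Finset.mul_sum, hsum_c, mul_one]
  -- quadratic term
  have hsum3 : ∑ S : Finset (Fin d), μ.prob S *
        (((Ldh * Lh) *ᵥ fun j => c S j * u j) ⬝ᵥ ((Ldh * Lh) *ᵥ fun j => c S j * u j))
      ≤ α⁻¹ * (u ⬝ᵥ u) := by
    have step1 : ∑ S : Finset (Fin d), μ.prob S *
          (((Ldh * Lh) *ᵥ fun j => c S j * u j) ⬝ᵥ ((Ldh * Lh) *ᵥ fun j => c S j * u j))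
        ≤ ∑ S : Finset (Fin d), μ.prob S *
          ((fun j => c S j * u j) ⬝ᵥ fun j => c S j * u j) :=
      Finset.sum_le_sum fun S _ =>
        mul_le_mul_of_nonneg_left (hPbound _) (μ.nonneg S)
    refine le_trans step1 ?_
    have step2 : ∑ S : Finset (Fin d), μ.prob S *
          ((fun j => c S j * u j) ⬝ᵥ fun j => c S j * u j)
        = ∑ j, (μ.marg j)⁻¹ * (u j * u j) := by
      simp only [dotProduct]
      simp_rw [Finset.mul_sum]
      rw [Finset.sum_comm]
      refine Finset.sum_congr rfl fun j _ => ?_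
      have h1 : ∀ S : Finset (Fin d), μ.prob S * (c S j * u j * (c S j * u j))
          = (u j * u j) * (μ.prob S * (c S j * c S j)) := by intro S; ring
      simp_rw [h1]
      rw [← Finset.mul_sum, hsum_c2]
      ring
    rw [step2]
    have step3 : ∑ j, (μ.marg j)⁻¹ * (u j * u j) ≤ ∑ j, α⁻¹ * (u j * u j) :=
      Finset.sum_le_sum fun j _ =>
        mul_le_mul_of_nonneg_right (hαp j) (mul_self_nonneg _)
    refine le_trans step3 ?_
    rw [← Finset.mul_sum]
    exact le_of_eq rfl
  -- per-S expansion
  have hqS : ∀ S, quad Ld (A + α • mact (Lh * μ.sketch S * Ldh) Mv)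
      = b ⬝ᵥ b + 2 * α * (b ⬝ᵥ fun j => c S j * u j)
        + α ^ 2 * (((Ldh * Lh) *ᵥ fun j => c S j * u j) ⬝ᵥ
            ((Ldh * Lh) *ᵥ fun j => c S j * u j)) := by
    intro S
    rw [hquadv, hev_term]
    have hexp : ∀ t : Fin d → ℝ, (b + α • t) ⬝ᵥ (b + α • t)
        = b ⬝ᵥ b + 2 * α * (b ⬝ᵥ t) + α ^ 2 * (t ⬝ᵥ t) := by
      intro t
      simp only [add_dotProduct, dotProduct_add, smul_dotProduct,
        dotProduct_smul, smul_eq_mul]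
      rw [dotProduct_comm t b]
      ring
    rw [hexp, hbt]
  calc ∑ S : Finset (Fin d), μ.prob S * quad Ld (A + α • mact (Lh * μ.sketch S * Ldh) Mv)
      = ∑ S : Finset (Fin d), (μ.prob S * (b ⬝ᵥ b)
          + 2 * α * (μ.prob S * (b ⬝ᵥ fun j => c S j * u j))
          + α ^ 2 * (μ.prob S * (((Ldh * Lh) *ᵥ fun j => c S j * u j) ⬝ᵥ
              ((Ldh * Lh) *ᵥ fun j => c S j * u j)))) := by
        refine Finset.sum_congr rfl fun S _ => ?_
        rw [hqS S]; ring
    _ = (∑ S : Finset (Fin d), μ.prob S) * (b ⬝ᵥ b)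
          + 2 * α * (∑ S : Finset (Fin d), μ.prob S * (b ⬝ᵥ fun j => c S j * u j))
          + α ^ 2 * (∑ S : Finset (Fin d), μ.prob S *
              (((Ldh * Lh) *ᵥ fun j => c S j * u j) ⬝ᵥ
                ((Ldh * Lh) *ᵥ fun j => c S j * u j))) := by
        rw [Finset.sum_add_distrib, Finset.sum_add_distrib, ← Finset.mul_sum,
          ← Finset.mul_sum, ← Finset.sum_mul]
    _ ≤ b ⬝ᵥ b + 2 * α * (b ⬝ᵥ u) + α ^ 2 * (α⁻¹ * (u ⬝ᵥ u)) := by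
        rw [μ.total, one_mul, hsum2]
        exact (add_le_add_iff_left _).2 (mul_le_mul_of_nonneg_left hsum3 (sq_nonneg α))
    _ = (1 - α) * quad Ld A + α * quad Ld (A + Mv) := by
        rw [hquadv A, hquadv (A + Mv), ev_add, ← hadef, ← hmdef, Matrix.mulVec_add,
          ← hbdef, ← hudef]
        have hbu : (b + u) ⬝ᵥ (b + u) = b ⬝ᵥ b + 2 * (b ⬝ᵥ u) + u ⬝ᵥ u := by
          simp only [add_dotProduct, dotProduct_add]
          rw [dotProduct_comm u b]
          ring
        rw [hbu]
        have hne : α ≠ 0 := ne_of_gt hα0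
        have hαinv : α ^ 2 * (α⁻¹ * (u ⬝ᵥ u)) = α * (u ⬝ᵥ u) := by
          rw [pow_two, mul_comm α α, mul_assoc, ← mul_assoc α α⁻¹,
            mul_inv_cancel₀ hne, one_mul]
        rw [hαinv]
        ring

end S12H

/-- DIANA+ shift recursion. With `ω_i = max_j 1/p_{i;j} − 1`,
`0 < α ≤ 1/(1+ω_max)` and updates `h_i⁺ = h_i + α C̄_i (∇f_i(x) − h_i)`,
`E[(1/n) Σ_i ‖h_i⁺ − ∇f_i(y)‖²_{L_i†}] ≤ (1−α)(1/n) Σ_i ‖h_i − ∇f_i(y)‖²_{L_i†} + 2α D_f(x,y)`. -/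
theorem statement12 {d n : ℕ} (hd : 0 < d) (hn : 0 < n) (μs : Fin n → Sampling d)
    (fi : Fin n → Vec d → ℝ) (Li Lih Lidag Lidh : Fin n → Matrix (Fin d) (Fin d) ℝ)
    (hLi : ∀ i, (Li i).PosSemidef)
    (hfi : ∀ i, Differentiable ℝ (fi i) ∧ ConvexOn ℝ Set.univ (fi i) ∧
      BddBelow (Set.range (fi i)) ∧ MSmooth (fi i) (Li i))
    (hLih : ∀ i, (Lih i).PosSemidef ∧ Lih i * Lih i = Li i)
    (hLidag : ∀ i, IsMoorePenrose (Li i) (Lidag i))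
    (hLidh : ∀ i, (Lidh i).PosSemidef ∧ Lidh i * Lidh i = Lidag i)
    (f : Vec d → ℝ) (hf : f = fun x => (1 / (n : ℝ)) * ∑ i, fi i x)
    (omegaMax : ℝ) (homega : omegaMax = ⨆ i, ((⨆ j : Fin d, ((μs i).marg j)⁻¹) - 1))
    (α : ℝ) (hα0 : 0 < α) (hα1 : α ≤ 1 / (1 + omegaMax))
    (h : Fin n → Vec d) (hh : ∀ i, h i ∈ Set.range (mact (Li i)))
    (x : Vec d) (hplus : Fin n → Finset (Fin d) → Vec d)
    (hhplus : hplus = fun i S =>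
      h i + α • mact (Lih i * (μs i).sketch S * Lidh i) (gradient (fi i) x - h i)) :
    ∀ y : Vec d,
      (∑ ω : Fin n → Finset (Fin d), (∏ i, (μs i).prob (ω i)) *
          ((1 / (n : ℝ)) * ∑ i, quad (Lidag i) (hplus i (ω i) - gradient (fi i) y)))
        ≤ (1 - α) * ((1 / (n : ℝ)) * ∑ i, quad (Lidag i) (h i - gradient (fi i) y))
          + 2 * α * (f x - f y - ⟪gradient f y, x - y⟫) := by
  intro y
  classical
  haveI hne_d : Nonempty (Fin d) := Fin.pos_iff_nonempty.1 hd
  haveI hne_n : Nonempty (Fin n) := Fin.pos_iff_nonempty.1 hn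
  have hmargpos : ∀ i j, 0 < (μs i).marg j := fun i j => (μs i).margPos j
  have hsup : ∀ i j, ((μs i).marg j)⁻¹ ≤ 1 + omegaMax := by
    intro i j
    have h1 : ((μs i).marg j)⁻¹ ≤ ⨆ j, ((μs i).marg j)⁻¹ :=
      le_ciSup (f := fun j => ((μs i).marg j)⁻¹)
        (Set.Finite.bddAbove (Set.finite_range _)) j
    have h2 : (⨆ j, ((μs i).marg j)⁻¹) - 1 ≤ omegaMax := by
      rw [homega]
      exact le_ciSup (f := fun i => (⨆ j : Fin d, ((μs i).marg j)⁻¹) - 1)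
        (Set.Finite.bddAbove (Set.finite_range _)) i
    linarith
  have hαp : ∀ i j, ((μs i).marg j)⁻¹ ≤ α⁻¹ := by
    intro i j
    have hip : 0 < ((μs i).marg j)⁻¹ := inv_pos.2 (hmargpos i j)
    have hαm : α ≤ (μs i).marg j := by
      have h3 : 1 / (1 + omegaMax) ≤ 1 / ((μs i).marg j)⁻¹ :=
        one_div_le_one_div_of_le hip (hsup i j)
      rw [one_div (((μs i).marg j)⁻¹), inv_inv] at h3
      exact le_trans hα1 h3
    have h4 := one_div_le_one_div_of_le hα0 hαm
    rwa [one_div, one_div] at h4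
  have hrearr : ∀ (i : Fin n) (S : Finset (Fin d)),
      h i + α • mact (Lih i * (μs i).sketch S * Lidh i) (gradient (fi i) x - h i)
          - gradient (fi i) y
      = (h i - gradient (fi i) y)
          + α • mact (Lih i * (μs i).sketch S * Lidh i) (gradient (fi i) x - h i) :=
    fun i S => add_sub_right_comm _ _ _
  have hn' : (0 : ℝ) ≤ 1 / (n : ℝ) := by positivity
  calc (∑ ω : Fin n → Finset (Fin d), (∏ i, (μs i).prob (ω i)) *
          ((1 / (n : ℝ)) * ∑ i, quad (Lidag i) (hplus i (ω i) - gradient (fi i) y)))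
      = (1 / (n : ℝ)) * ∑ i, ∑ S : Finset (Fin d), (μs i).prob S *
          quad (Lidag i) ((h i - gradient (fi i) y)
            + α • mact (Lih i * (μs i).sketch S * Lidh i) (gradient (fi i) x - h i)) := by
        simp only [hhplus, hrearr]
        have h1 : ∀ ω : Fin n → Finset (Fin d),
            (∏ k, (μs k).prob (ω k)) * ((1 / (n : ℝ)) * ∑ i, quad (Lidag i)
              ((h i - gradient (fi i) y)
                + α • mact (Lih i * (μs i).sketch (ω i) * Lidh i) (gradient (fi i) x - h i)))
            = (1 / (n : ℝ)) * ∑ i, (∏ k, (μs k).prob (ω k)) * quad (Lidag i)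
              ((h i - gradient (fi i) y)
                + α • mact (Lih i * (μs i).sketch (ω i) * Lidh i) (gradient (fi i) x - h i)) := by
          intro ω
          rw [show (∏ k, (μs k).prob (ω k)) * ((1 / (n : ℝ)) * ∑ i, quad (Lidag i)
              ((h i - gradient (fi i) y)
                + α • mact (Lih i * (μs i).sketch (ω i) * Lidh i) (gradient (fi i) x - h i)))
            = (1 / (n : ℝ)) * ((∏ k, (μs k).prob (ω k)) * ∑ i, quad (Lidag i)
              ((h i - gradient (fi i) y)
                + α • mact (Lih i * (μs i).sketch (ω i) * Lidh i) (gradient (fi i) x - h i)))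
            from by ring, Finset.mul_sum]
        simp_rw [h1]
        rw [← Finset.mul_sum]
        congr 1
        rw [Finset.sum_comm]
        refine Finset.sum_congr rfl fun i _ => ?_
        exact S12H.expect_factor (fun k => (μs k).prob) (fun k => (μs k).total) i
          (fun S => quad (Lidag i) (h i - gradient (fi i) y
            + α • mact (Lih i * (μs i).sketch S * Lidh i) (gradient (fi i) x - h i)))
    _ ≤ (1 / (n : ℝ)) * ∑ i, ((1 - α) * quad (Lidag i) (h i - gradient (fi i) y)
          + α * (2 * (fi i x - fi i y - ⟪gradient (fi i) y, x - y⟫))) := by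
        refine mul_le_mul_of_nonneg_left (Finset.sum_le_sum fun i _ => ?_) hn'
        have hper := S12H.per_i (μs i) (hLi i) (hLih i).1 (hLih i).2 (hLidag i)
          (hLidh i).1 (hLidh i).2 hα0 (hαp i) (h i - gradient (fi i) y)
          (gradient (fi i) x - h i)
        have hcombine : (h i - gradient (fi i) y) + (gradient (fi i) x - h i)
            = gradient (fi i) x - gradient (fi i) y := by abel
        rw [hcombine] at hper
        refine le_trans hper ?_
        have hLdhT : (Lidh i)ᵀ = Lidh i := by
          rw [← S12H.rct]; exact (hLidh i).1.1
        have hLdT : (Lidag i)ᵀ = Lidag i := by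
          rw [← (hLidh i).2, Matrix.transpose_mul, hLdhT]
        have hLdL : Lidag i * Li i * Lidag i = Lidag i := (hLidag i).2.1
        have hco := S12H.coco (hfi i).1 (hfi i).2.1 (hfi i).2.2.2 hLdT hLdL x y
        exact (add_le_add_iff_left _).2 (mul_le_mul_of_nonneg_left hco hα0.le)
    _ = (1 - α) * ((1 / (n : ℝ)) * ∑ i, quad (Lidag i) (h i - gradient (fi i) y))
          + 2 * α * (f x - f y - ⟪gradient f y, x - y⟫) := by
        have hF : f x - f y - ⟪gradient f y, x - y⟫
            = (1 / (n : ℝ)) * ∑ i, (fi i x - fi i y - ⟪gradient (fi i) y, x - y⟫) := by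
          have hga := S12H.grad_avg fi (fun i => (hfi i).1) y (x - y)
          simp only [hf]
          rw [hga]
          rw [Finset.sum_sub_distrib, Finset.sum_sub_distrib]
          ring
        rw [hF]
        have hsplit : ∑ i, ((1 - α) * quad (Lidag i) (h i - gradient (fi i) y)
              + α * (2 * (fi i x - fi i y - ⟪gradient (fi i) y, x - y⟫)))
            = (1 - α) * (∑ i, quad (Lidag i) (h i - gradient (fi i) y))
              + 2 * α * (∑ i, (fi i x - fi i y - ⟪gradient (fi i) y, x - y⟫)) := by
          rw [Finset.sum_add_distrib, ← Finset.mul_sum, ← Finset.mul_sum]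
          congr 1
          rw [Finset.mul_sum, Finset.mul_sum]
          refine Finset.sum_congr rfl fun i _ => ?_
          ring
        rw [hsplit]
        ring

end
end

section
/- (ADIANA+ variance bound, Lemma 4.) Let f_1, …, f_n : ℝ^d → ℝ be differentiable, convex, bounded below and L_i-smooth for symmetric positive semidefinite matrices L_i, and f = (1/n) Σ_i f_i. Let C_1, …, C_n be mutually independent sketches of proper samplings S_i with L̃max = max_i λmax(P̃_i ∘ L_i), let h_1, …, h_n be vectors with h_i ∈ range(L_i), and define g = (1/n) Σ_{i=1}^n [ L_i^{1/2} C_i L_i^{†1/2} (∇f_i(x) − h_i) + h_i ]. Then for all x, w ∈ ℝ^d: E[‖g − ∇f(x)‖²] ≤ (2 L̃max / n²) Σ_{i=1}^n ‖∇f_i(w) − ∇f_i(x)‖²_{L_i†} + (2 L̃max / n) H, where H = (1/n) Σ_{i=1}^n ‖∇f_i(w) − h_i‖²_{L_i†}. -/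
open scoped BigOperators RealInnerProductSpace
open Matrix

noncomputable section

/-! ### Auxiliary lemmas -/

section Aux

open scoped MatrixOrder

open Finset in
lemma adiana_diag_commute_fn {m : Type*} [Fintype m] [DecidableEq m] (dvec : m → ℝ) (f : ℝ → ℝ)
    (C : Matrix m m ℝ) (h : Matrix.diagonal dvec * C = C * Matrix.diagonal dvec) :
    Matrix.diagonal (f ∘ dvec) * C = C * Matrix.diagonal (f ∘ dvec) := by
  ext i j
  have h' := congrFun (congrFun h i) j
  simp only [Matrix.diagonal_mul, Matrix.mul_diagonal] at h' ⊢
  simp only [Function.comp_apply]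
  rcases eq_or_ne (dvec i) (dvec j) with he | he
  · rw [he, mul_comm]
  · have h0 : C i j * (dvec j - dvec i) = 0 := by nlinarith [h']
    rcases mul_eq_zero.mp h0 with hc | hc
    · simp [hc]
    · exact absurd (by linarith : dvec i = dvec j) he

lemma adiana_commute_sqrt {m : Type*} [Fintype m] [DecidableEq m] {A B : Matrix m m ℝ}
    (hA : Matrix.PosSemidef A) (h : A * B = B * A) : CFC.sqrt A * B = B * CFC.sqrt A := by
  have := Commute.cfc_nnreal (a := A) (b := B) h NNReal.sqrt
  rw [← CFC.sqrt_eq_cfc] at this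
  exact this

lemma psd_symm {d : ℕ} {A : Matrix (Fin d) (Fin d) ℝ} (hA : A.PosSemidef) : Aᵀ = A := by
  have := hA.1
  rwa [Matrix.IsHermitian, Matrix.conjTranspose_eq_transpose_of_trivial] at this

lemma dag_psd_comm {d : ℕ} {L Lidag Lidh : Matrix (Fin d) (Fin d) ℝ}
    (hL : L.PosSemidef) (hMP : IsMoorePenrose L Lidag)
    (hLidhP : Lidh.PosSemidef) (hLidh : Lidh * Lidh = Lidag) :
    Lidag.PosSemidef ∧ L * Lidag = Lidag * L := by
  have hLsym : Lᵀ = L := psd_symm hL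
  have hLidhsym : Lidhᵀ = Lidh := psd_symm hLidhP
  have hdagP : Lidag.PosSemidef := by
    have hform : Lidag = Lidhᴴ * Lidh := by
      rw [Matrix.conjTranspose_eq_transpose_of_trivial, hLidhsym, hLidh]
    rw [hform]; exact Matrix.posSemidef_conjTranspose_mul_self _
  have hdagsym : Lidagᵀ = Lidag := psd_symm hdagP
  refine ⟨hdagP, ?_⟩
  calc L * Lidag = (L * Lidag)ᵀ := (hMP.2.2.1).symm
    _ = Lidagᵀ * Lᵀ := Matrix.transpose_mul _ _
    _ = Lidag * L := by rw [hdagsym, hLsym]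

lemma key_proj {d : ℕ} {L Lih Lidag Lidh : Matrix (Fin d) (Fin d) ℝ}
    (hL : L.PosSemidef) (hLihP : Lih.PosSemidef) (hLih : Lih * Lih = L)
    (hMP : IsMoorePenrose L Lidag)
    (hLidhP : Lidh.PosSemidef) (hLidh : Lidh * Lidh = Lidag) :
    Lih * Lidh = L * Lidag := by
  have hLsym : Lᵀ = L := psd_symm hL
  have hLihsym : Lihᵀ = Lih := psd_symm hLihP
  obtain ⟨hdagP, hcommLd⟩ := dag_psd_comm hL hMP hLidhP hLidh
  have hLihsq : Lih = CFC.sqrt L := (CFC.sqrt_unique hLih (Matrix.nonneg_iff_posSemidef.mpr hLihP)).symm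
  have hLidhsq : Lidh = CFC.sqrt Lidag :=
    (CFC.sqrt_unique hLidh (Matrix.nonneg_iff_posSemidef.mpr hLidhP)).symm
  have hcomm1 : Lih * Lidag = Lidag * Lih := by
    rw [hLihsq]; exact adiana_commute_sqrt hL hcommLd
  have hcomm2 : Lidh * Lih = Lih * Lidh := by
    rw [hLidhsq]; exact adiana_commute_sqrt hdagP (by rw [hcomm1])
  have hPP : (L * Lidag) * (L * Lidag) = L * Lidag := by
    calc (L * Lidag) * (L * Lidag) = L * (Lidag * L * Lidag) := by
          simp only [Matrix.mul_assoc]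
      _ = L * Lidag := by rw [hMP.2.1]
  have hKsq : (Lih * Lidh) * (Lih * Lidh) = L * Lidag := by
    calc (Lih * Lidh) * (Lih * Lidh) = Lih * (Lidh * Lih) * Lidh := by
          simp only [Matrix.mul_assoc]
      _ = Lih * (Lih * Lidh) * Lidh := by rw [hcomm2]
      _ = (Lih * Lih) * (Lidh * Lidh) := by simp only [Matrix.mul_assoc]
      _ = L * Lidag := by rw [hLih, hLidh]
  have hsq : CFC.sqrt Lih * CFC.sqrt Lih = Lih :=
    CFC.sqrt_mul_sqrt_self Lih (Matrix.nonneg_iff_posSemidef.mpr hLihP)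
  have hssym : (CFC.sqrt Lih)ᵀ = CFC.sqrt Lih :=
    psd_symm (Matrix.nonneg_iff_posSemidef.mp (CFC.sqrt_nonneg Lih))
  have hcs : CFC.sqrt Lih * Lidh = Lidh * CFC.sqrt Lih :=
    adiana_commute_sqrt hLihP hcomm2.symm
  have hKform : CFC.sqrt Lih * Lidh * (CFC.sqrt Lih)ᴴ = Lih * Lidh := by
    rw [Matrix.conjTranspose_eq_transpose_of_trivial, hssym, hcs, Matrix.mul_assoc, hsq, hcomm2]
  have hKP : (Lih * Lidh).PosSemidef := by
    rw [← hKform]; exact hLidhP.mul_mul_conjTranspose_same _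
  have hPform : Lih * Lidag * Lihᴴ = L * Lidag := by
    rw [Matrix.conjTranspose_eq_transpose_of_trivial, hLihsym, hcomm1, Matrix.mul_assoc, hLih,
      ← hcommLd]
  have hPPsd : (L * Lidag).PosSemidef := by
    rw [← hPform]; exact hdagP.mul_mul_conjTranspose_same _
  exact (CFC.sq_eq_sq_iff _ _ (Matrix.nonneg_iff_posSemidef.mpr hKP)
    (Matrix.nonneg_iff_posSemidef.mpr hPPsd)).mp (by rw [pow_two, pow_two, hKsq, hPP])

/-- reinterpret a Euclidean vector as a plain function -/
def vf {d : ℕ} (x : Vec d) : Fin d → ℝ := x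

lemma vf_sub {d : ℕ} (x y : Vec d) : vf (x - y) = vf x - vf y := rfl
lemma vf_smul {d : ℕ} (c : ℝ) (x : Vec d) : vf (c • x) = c • vf x := rfl

lemma vf_sum {d n : ℕ} (y : Fin n → Vec d) : vf (∑ i, y i) = ∑ i, vf (y i) := by
  exact map_sum (WithLp.linearEquiv 2 ℝ (Fin d → ℝ)) y Finset.univ

lemma inner_eq_dot {d : ℕ} (x y : Vec d) : ⟪x, y⟫ = vf x ⬝ᵥ vf y := by
  simp [PiLp.inner_apply, dotProduct, RCLike.inner_apply, mul_comm]; rfl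

lemma mact_eq {d : ℕ} (M : Matrix (Fin d) (Fin d) ℝ) (x : Vec d) :
    vf (mact M x) = M *ᵥ vf x := by
  simp [mact, Matrix.toEuclideanLin_apply]; rfl

lemma quad_eq_dot {d : ℕ} (M : Matrix (Fin d) (Fin d) ℝ) (x : Vec d) :
    quad M x = vf x ⬝ᵥ M *ᵥ vf x := by
  rw [quad, inner_eq_dot, mact_eq]

lemma norm_sq_dot {d : ℕ} (u : Vec d) : ‖u‖ ^ 2 = vf u ⬝ᵥ vf u := by
  rw [← real_inner_self_eq_norm_sq, inner_eq_dot]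

lemma dot_self_nonneg' {d : ℕ} (v : Fin d → ℝ) : 0 ≤ v ⬝ᵥ v :=
  Finset.sum_nonneg fun _ _ => mul_self_nonneg _

lemma rayleigh_bddAbove {d : ℕ} (M : Matrix (Fin d) (Fin d) ℝ) :
    BddAbove {r : ℝ | ∃ v : Fin d → ℝ, v ⬝ᵥ v = 1 ∧ r = v ⬝ᵥ M.mulVec v} := by
  have hs : {r : ℝ | ∃ v : Fin d → ℝ, v ⬝ᵥ v = 1 ∧ r = v ⬝ᵥ M.mulVec v} =
      (fun u : Vec d => ⟪u, Matrix.toEuclideanLin M u⟫) '' (Metric.sphere 0 1) := by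
    ext r
    constructor
    · rintro ⟨w, hw1, rfl⟩
      refine ⟨(WithLp.toLp 2 w : Vec d), ?_, ?_⟩
      · rw [mem_sphere_zero_iff_norm]
        have h2 : ‖(WithLp.toLp 2 w : Vec d)‖ ^ 2 = 1 := by rw [norm_sq_dot]; exact hw1
        nlinarith [norm_nonneg (WithLp.toLp 2 w : Vec d)]
      · show ⟪(WithLp.toLp 2 w : Vec d), Matrix.toEuclideanLin M (WithLp.toLp 2 w : Vec d)⟫ = _
        rw [inner_eq_dot,
          show Matrix.toEuclideanLin M (WithLp.toLp 2 w : Vec d)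
            = mact M (WithLp.toLp 2 w : Vec d) from rfl, mact_eq]
        rfl
    · rintro ⟨u, hu, rfl⟩
      rw [mem_sphere_zero_iff_norm] at hu
      refine ⟨vf u, ?_, ?_⟩
      · rw [← norm_sq_dot, hu]; norm_num
      · show ⟪u, Matrix.toEuclideanLin M u⟫ = _
        rw [inner_eq_dot, show Matrix.toEuclideanLin M u = mact M u from rfl, mact_eq]
  rw [hs]
  apply IsCompact.bddAbove
  apply IsCompact.image (isCompact_sphere 0 1)
  exact Continuous.inner continuous_id
    ((Matrix.toEuclideanLin M : Vec d →ₗ[ℝ] Vec d).continuous_of_finiteDimensional)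

lemma rayleigh_le {d : ℕ} (M : Matrix (Fin d) (Fin d) ℝ) (v : Fin d → ℝ) :
    v ⬝ᵥ M *ᵥ v ≤ lambdaMax M * (v ⬝ᵥ v) := by
  rcases eq_or_ne v 0 with rfl | hv
  · simp
  have hvv : 0 < v ⬝ᵥ v := by
    rcases lt_or_eq_of_le (dot_self_nonneg' v) with h | h
    · exact h
    · exact absurd (dotProduct_self_eq_zero.mp h.symm) hv
  have hbdd := rayleigh_bddAbove M
  set c : ℝ := (Real.sqrt (v ⬝ᵥ v))⁻¹ with hc
  have hcsq : c ^ 2 * (v ⬝ᵥ v) = 1 := by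
    rw [hc, inv_pow, Real.sq_sqrt hvv.le, inv_mul_cancel₀ hvv.ne']
  have hmem : (c • v) ⬝ᵥ M *ᵥ (c • v) ∈
      {r : ℝ | ∃ w : Fin d → ℝ, w ⬝ᵥ w = 1 ∧ r = w ⬝ᵥ M.mulVec w} :=
    ⟨c • v, by rw [smul_dotProduct, dotProduct_smul, smul_eq_mul, smul_eq_mul]
               nlinarith [hcsq], rfl⟩
  have hle := le_csSup hbdd hmem
  have hval : (c • v) ⬝ᵥ M *ᵥ (c • v) = c ^ 2 * (v ⬝ᵥ M *ᵥ v) := by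
    rw [smul_dotProduct, mulVec_smul, dotProduct_smul, smul_eq_mul, smul_eq_mul]; ring
  rw [hval] at hle
  have hc2 : c ^ 2 = (v ⬝ᵥ v)⁻¹ := by
    field_simp
    nlinarith [hcsq]
  rw [hc2] at hle
  calc v ⬝ᵥ M *ᵥ v = ((v ⬝ᵥ v)⁻¹ * (v ⬝ᵥ M *ᵥ v)) * (v ⬝ᵥ v) := by field_simp
    _ ≤ lambdaMax M * (v ⬝ᵥ v) := mul_le_mul_of_nonneg_right hle hvv.le

lemma diag_le_lambdaMax {d : ℕ} (M : Matrix (Fin d) (Fin d) ℝ) (j : Fin d) :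
    M j j ≤ lambdaMax M := by
  apply le_csSup (rayleigh_bddAbove M)
  refine ⟨Pi.single j 1, ?_, ?_⟩
  · rw [single_dotProduct]; simp
  · rw [Matrix.mulVec_single, single_dotProduct]
    simp

lemma lambdaMax_dim_zero (M : Matrix (Fin 0) (Fin 0) ℝ) : lambdaMax M = 0 := by
  have : {r : ℝ | ∃ v : Fin 0 → ℝ, v ⬝ᵥ v = 1 ∧ r = v ⬝ᵥ M.mulVec v} = ∅ := by
    ext r
    simp only [Set.mem_setOf_eq, Set.mem_empty_iff_false, iff_false, not_exists]
    intro v hv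
    exact absurd hv.1 (by simp [dotProduct])
  rw [lambdaMax, this, Real.sSup_empty]

lemma grad_mem_range {d : ℕ} {φ : Vec d → ℝ} {L Ldag : Matrix (Fin d) (Fin d) ℝ}
    (hLsym : Lᵀ = L) (hid : L * (L * Ldag) = L)
    (hbdd : BddBelow (Set.range φ)) (hsm : MSmooth φ L) (x : Vec d) :
    ∃ u : Fin d → ℝ, L *ᵥ u = vf (gradient φ x) := by
  set G : Vec d := gradient φ x with hG
  set v : Vec d := G - mact (L * Ldag) G with hv
  have hvf : vf v = vf G - (L * Ldag) *ᵥ vf G := by rw [hv, vf_sub, mact_eq]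
  have hLv : L *ᵥ vf v = 0 := by
    rw [hvf, Matrix.mulVec_sub, Matrix.mulVec_mulVec, hid, sub_self]
  have hGv : ⟪G, v⟫ = ⟪v, v⟫ := by
    have hGsplit : G = v + mact (L * Ldag) G := by rw [hv]; abel
    have horth : ⟪mact (L * Ldag) G, v⟫ = 0 := by
      rw [inner_eq_dot, mact_eq]
      rw [← Matrix.mulVec_mulVec, dotProduct_comm, Matrix.dotProduct_mulVec,
        ← Matrix.mulVec_transpose, hLsym, hLv]
      simp
    nth_rewrite 1 [hGsplit]
    rw [inner_add_left, horth, add_zero]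
  have hquadsmul : ∀ t : ℝ, quad L ((-t) • v) = t ^ 2 * quad L v := by
    intro t
    rw [quad_eq_dot, quad_eq_dot, vf_smul, smul_dotProduct, mulVec_smul, dotProduct_smul,
      smul_eq_mul, smul_eq_mul]
    ring
  have hquadv : quad L v = 0 := by
    rw [quad_eq_dot, hLv]
    simp
  obtain ⟨b, hb⟩ := hbdd
  have hkey : ∀ t : ℝ, b ≤ φ x - t * ⟪v, v⟫ := by
    intro t
    have h1 := hsm (x - t • v) x
    have h2 : x - t • v - x = (-t) • v := by
      rw [neg_smul]; abel
    rw [h2, hquadsmul, hquadv, mul_zero, mul_zero, add_zero] at h1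
    have h3 : ⟪gradient φ x, (-t) • v⟫ = -t * ⟪v, v⟫ := by
      rw [real_inner_smul_right, ← hG, hGv]
    rw [h3] at h1
    have h4 : b ≤ φ (x - t • v) := hb ⟨x - t • v, rfl⟩
    linarith
  have hvz : ⟪v, v⟫ = 0 := by
    by_contra hne
    have hpos : 0 < ⟪v, v⟫ := lt_of_le_of_ne real_inner_self_nonneg (Ne.symm hne)
    have := hkey ((φ x - b + 1) / ⟪v, v⟫)
    rw [div_mul_cancel₀ _ hpos.ne'] at this
    linarith
  have hv0 : v = 0 := inner_self_eq_zero.mp hvz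
  refine ⟨Ldag *ᵥ vf G, ?_⟩
  have h5 : vf G - (L * Ldag) *ᵥ vf G = 0 := by
    rw [← hvf, hv0]; rfl
  rw [Matrix.mulVec_mulVec, ← sub_eq_zero, ← neg_sub, h5]
  simp

lemma gradient_avg {d n : ℕ} (fi : Fin n → Vec d → ℝ)
    (hfi : ∀ i, Differentiable ℝ (fi i)) (c : ℝ)
    (f : Vec d → ℝ) (hf : f = fun x => c * ∑ i, fi i x) (x : Vec d) :
    gradient f x = c • ∑ i, gradient (fi i) x := by
  have hsum : DifferentiableAt ℝ (fun y => ∑ i, fi i y) x :=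
    DifferentiableAt.fun_sum fun i _ => (hfi i).differentiableAt
  have hfd : fderiv ℝ f x = c • ∑ i, fderiv ℝ (fi i) x := by
    rw [hf, fderiv_const_mul hsum, fderiv_fun_sum fun i _ => (hfi i).differentiableAt]
  unfold gradient
  rw [hfd, _root_.map_smul, map_sum]

/-! sampling expectation identities -/

lemma sketch_expect {d : ℕ} (μ : Sampling d) :
    ∑ S : Finset (Fin d), μ.prob S • μ.sketch S = 1 := by
  ext j l
  rcases eq_or_ne j l with rfl | hjl
  · rw [Matrix.sum_apply]
    simp only [Matrix.smul_apply, Sampling.sketch, Matrix.diagonal_apply_eq, smul_eq_mul,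
      Matrix.one_apply_eq]
    have h1 : (∑ S : Finset (Fin d), μ.prob S * if j ∈ S then (μ.marg j)⁻¹ else 0)
        = μ.marg j * (μ.marg j)⁻¹ := by
      rw [Sampling.marg, Finset.sum_mul]
      congr 1; funext S; by_cases h : j ∈ S <;> simp [h]
    rw [h1]; exact mul_inv_cancel₀ (μ.margPos j).ne'
  · rw [Matrix.sum_apply]
    simp [Matrix.smul_apply, Sampling.sketch, Matrix.diagonal_apply_ne _ hjl,
      Matrix.one_apply_ne hjl]

lemma sketch_second_moment {d : ℕ} (μ : Sampling d) (L : Matrix (Fin d) (Fin d) ℝ) :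
    ∑ S : Finset (Fin d), μ.prob S • (μ.sketch S * L * μ.sketch S)
      = Matrix.hadamard μ.Pbar L := by
  ext j l
  rw [Matrix.sum_apply]
  have hentry : ∀ S : Finset (Fin d), (μ.prob S • (μ.sketch S * L * μ.sketch S)) j l
      = (if j ∈ S ∧ l ∈ S then μ.prob S else 0) * ((μ.marg j)⁻¹ * L j l * (μ.marg l)⁻¹) := by
    intro S
    simp only [Matrix.smul_apply, Sampling.sketch, Matrix.diagonal_mul, Matrix.mul_diagonal,
      smul_eq_mul]
    by_cases hj : j ∈ S <;> by_cases hl : l ∈ S <;> simp [hj, hl] <;> ring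
  rw [Finset.sum_congr rfl fun S _ => hentry S, ← Finset.sum_mul]
  simp only [Matrix.hadamard_apply, Sampling.Pbar, Sampling.probMatrix, Matrix.of_apply]
  rw [div_eq_mul_inv, mul_inv]
  ring

/-! dot-product helpers -/

lemma sum_mulVec' {d : ℕ} {ι : Type*} (s : Finset ι) (A : ι → Matrix (Fin d) (Fin d) ℝ)
    (v : Fin d → ℝ) : (∑ i ∈ s, A i) *ᵥ v = ∑ i ∈ s, A i *ᵥ v := by
  ext j
  simp only [Matrix.mulVec, dotProduct, Matrix.sum_apply, Finset.sum_apply,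
    Finset.sum_mul]
  exact Finset.sum_comm

lemma dot_sum' {d : ℕ} {ι : Type*} (s : Finset ι) (u : Fin d → ℝ) (v : ι → Fin d → ℝ) :
    u ⬝ᵥ (∑ i ∈ s, v i) = ∑ i ∈ s, u ⬝ᵥ v i := by
  simp only [dotProduct, Finset.sum_apply, Finset.mul_sum]
  exact Finset.sum_comm

lemma sum_dot' {d : ℕ} {ι : Type*} (s : Finset ι) (u : Fin d → ℝ) (v : ι → Fin d → ℝ) :
    (∑ i ∈ s, v i) ⬝ᵥ u = ∑ i ∈ s, v i ⬝ᵥ u := by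
  simp only [dotProduct, Finset.sum_apply, Finset.sum_mul]
  exact Finset.sum_comm

lemma dot_mulVec_left {d : ℕ} (A : Matrix (Fin d) (Fin d) ℝ) (u w : Fin d → ℝ) :
    (A *ᵥ u) ⬝ᵥ w = u ⬝ᵥ (Aᵀ *ᵥ w) := by
  rw [dotProduct_comm, Matrix.dotProduct_mulVec, ← Matrix.mulVec_transpose,
    dotProduct_comm]

lemma mulVec_self_dot {d : ℕ} {A G : Matrix (Fin d) (Fin d) ℝ} (hAsym : Aᵀ = A)
    (hAA : A * A = G) (u : Fin d → ℝ) :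
    (A *ᵥ u) ⬝ᵥ (A *ᵥ u) = u ⬝ᵥ (G *ᵥ u) := by
  rw [dot_mulVec_left, hAsym, Matrix.mulVec_mulVec, hAA]

lemma dot_expand {d : ℕ} (u v : Fin d → ℝ) :
    (u - v) ⬝ᵥ (u - v) = u ⬝ᵥ u - 2 * (u ⬝ᵥ v) + v ⬝ᵥ v := by
  simp only [dotProduct_sub, sub_dotProduct]
  rw [dotProduct_comm v u]
  ring

lemma dot_two_bound {d : ℕ} (c1 c2 : Fin d → ℝ) :
    (c2 - c1) ⬝ᵥ (c2 - c1) ≤ 2 * (c1 ⬝ᵥ c1) + 2 * (c2 ⬝ᵥ c2) := by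
  rw [dot_expand]
  nlinarith [dot_self_nonneg' (c1 + c2), dot_expand c1 (-c2),
    (by simp [dotProduct_add, add_dotProduct,
        dotProduct_comm c2 c1] ; ring :
      (c1 + c2) ⬝ᵥ (c1 + c2) = c1 ⬝ᵥ c1 + 2 * (c2 ⬝ᵥ c1) + c2 ⬝ᵥ c2)]

/-! marginalization over product samplings -/

lemma prod_point_one {n : ℕ} {Ω : Type*} [DecidableEq (Fin n)]
    (p : Fin n → Ω → ℝ) (i : Fin n) (φ : Ω → ℝ) (ω : Fin n → Ω) :
    (∏ j, p j (ω j)) * φ (ω i)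
      = ∏ j, (p j (ω j) * if j = i then φ (ω j) else 1) := by
  rw [Finset.prod_mul_distrib, Finset.prod_ite_eq' Finset.univ i (fun j => φ (ω j))]
  simp

lemma prod_point_two {n : ℕ} {Ω : Type*} (p : Fin n → Ω → ℝ) (i k : Fin n) (φ ψ : Ω → ℝ)
    (ω : Fin n → Ω) :
    (∏ j, p j (ω j)) * (φ (ω i) * ψ (ω k))
      = ∏ j, (p j (ω j) * ((if j = i then φ (ω j) else 1) * if j = k then ψ (ω j) else 1)) := by
  rw [Finset.prod_mul_distrib, Finset.prod_mul_distrib,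
    Finset.prod_ite_eq' Finset.univ i (fun j => φ (ω j)),
    Finset.prod_ite_eq' Finset.univ k (fun j => ψ (ω j))]
  simp [mul_assoc]

lemma sum_prod_eq_prod_sum {n : ℕ} {Ω : Type*} [Fintype Ω] (f : Fin n → Ω → ℝ) :
    ∑ ω : Fin n → Ω, ∏ j, f j (ω j) = ∏ j, ∑ S, f j S := by
  rw [Finset.prod_univ_sum, Fintype.piFinset_univ]

lemma marg_one {n : ℕ} {Ω : Type*} [Fintype Ω] (p : Fin n → Ω → ℝ)
    (htot : ∀ j, ∑ S, p j S = 1) (i : Fin n) (φ : Ω → ℝ) :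
    ∑ ω : Fin n → Ω, (∏ j, p j (ω j)) * φ (ω i) = ∑ S, p i S * φ S := by
  have h1 : ∀ ω : Fin n → Ω, (∏ j, p j (ω j)) * φ (ω i)
      = ∏ j, (fun j S => p j S * if j = i then φ S else 1) j (ω j) := by
    intro ω; exact prod_point_one p i φ ω
  rw [Finset.sum_congr rfl fun ω _ => h1 ω,
    sum_prod_eq_prod_sum (fun j S => p j S * if j = i then φ S else 1)]
  rw [← Finset.mul_prod_erase Finset.univ _ (Finset.mem_univ i)]
  have h2 : ∏ j ∈ Finset.univ.erase i, ∑ S, p j S * (if j = i then φ S else 1) = 1 := by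
    apply Finset.prod_eq_one
    intro j hj
    have hji : j ≠ i := (Finset.mem_erase.mp hj).1
    simp only [if_neg hji, mul_one]
    exact htot j
  rw [h2, mul_one]
  simp

lemma marg_two {n : ℕ} {Ω : Type*} [Fintype Ω] (p : Fin n → Ω → ℝ)
    (htot : ∀ j, ∑ S, p j S = 1) (i k : Fin n) (hik : i ≠ k) (φ ψ : Ω → ℝ) :
    ∑ ω : Fin n → Ω, (∏ j, p j (ω j)) * (φ (ω i) * ψ (ω k))
      = (∑ S, p i S * φ S) * (∑ S, p k S * ψ S) := by
  have h1 : ∀ ω : Fin n → Ω, (∏ j, p j (ω j)) * (φ (ω i) * ψ (ω k))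
      = ∏ j, (fun j S => p j S * ((if j = i then φ S else 1) * if j = k then ψ S else 1)) j (ω j) :=
    fun ω => prod_point_two p i k φ ψ ω
  rw [Finset.sum_congr rfl fun ω _ => h1 ω,
    sum_prod_eq_prod_sum (fun j S => p j S * ((if j = i then φ S else 1) * if j = k then ψ S else 1))]
  rw [← Finset.mul_prod_erase Finset.univ _ (Finset.mem_univ i)]
  have hk : k ∈ Finset.univ.erase i := Finset.mem_erase.mpr ⟨hik.symm, Finset.mem_univ k⟩
  rw [← Finset.mul_prod_erase _ _ hk]
  have h2 : ∏ j ∈ (Finset.univ.erase i).erase k,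
      ∑ S, p j S * ((if j = i then φ S else 1) * if j = k then ψ S else 1) = 1 := by
    apply Finset.prod_eq_one
    intro j hj
    have hjk : j ≠ k := (Finset.mem_erase.mp hj).1
    have hji : j ≠ i := (Finset.mem_erase.mp (Finset.mem_erase.mp hj).2).1
    simp only [if_neg hji, if_neg hjk, one_mul, mul_one]
    exact htot j
  rw [h2, mul_one]
  have hki : ¬ (k = i) := fun hq => hik hq.symm
  simp [hki, hik]

/-! the per-sampling second-moment identity -/

lemma per_i {d : ℕ} (μ : Sampling d) {L Lih Lidag Lidh : Matrix (Fin d) (Fin d) ℝ}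
    (hL : L.PosSemidef) (hLihP : Lih.PosSemidef) (hLihsq : Lih * Lih = L)
    (hMP : IsMoorePenrose L Lidag) (hLidhP : Lidh.PosSemidef) (hLidhsq : Lidh * Lidh = Lidag)
    (a : Fin d → ℝ) (ha : ∃ u, L *ᵥ u = a) :
    (∑ S : Finset (Fin d), μ.prob S • ((Lih * μ.sketch S * Lidh) *ᵥ a - a) = 0) ∧
    (∑ S : Finset (Fin d), μ.prob S *
        (((Lih * μ.sketch S * Lidh) *ᵥ a - a) ⬝ᵥ ((Lih * μ.sketch S * Lidh) *ᵥ a - a))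
      = (Lidh *ᵥ a) ⬝ᵥ ((Matrix.hadamard μ.Ptilde L) *ᵥ (Lidh *ᵥ a))) ∧
    ((Lidh *ᵥ a) ⬝ᵥ (Lidh *ᵥ a) = a ⬝ᵥ (Lidag *ᵥ a)) := by
  obtain ⟨u, hu⟩ := ha
  have hK : Lih * Lidh = L * Lidag := key_proj hL hLihP hLihsq hMP hLidhP hLidhsq
  have hLihsym : Lihᵀ = Lih := psd_symm hLihP
  have hLidhsym : Lidhᵀ = Lidh := psd_symm hLidhP
  have hproj : (Lih * Lidh) *ᵥ a = a := by
    rw [hK, ← hu, Matrix.mulVec_mulVec, hMP.1]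
  have hEM : ∑ S : Finset (Fin d), μ.prob S • (Lih * μ.sketch S * Lidh) = Lih * Lidh := by
    have h1 : ∀ S : Finset (Fin d), μ.prob S • (Lih * μ.sketch S * Lidh)
        = Lih * (μ.prob S • μ.sketch S) * Lidh := by
      intro S; rw [mul_smul_comm, smul_mul_assoc]
    rw [Finset.sum_congr rfl fun S _ => h1 S, ← Finset.sum_mul, ← Finset.mul_sum,
      sketch_expect, mul_one]
  have hEZ : ∑ S : Finset (Fin d), μ.prob S • ((Lih * μ.sketch S * Lidh) *ᵥ a - a) = 0 := by
    have h1 : ∀ S : Finset (Fin d), μ.prob S • ((Lih * μ.sketch S * Lidh) *ᵥ a - a)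
        = (μ.prob S • (Lih * μ.sketch S * Lidh)) *ᵥ a - μ.prob S • a := by
      intro S
      rw [smul_sub, Matrix.smul_mulVec]
    rw [Finset.sum_congr rfl fun S _ => h1 S, Finset.sum_sub_distrib,
      ← sum_mulVec' Finset.univ, hEM, hproj, ← Finset.sum_smul, μ.total, one_smul, sub_self]
  refine ⟨hEZ, ?_, mulVec_self_dot hLidhsym hLidhsq a⟩
  set b : Fin d → ℝ := Lidh *ᵥ a with hb
  have haLihb : a = Lih *ᵥ b := by rw [hb, Matrix.mulVec_mulVec, hproj]
  have hMa : ∀ S : Finset (Fin d), (Lih * μ.sketch S * Lidh) *ᵥ a = Lih *ᵥ (μ.sketch S *ᵥ b) := by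
    intro S
    rw [hb, Matrix.mulVec_mulVec, Matrix.mulVec_mulVec, Matrix.mul_assoc]
  have hsksym : ∀ S : Finset (Fin d), (μ.sketch S)ᵀ = μ.sketch S := by
    intro S; rw [Sampling.sketch, Matrix.diagonal_transpose]
  have hMM : ∀ S : Finset (Fin d),
      ((Lih * μ.sketch S * Lidh) *ᵥ a) ⬝ᵥ ((Lih * μ.sketch S * Lidh) *ᵥ a)
        = b ⬝ᵥ ((μ.sketch S * L * μ.sketch S) *ᵥ b) := by
    intro S
    rw [hMa S, mulVec_self_dot hLihsym hLihsq, dot_mulVec_left, hsksym S,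
      Matrix.mulVec_mulVec, Matrix.mulVec_mulVec]
  have hE2 : ∑ S : Finset (Fin d),
      μ.prob S * (((Lih * μ.sketch S * Lidh) *ᵥ a) ⬝ᵥ ((Lih * μ.sketch S * Lidh) *ᵥ a))
        = b ⬝ᵥ ((Matrix.hadamard μ.Pbar L) *ᵥ b) := by
    have h1 : ∀ S : Finset (Fin d),
        μ.prob S * (((Lih * μ.sketch S * Lidh) *ᵥ a) ⬝ᵥ ((Lih * μ.sketch S * Lidh) *ᵥ a))
          = b ⬝ᵥ ((μ.prob S • (μ.sketch S * L * μ.sketch S)) *ᵥ b) := by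
      intro S
      rw [hMM S, Matrix.smul_mulVec, dotProduct_smul, smul_eq_mul]
    rw [Finset.sum_congr rfl fun S _ => h1 S, ← dot_sum' Finset.univ,
      ← sum_mulVec' Finset.univ, sketch_second_moment]
  have hcross : ∑ S : Finset (Fin d),
      μ.prob S * (((Lih * μ.sketch S * Lidh) *ᵥ a) ⬝ᵥ a) = a ⬝ᵥ a := by
    have h1 : ∀ S : Finset (Fin d), μ.prob S * (((Lih * μ.sketch S * Lidh) *ᵥ a) ⬝ᵥ a)
        = ((μ.prob S • (Lih * μ.sketch S * Lidh)) *ᵥ a) ⬝ᵥ a := by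
      intro S
      rw [Matrix.smul_mulVec, smul_dotProduct, smul_eq_mul]
    rw [Finset.sum_congr rfl fun S _ => h1 S, ← sum_dot' Finset.univ,
      ← sum_mulVec' Finset.univ, hEM, hproj]
  have haa : a ⬝ᵥ a = b ⬝ᵥ (L *ᵥ b) := by
    rw [haLihb]
    exact mulVec_self_dot hLihsym hLihsq b
  have hhad : Matrix.hadamard μ.Ptilde L = Matrix.hadamard μ.Pbar L - L := by
    ext j l
    simp [Matrix.hadamard_apply, Sampling.Ptilde, Matrix.sub_apply, sub_mul]
  calc ∑ S : Finset (Fin d), μ.prob S *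
        (((Lih * μ.sketch S * Lidh) *ᵥ a - a) ⬝ᵥ ((Lih * μ.sketch S * Lidh) *ᵥ a - a))
      = ∑ S : Finset (Fin d), (μ.prob S *
          (((Lih * μ.sketch S * Lidh) *ᵥ a) ⬝ᵥ ((Lih * μ.sketch S * Lidh) *ᵥ a))
          - 2 * (μ.prob S * (((Lih * μ.sketch S * Lidh) *ᵥ a) ⬝ᵥ a))
          + μ.prob S * (a ⬝ᵥ a)) := by
        apply Finset.sum_congr rfl
        intro S _
        rw [dot_expand]
        ring
    _ = b ⬝ᵥ ((Matrix.hadamard μ.Pbar L) *ᵥ b) - 2 * (a ⬝ᵥ a) + a ⬝ᵥ a := by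
        rw [Finset.sum_add_distrib, Finset.sum_sub_distrib, hE2, ← Finset.mul_sum, hcross,
          ← Finset.sum_mul, μ.total, one_mul]
    _ = b ⬝ᵥ ((Matrix.hadamard μ.Ptilde L) *ᵥ b) := by
        rw [hhad, Matrix.sub_mulVec, dotProduct_sub, ← haa]
        ring

end Aux


/-- ADIANA+ variance bound (Lemma 4). With `h_i ∈ range(L_i)` and
`g = (1/n) Σ_i [C̄_i (∇f_i(x) − h_i) + h_i]`,
`E‖g − ∇f(x)‖² ≤ (2L̃max/n²) Σ_i ‖∇f_i(w) − ∇f_i(x)‖²_{L_i†} + (2L̃max/n) H`,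
where `H = (1/n) Σ_i ‖∇f_i(w) − h_i‖²_{L_i†}`. -/
theorem statement13 {d n : ℕ} (hn : 0 < n) (μs : Fin n → Sampling d)
    (fi : Fin n → Vec d → ℝ) (Li Lih Lidag Lidh : Fin n → Matrix (Fin d) (Fin d) ℝ)
    (hLi : ∀ i, (Li i).PosSemidef)
    (hfi : ∀ i, Differentiable ℝ (fi i) ∧ ConvexOn ℝ Set.univ (fi i) ∧
      BddBelow (Set.range (fi i)) ∧ MSmooth (fi i) (Li i))
    (hLih : ∀ i, (Lih i).PosSemidef ∧ Lih i * Lih i = Li i)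
    (hLidag : ∀ i, IsMoorePenrose (Li i) (Lidag i))
    (hLidh : ∀ i, (Lidh i).PosSemidef ∧ Lidh i * Lidh i = Lidag i)
    (f : Vec d → ℝ) (hf : f = fun x => (1 / (n : ℝ)) * ∑ i, fi i x)
    (Ltilmax : ℝ) (hLtilmax : Ltilmax = ⨆ i, lambdaMax (Matrix.hadamard (μs i).Ptilde (Li i)))
    (h : Fin n → Vec d) (hh : ∀ i, h i ∈ Set.range (mact (Li i)))
    (x : Vec d) (g : (Fin n → Finset (Fin d)) → Vec d)
    (hg : g = fun ω => (1 / (n : ℝ)) •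
      ∑ i, (mact (Lih i * (μs i).sketch (ω i) * Lidh i) (gradient (fi i) x - h i) + h i)) :
    ∀ w : Vec d,
      (∑ ω : Fin n → Finset (Fin d),
          (∏ i, (μs i).prob (ω i)) * ‖g ω - gradient f x‖ ^ 2)
        ≤ (2 * Ltilmax / (n : ℝ) ^ 2)
            * ∑ i, quad (Lidag i) (gradient (fi i) w - gradient (fi i) x)
          + (2 * Ltilmax / (n : ℝ))
            * ((1 / (n : ℝ)) * ∑ i, quad (Lidag i) (gradient (fi i) w - h i)) := by
  intro w
  have hn' : (n : ℝ) ≠ 0 := Nat.cast_ne_zero.mpr hn.ne'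
  haveI : Nonempty (Fin n) := ⟨⟨0, hn⟩⟩
  have htot : ∀ j : Fin n, ∑ S : Finset (Fin d), (μs j).prob S = 1 := fun j => (μs j).total
  set a : Fin n → Vec d := fun i => gradient (fi i) x - h i with ha
  set Z : Fin n → Finset (Fin d) → (Fin d → ℝ) :=
    fun i S => (Lih i * (μs i).sketch S * Lidh i) *ᵥ vf (a i) - vf (a i) with hZdef
  -- pseudoinverse commutation facts
  have hcomm : ∀ i, Li i * Lidag i = Lidag i * Li i := fun i =>
    (dag_psd_comm (hLi i) (hLidag i) (hLidh i).1 (hLidh i).2).2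
  have hid : ∀ i, Li i * (Li i * Lidag i) = Li i := by
    intro i
    rw [hcomm i, ← Matrix.mul_assoc, (hLidag i).1]
  -- the gradient differences are in the range of Li
  have hrange : ∀ i, ∃ u : Fin d → ℝ, Li i *ᵥ u = vf (a i) := by
    intro i
    obtain ⟨u1, hu1⟩ := grad_mem_range (psd_symm (hLi i)) (hid i) (hfi i).2.2.1 (hfi i).2.2.2 x
    obtain ⟨y, hy⟩ := hh i
    refine ⟨u1 - vf y, ?_⟩
    have hyy : vf (h i) = Li i *ᵥ vf y := by rw [← hy, mact_eq]
    have hai : vf (a i) = vf (gradient (fi i) x) - vf (h i) := by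
      simp only [ha]; exact vf_sub _ _
    rw [Matrix.mulVec_sub, hu1, hai, hyy]
  -- zero-mean of each Z
  have hEZ : ∀ i, ∑ S : Finset (Fin d), (μs i).prob S • Z i S = 0 := fun i =>
    (per_i (μs i) (hLi i) (hLih i).1 (hLih i).2 (hLidag i) (hLidh i).1 (hLidh i).2
      (vf (a i)) (hrange i)).1
  -- nonnegativity of Ltilmax
  have hmargle : ∀ i (j : Fin d), (μs i).marg j ≤ 1 := by
    intro i j
    calc (μs i).marg j ≤ ∑ S : Finset (Fin d), (μs i).prob S :=
          Finset.sum_le_sum fun S _ => by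
            by_cases hj : j ∈ S <;> simp [Sampling.marg, hj, (μs i).nonneg S]
      _ = 1 := (μs i).total
  have hLtle : ∀ i, lambdaMax (Matrix.hadamard (μs i).Ptilde (Li i)) ≤ Ltilmax := by
    intro i
    rw [hLtilmax]
    exact le_ciSup (f := fun i => lambdaMax (Matrix.hadamard (μs i).Ptilde (Li i)))
      (Set.Finite.bddAbove (Set.finite_range _)) i
  have hLt0 : 0 ≤ Ltilmax := by
    rcases Nat.eq_zero_or_pos d with hd | hd
    · subst hd
      rw [hLtilmax]
      have hz : (fun i : Fin n => lambdaMax (Matrix.hadamard (μs i).Ptilde (Li i)))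
          = fun _ => (0 : ℝ) := funext fun i => lambdaMax_dim_zero _
      rw [hz, ciSup_const]
    · set j : Fin d := ⟨0, hd⟩
      set i0 : Fin n := ⟨0, hn⟩
      have hm0 : 0 < (μs i0).marg j := (μs i0).margPos j
      have h1 : (μs i0).Ptilde j j = ((μs i0).marg j)⁻¹ - 1 := by
        have hpm : (μs i0).probMatrix j j = (μs i0).marg j := by
          rw [Sampling.probMatrix, Sampling.marg]
          simp
        rw [Sampling.Ptilde, Matrix.sub_apply, Sampling.Pbar]
        simp only [Matrix.of_apply, hpm]
        rw [div_eq_mul_inv, mul_inv]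
        field_simp
      have h2 : 0 ≤ Li i0 j j := by
        have hq := (hLi i0).dotProduct_mulVec_nonneg (Pi.single j 1)
        simpa [Matrix.mulVec_single, single_dotProduct] using hq
      have h3 : 1 ≤ ((μs i0).marg j)⁻¹ := (one_le_inv₀ hm0).mpr (hmargle i0 j)
      have hdiag : 0 ≤ (Matrix.hadamard (μs i0).Ptilde (Li i0)) j j := by
        rw [Matrix.hadamard_apply, h1]
        exact mul_nonneg (by linarith) h2
      exact le_trans (le_trans hdiag (diag_le_lambdaMax _ j)) (hLtle i0)
  -- per-i second moment bound
  have hbound : ∀ i, ∑ S : Finset (Fin d), (μs i).prob S * (Z i S ⬝ᵥ Z i S)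
      ≤ Ltilmax * (2 * quad (Lidag i) (gradient (fi i) w - gradient (fi i) x)
          + 2 * quad (Lidag i) (gradient (fi i) w - h i)) := by
    intro i
    obtain ⟨-, hSM, hbb⟩ := per_i (μs i) (hLi i) (hLih i).1 (hLih i).2 (hLidag i)
      (hLidh i).1 (hLidh i).2 (vf (a i)) (hrange i)
    set b : Fin d → ℝ := Lidh i *ᵥ vf (a i) with hbdef
    set u1 : Fin d → ℝ := vf (gradient (fi i) w - gradient (fi i) x) with hu1def
    set u2 : Fin d → ℝ := vf (gradient (fi i) w - h i) with hu2def
    have hsplit : vf (a i) = u2 - u1 := by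
      have hvec : a i = (gradient (fi i) w - h i) - (gradient (fi i) w - gradient (fi i) x) := by
        simp only [ha]; abel
      rw [hvec, vf_sub]
    set c1 : Fin d → ℝ := Lidh i *ᵥ u1 with hc1def
    set c2 : Fin d → ℝ := Lidh i *ᵥ u2 with hc2def
    have hq1 : quad (Lidag i) (gradient (fi i) w - gradient (fi i) x) = c1 ⬝ᵥ c1 := by
      rw [quad_eq_dot]
      exact (mulVec_self_dot (psd_symm (hLidh i).1) (hLidh i).2 u1).symm
    have hq2 : quad (Lidag i) (gradient (fi i) w - h i) = c2 ⬝ᵥ c2 := by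
      rw [quad_eq_dot]
      exact (mulVec_self_dot (psd_symm (hLidh i).1) (hLidh i).2 u2).symm
    have hbc : b = c2 - c1 := by rw [hbdef, hsplit, Matrix.mulVec_sub]
    have hbchain : b ⬝ᵥ b ≤ 2 * quad (Lidag i) (gradient (fi i) w - gradient (fi i) x)
        + 2 * quad (Lidag i) (gradient (fi i) w - h i) := by
      rw [hbc, hq1, hq2]
      exact dot_two_bound c1 c2
    calc ∑ S : Finset (Fin d), (μs i).prob S * (Z i S ⬝ᵥ Z i S)
        = b ⬝ᵥ ((Matrix.hadamard (μs i).Ptilde (Li i)) *ᵥ b) := hSM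
      _ ≤ lambdaMax (Matrix.hadamard (μs i).Ptilde (Li i)) * (b ⬝ᵥ b) := rayleigh_le _ b
      _ ≤ Ltilmax * (b ⬝ᵥ b) := mul_le_mul_of_nonneg_right (hLtle i) (dot_self_nonneg' b)
      _ ≤ Ltilmax * (2 * quad (Lidag i) (gradient (fi i) w - gradient (fi i) x)
            + 2 * quad (Lidag i) (gradient (fi i) w - h i)) :=
          mul_le_mul_of_nonneg_left hbchain hLt0
  -- expectation assembly
  have hgradf : gradient f x = (1 / (n : ℝ)) • ∑ i, gradient (fi i) x :=
    gradient_avg fi (fun i => (hfi i).1) _ f hf x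
  have hvdiff : ∀ ω : Fin n → Finset (Fin d),
      vf (g ω - gradient f x) = (1 / (n : ℝ)) • ∑ i, Z i (ω i) := by
    intro ω
    rw [hg, hgradf]
    show vf ((1 / (n : ℝ)) •
        (∑ i, (mact (Lih i * (μs i).sketch (ω i) * Lidh i) (a i) + h i))
        - (1 / (n : ℝ)) • ∑ i, gradient (fi i) x) = _
    rw [← smul_sub, ← Finset.sum_sub_distrib, vf_smul, vf_sum]
    congr 1
    apply Finset.sum_congr rfl
    intro i _
    have hvec : mact (Lih i * (μs i).sketch (ω i) * Lidh i) (a i) + h i - gradient (fi i) x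
        = mact (Lih i * (μs i).sketch (ω i) * Lidh i) (a i) - a i := by
      simp only [ha]; abel
    rw [hvec, vf_sub, mact_eq]
  have hnorm : ∀ ω : Fin n → Finset (Fin d), ‖g ω - gradient f x‖ ^ 2
      = (1 / (n : ℝ)) ^ 2 * ∑ i, ∑ k, Z i (ω i) ⬝ᵥ Z k (ω k) := by
    intro ω
    rw [norm_sq_dot, hvdiff ω, smul_dotProduct, dotProduct_smul, smul_eq_mul, smul_eq_mul,
      sum_dot' Finset.univ]
    rw [Finset.sum_congr rfl fun i _ => dot_sum' Finset.univ (Z i (ω i)) (fun k => Z k (ω k))]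
    ring
  have hE : ∀ i k, (∑ ω : Fin n → Finset (Fin d),
        (∏ j, (μs j).prob (ω j)) * (Z i (ω i) ⬝ᵥ Z k (ω k)))
      = if i = k then ∑ S : Finset (Fin d), (μs i).prob S * (Z i S ⬝ᵥ Z i S) else 0 := by
    intro i k
    rcases eq_or_ne i k with rfl | hik
    · rw [if_pos rfl]
      exact marg_one (fun j => (μs j).prob) htot i (fun S => Z i S ⬝ᵥ Z i S)
    · rw [if_neg hik]
      have hsum : ∀ ω : Fin n → Finset (Fin d),
          (∏ j, (μs j).prob (ω j)) * (Z i (ω i) ⬝ᵥ Z k (ω k))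
            = ∑ t, (∏ j, (μs j).prob (ω j)) * (Z i (ω i) t * Z k (ω k) t) := by
        intro ω; rw [dotProduct, Finset.mul_sum]
      rw [Finset.sum_congr rfl fun ω _ => hsum ω, Finset.sum_comm]
      have hft : ∀ t, (∑ ω : Fin n → Finset (Fin d),
            (∏ j, (μs j).prob (ω j)) * (Z i (ω i) t * Z k (ω k) t))
          = (∑ S, (μs i).prob S * Z i S t) * (∑ S, (μs k).prob S * Z k S t) :=
        fun t => marg_two (fun j => (μs j).prob) htot i k hik
          (fun S => Z i S t) (fun S => Z k S t)
      rw [Finset.sum_congr rfl fun t _ => hft t]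
      have hz : ∀ (m : Fin n) t, (∑ S : Finset (Fin d), (μs m).prob S * Z m S t) = 0 := by
        intro m t
        have hc := congrFun (hEZ m) t
        simpa [Finset.sum_apply, Pi.smul_apply, smul_eq_mul] using hc
      simp [hz]
  have hstep : ∀ ω : Fin n → Finset (Fin d),
      (∏ j, (μs j).prob (ω j)) * ((1 / (n : ℝ)) ^ 2 * ∑ i, ∑ k, Z i (ω i) ⬝ᵥ Z k (ω k))
        = (1 / (n : ℝ)) ^ 2 * ∑ i, ∑ k,
            (∏ j, (μs j).prob (ω j)) * (Z i (ω i) ⬝ᵥ Z k (ω k)) := by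
    intro ω
    rw [mul_left_comm]
    congr 1
    rw [Finset.mul_sum]
    exact Finset.sum_congr rfl fun i _ => Finset.mul_sum _ _ _
  have hsplit2 : ∑ i, Ltilmax * (2 * quad (Lidag i) (gradient (fi i) w - gradient (fi i) x)
        + 2 * quad (Lidag i) (gradient (fi i) w - h i))
      = 2 * Ltilmax * (∑ i, quad (Lidag i) (gradient (fi i) w - gradient (fi i) x))
        + 2 * Ltilmax * (∑ i, quad (Lidag i) (gradient (fi i) w - h i)) := by
    rw [Finset.mul_sum, Finset.mul_sum, ← Finset.sum_add_distrib]
    apply Finset.sum_congr rfl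
    intros
    ring
  calc (∑ ω : Fin n → Finset (Fin d), (∏ i, (μs i).prob (ω i)) * ‖g ω - gradient f x‖ ^ 2)
      = ∑ ω : Fin n → Finset (Fin d), (1 / (n : ℝ)) ^ 2 * ∑ i, ∑ k,
          (∏ j, (μs j).prob (ω j)) * (Z i (ω i) ⬝ᵥ Z k (ω k)) := by
        apply Finset.sum_congr rfl
        intro ω _
        rw [hnorm ω, hstep ω]
    _ = (1 / (n : ℝ)) ^ 2 * ∑ i, ∑ k, ∑ ω : Fin n → Finset (Fin d),
          (∏ j, (μs j).prob (ω j)) * (Z i (ω i) ⬝ᵥ Z k (ω k)) := by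
        rw [← Finset.mul_sum]
        congr 1
        rw [Finset.sum_comm]
        exact Finset.sum_congr rfl fun i _ => Finset.sum_comm
    _ = (1 / (n : ℝ)) ^ 2 * ∑ i, ∑ S : Finset (Fin d), (μs i).prob S * (Z i S ⬝ᵥ Z i S) := by
        congr 1
        apply Finset.sum_congr rfl
        intro i _
        rw [Finset.sum_congr rfl fun k _ => hE i k]
        simp
    _ ≤ (1 / (n : ℝ)) ^ 2 * ∑ i, Ltilmax *
          (2 * quad (Lidag i) (gradient (fi i) w - gradient (fi i) x)
            + 2 * quad (Lidag i) (gradient (fi i) w - h i)) :=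
        mul_le_mul_of_nonneg_left (Finset.sum_le_sum fun i _ => hbound i) (by positivity)
    _ = (2 * Ltilmax / (n : ℝ) ^ 2)
            * ∑ i, quad (Lidag i) (gradient (fi i) w - gradient (fi i) x)
          + (2 * Ltilmax / (n : ℝ))
            * ((1 / (n : ℝ)) * ∑ i, quad (Lidag i) (gradient (fi i) w - h i)) := by
        rw [hsplit2]
        field_simp

end
end

section
/- Let L be a symmetric positive semidefinite d×d real matrix, let S be a proper sampling on {1,…,d} with sketch C and marginals p_j, set ω = max_j (1/p_j) − 1 and C̄ = L^{1/2} C L^{†1/2}. Then for every α with 0 ≤ α ≤ 1/(1 + ω), in the Loewner order: L^{1/2} E[ (I − α C̄)ᵀ L† (I − α C̄) ] L^{1/2} ⪯ (1 − α) · L^{1/2} L† L^{1/2}. -/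
open scoped BigOperators RealInnerProductSpace
open Matrix

noncomputable section

private lemma psd_smul {n : ℕ} {M : Matrix (Fin n) (Fin n) ℝ} (hM : M.PosSemidef)
    {c : ℝ} (hc : 0 ≤ c) : (c • M).PosSemidef := by
  constructor
  · have h1 : (c • M)ᴴ = c • Mᴴ := by rw [Matrix.conjTranspose_smul, star_trivial]
    rw [Matrix.IsHermitian, h1, hM.1]
  · intro x
    exact (hM.smul hc).2 x

private lemma psd_sum {n : ℕ} {ι : Type*} {s : Finset ι} {f : ι → Matrix (Fin n) (Fin n) ℝ}
    (h : ∀ i ∈ s, (f i).PosSemidef) : (∑ i ∈ s, f i).PosSemidef :=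
  Finset.sum_induction f _ (fun _ _ ha hb => ha.add hb) Matrix.PosSemidef.zero h

private lemma mp_unique {n : ℕ} (M X Y : Matrix (Fin n) (Fin n) ℝ)
    (hX : IsMoorePenrose M X) (hY : IsMoorePenrose M Y) : X = Y := by
  obtain ⟨a1, a2, a3, a4⟩ := hX
  obtain ⟨b1, b2, b3, b4⟩ := hY
  have hMXY : M * X = M * Y := by
    calc M * X = M * Y * M * X := by rw [b1]
      _ = (M * Y) * (M * X) := by rw [mul_assoc (M * Y) M X]
      _ = (M * Y)ᵀ * (M * X)ᵀ := by rw [b3, a3]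
      _ = ((M * X) * (M * Y))ᵀ := (Matrix.transpose_mul _ _).symm
      _ = (M * Y)ᵀ := by rw [← mul_assoc, a1]
      _ = M * Y := b3
  have hXYM : X * M = Y * M := by
    calc X * M = X * (M * Y * M) := by rw [b1]
      _ = X * (M * Y) * M := by rw [← mul_assoc]
      _ = X * M * Y * M := by rw [← mul_assoc]
      _ = (X * M)ᵀ * (Y * M)ᵀ := by rw [a4, b4, mul_assoc (X * M) Y M]
      _ = ((Y * M) * (X * M))ᵀ := (Matrix.transpose_mul _ _).symm
      _ = (Y * (M * X * M))ᵀ := by rw [← mul_assoc, mul_assoc Y M X, mul_assoc Y (M * X) M]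
      _ = (Y * M)ᵀ := by rw [a1]
      _ = Y * M := b4
  calc X = X * M * X := a2.symm
    _ = Y * M * X := by rw [hXYM]
    _ = Y * (M * X) := by rw [mul_assoc]
    _ = Y * (M * Y) := by rw [hMXY]
    _ = Y * M * Y := by rw [← mul_assoc]
    _ = Y := b2

/-- for `0 ≤ α ≤ 1/(1+ω)` with `ω = max_j 1/p_j − 1` and
`C̄ = L^{1/2} C L^{†1/2}`, in the Loewner order
`L^{1/2} E[(I − αC̄)ᵀ L† (I − αC̄)] L^{1/2} ⪯ (1 − α) L^{1/2} L† L^{1/2}`. -/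
theorem statement14 {d : ℕ} (hd : 0 < d) (μ : Sampling d)
    (L Lh Ldag Ldh : Matrix (Fin d) (Fin d) ℝ)
    (hL : L.PosSemidef) (hLh : Lh.PosSemidef) (hLh2 : Lh * Lh = L)
    (hdag : IsMoorePenrose L Ldag) (hLdh : Ldh.PosSemidef) (hLdh2 : Ldh * Ldh = Ldag)
    (ω : ℝ) (hω : ω = (⨆ j : Fin d, (μ.marg j)⁻¹) - 1)
    (α : ℝ) (hα0 : 0 ≤ α) (hα1 : α ≤ 1 / (1 + ω)) :
    ((1 - α) • (Lh * Ldag * Lh)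
      - ∑ S : Finset (Fin d), μ.prob S •
          (Lh * (1 - α • (Lh * μ.sketch S * Ldh))ᵀ * Ldag
            * (1 - α • (Lh * μ.sketch S * Ldh)) * Lh)).PosSemidef := by
  classical
  -- conjugate transpose is transpose over ℝ
  have hct : ∀ (A : Matrix (Fin d) (Fin d) ℝ), Aᴴ = Aᵀ := fun A => Matrix.ext fun i j => star_trivial _
  have hLhh : Lhᴴ = Lh := hLh.1
  have hLdhh : Ldhᴴ = Ldh := hLdh.1
  have hLht : Lhᵀ = Lh := by rw [← hct]; exact hLhh
  have hLdht : Ldhᵀ = Ldh := by rw [← hct]; exact hLdhh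
  have hLt : Lᵀ = L := by rw [← hct]; exact hL.1
  have hLdagt : Ldagᵀ = Ldag := by rw [← hLdh2, Matrix.transpose_mul, hLdht]
  have hLdagh : Ldagᴴ = Ldag := by rw [hct]; exact hLdagt
  obtain ⟨hd1, hd2, hd3, hd4⟩ := hdag
  have hcommP : Ldag * L = L * Ldag := by
    calc Ldag * L = (Ldag * L)ᵀ := hd4.symm
      _ = Lᵀ * Ldagᵀ := Matrix.transpose_mul _ _
      _ = L * Ldag := by rw [hLt, hLdagt]
  -- basic absorption identities
  have g1' : L * (Ldag * L) = L := by rw [← mul_assoc]; exact hd1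
  have g2' : Ldag * (L * Ldag) = Ldag := by rw [← mul_assoc]; exact hd2
  have g1 : ∀ X : Matrix (Fin d) (Fin d) ℝ, L * (Ldag * (L * X)) = L * X := by
    intro X; rw [← mul_assoc, ← mul_assoc, hd1]
  have g2 : ∀ X : Matrix (Fin d) (Fin d) ℝ, Ldag * (L * (Ldag * X)) = Ldag * X := by
    intro X; rw [← mul_assoc, ← mul_assoc, hd2]
  have s1' : Lh * Lh = L := hLh2
  have s2' : Ldh * Ldh = Ldag := hLdh2
  have s1 : ∀ X : Matrix (Fin d) (Fin d) ℝ, Lh * (Lh * X) = L * X := by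
    intro X; rw [← mul_assoc, hLh2]
  have s2 : ∀ X : Matrix (Fin d) (Fin d) ℝ, Ldh * (Ldh * X) = Ldag * X := by
    intro X; rw [← mul_assoc, hLdh2]
  have hPhh : (Ldag * L)ᴴ = L * Ldag := by
    rw [hct, Matrix.transpose_mul, hLt, hLdagt]
  have hPhh' : (L * Ldag)ᴴ = Ldag * L := by
    rw [hct, Matrix.transpose_mul, hLt, hLdagt, hcommP]
  -- Lh is absorbed by the projector L * Ldag
  have hLhP' : Lh * (Ldag * L) = Lh := by
    have hz : (Lh - Lh * (Ldag * L))ᴴ * (Lh - Lh * (Ldag * L)) = 0 := by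
      rw [Matrix.conjTranspose_sub, Matrix.conjTranspose_mul, hLhh, hPhh]
      rw [Matrix.sub_mul, Matrix.mul_sub, Matrix.mul_sub]
      simp only [mul_assoc, s1, s1', g1, g1', sub_self, sub_zero]
    have h0 := Matrix.conjTranspose_mul_self_eq_zero.mp hz
    have := sub_eq_zero.mp h0
    exact this.symm
  have hPLh : (L * Ldag) * Lh = Lh := by
    have h := congrArg Matrix.conjTranspose hLhP'
    rwa [Matrix.conjTranspose_mul, hLhh, hPhh] at h
  have hLhP : Lh * (L * Ldag) = Lh := by rw [← hcommP]; exact hLhP'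
  -- Ldh is absorbed by the projector
  have hLdhP : Ldh * (L * Ldag) = Ldh := by
    have hz : (Ldh - Ldh * (L * Ldag))ᴴ * (Ldh - Ldh * (L * Ldag)) = 0 := by
      rw [Matrix.conjTranspose_sub, Matrix.conjTranspose_mul, hLdhh, hPhh']
      rw [Matrix.sub_mul, Matrix.mul_sub, Matrix.mul_sub]
      simp only [mul_assoc, s2, s2', g2, g2', sub_self, sub_zero]
    have h0 := Matrix.conjTranspose_mul_self_eq_zero.mp hz
    exact (sub_eq_zero.mp h0).symm
  have hPLdh : (L * Ldag) * Ldh = Ldh := by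
    have h := congrArg Matrix.conjTranspose hLdhP
    rwa [Matrix.conjTranspose_mul, hLdhh, hPhh', hcommP] at h
  -- both Lh * Ldag and Ldag * Lh are Moore-Penrose pseudoinverses of Lh
  have hpinv1 : IsMoorePenrose Lh (Lh * Ldag) := by
    refine ⟨?_, ?_, ?_, ?_⟩
    · simp only [mul_assoc]; rw [s1, ← mul_assoc]; exact hPLh
    · simp only [mul_assoc]; rw [s1, g2']
    · rw [← mul_assoc, hLh2]; exact hd3
    · rw [Matrix.transpose_mul, Matrix.transpose_mul, hLht, hLdagt, ← mul_assoc]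
  have hpinv2 : IsMoorePenrose Lh (Ldag * Lh) := by
    refine ⟨?_, ?_, ?_, ?_⟩
    · simp only [mul_assoc]; rw [hLh2]; exact hLhP'
    · simp only [mul_assoc]; rw [s1, g2]
    · rw [Matrix.transpose_mul, Matrix.transpose_mul, hLht, hLdagt, mul_assoc]
    · rw [mul_assoc, hLh2]; exact hd4
  have hcomm : Lh * Ldag = Ldag * Lh := mp_unique Lh _ _ hpinv1 hpinv2
  -- Lh * Ldag is the psd square root of Ldag, hence equals Ldh
  have hXh : (Lh * Ldag)ᴴ = Lh * Ldag := by
    rw [Matrix.conjTranspose_mul, hLdagh, hLhh, hcomm]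
  have hXpsd : (Lh * Ldag).PosSemidef := by
    have h := hLh.mul_mul_conjTranspose_same (Lh * Ldag)
    rw [hXh] at h
    rwa [hpinv1.2.1] at h
  have hXX : (Lh * Ldag) * (Lh * Ldag) = Ldag := by
    calc (Lh * Ldag) * (Lh * Ldag) = Lh * ((Ldag * Lh) * Ldag) := by simp only [mul_assoc]
      _ = Lh * ((Lh * Ldag) * Ldag) := by rw [hcomm]
      _ = Lh * (Lh * (Ldag * Ldag)) := by rw [mul_assoc]
      _ = L * (Ldag * Ldag) := by rw [s1]
      _ = (L * Ldag) * Ldag := by rw [← mul_assoc]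
      _ = (Ldag * L) * Ldag := by rw [hcommP]
      _ = Ldag := hd2
  have hLhLdag : Lh * Ldag = Ldh := by
    refine (open scoped MatrixOrder Matrix.Norms.L2Operator in
      (CFC.sq_eq_sq_iff (Lh * Ldag) Ldh hXpsd.nonneg hLdh.nonneg).mp ?_)
    rw [pow_two, pow_two, hXX, hLdh2]
  -- introduce the projector P
  obtain ⟨P, hP⟩ : ∃ P : Matrix (Fin d) (Fin d) ℝ, P = L * Ldag := ⟨_, rfl⟩
  have k3' : Lh * Ldag = Ldh := hLhLdag
  have k1' : Lh * Ldh = P := by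
    rw [hP, ← hLhLdag, ← mul_assoc, hLh2]
  have k2' : Ldh * Lh = P := by
    rw [hP, ← hLhLdag, hcomm, mul_assoc, hLh2, hcommP]
  have k4' : P * P = P := by rw [hP, mul_assoc, g2']
  have k1 : ∀ X : Matrix (Fin d) (Fin d) ℝ, Lh * (Ldh * X) = P * X := by
    intro X; rw [← mul_assoc, k1']
  have k2 : ∀ X : Matrix (Fin d) (Fin d) ℝ, Ldh * (Lh * X) = P * X := by
    intro X; rw [← mul_assoc, k2']
  have k3 : ∀ X : Matrix (Fin d) (Fin d) ℝ, Lh * (Ldag * X) = Ldh * X := by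
    intro X; rw [← mul_assoc, k3']
  have k4 : ∀ X : Matrix (Fin d) (Fin d) ℝ, P * (P * X) = P * X := by
    intro X; rw [← mul_assoc, k4']
  have hPh : Pᴴ = P := by rw [hP, hPhh', hcommP]
  have hPpsd : P.PosSemidef := by
    have h := Matrix.posSemidef_conjTranspose_mul_self P
    rwa [hPh, k4'] at h
  have h1mP : ((1 : Matrix (Fin d) (Fin d) ℝ) - P).PosSemidef := by
    have h := Matrix.posSemidef_conjTranspose_mul_self ((1 : Matrix (Fin d) (Fin d) ℝ) - P)
    rw [Matrix.conjTranspose_sub, Matrix.conjTranspose_one, hPh] at h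
    have e : ((1 : Matrix (Fin d) (Fin d) ℝ) - P) * (1 - P) = 1 - P := by
      simp only [mul_sub, sub_mul, mul_one, one_mul, k4']
      abel
    rwa [e] at h
  have hQ0 : Lh * Ldag * Lh = P := by rw [hLhLdag, k2']
  -- scalar facts
  have hm : ∀ j : Fin d, 0 < μ.marg j := fun j => μ.margPos j
  have hm1 : ∀ j : Fin d, μ.marg j ≤ 1 := by
    intro j
    rw [← μ.total]
    refine Finset.sum_le_sum fun S _ => ?_
    split
    · exact le_rfl
    · exact μ.nonneg S
  have h1ω : 1 + ω = ⨆ j : Fin d, (μ.marg j)⁻¹ := by rw [hω]; ring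
  have hbdd : BddAbove (Set.range fun j : Fin d => (μ.marg j)⁻¹) :=
    (Set.finite_range _).bddAbove
  have hsup : ∀ j : Fin d, (μ.marg j)⁻¹ ≤ 1 + ω := by
    intro j; rw [h1ω]; exact le_ciSup hbdd j
  have hω0 : (0 : ℝ) < 1 + ω := by
    have j0 : Fin d := ⟨0, hd⟩
    have h1 : (1 : ℝ) ≤ (μ.marg j0)⁻¹ := by
      have := mul_inv_cancel₀ (hm j0).ne'
      nlinarith [inv_pos.mpr (hm j0), hm1 j0]
    have := hsup j0
    linarith
  have hαω : α * (1 + ω) ≤ 1 := by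
    rw [le_div_iff₀ hω0] at hα1
    linarith
  have hc0 : 0 ≤ α - α * α * (1 + ω) := by nlinarith
  -- expectation of sketch is identity
  have hsum1 : ∑ S : Finset (Fin d), μ.prob S • μ.sketch S = (1 : Matrix (Fin d) (Fin d) ℝ) := by
    ext i j
    rw [Matrix.sum_apply]
    by_cases hij : i = j
    · subst hij
      rw [Matrix.one_apply_eq]
      calc ∑ S : Finset (Fin d), (μ.prob S • μ.sketch S) i i
          = ∑ S : Finset (Fin d), (if i ∈ S then μ.prob S else 0) * (μ.marg i)⁻¹ := by
            refine Finset.sum_congr rfl fun S _ => ?_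
            by_cases hiS : i ∈ S <;>
              simp [Sampling.sketch, Matrix.smul_apply, Matrix.diagonal_apply_eq, hiS]
        _ = (∑ S : Finset (Fin d), if i ∈ S then μ.prob S else 0) * (μ.marg i)⁻¹ :=
            (Finset.sum_mul _ _ _).symm
        _ = μ.marg i * (μ.marg i)⁻¹ := rfl
        _ = 1 := mul_inv_cancel₀ (hm i).ne'
    · rw [Matrix.one_apply_ne hij]
      refine Finset.sum_eq_zero fun S _ => ?_
      simp [Sampling.sketch, Matrix.smul_apply, Matrix.diagonal_apply_ne _ hij]
  -- second moment of the sketch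
  have hCC : ∑ S : Finset (Fin d), μ.prob S • (μ.sketch S * μ.sketch S)
      = Matrix.diagonal (fun j => (μ.marg j)⁻¹) := by
    ext i j
    rw [Matrix.sum_apply]
    by_cases hij : i = j
    · subst hij
      rw [Matrix.diagonal_apply_eq]
      calc ∑ S : Finset (Fin d), (μ.prob S • (μ.sketch S * μ.sketch S)) i i
          = ∑ S : Finset (Fin d), (if i ∈ S then μ.prob S else 0) * ((μ.marg i)⁻¹ * (μ.marg i)⁻¹) := by
            refine Finset.sum_congr rfl fun S _ => ?_
            by_cases hiS : i ∈ S <;>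
              simp [Sampling.sketch, Matrix.smul_apply, Matrix.diagonal_mul_diagonal,
                Matrix.diagonal_apply_eq, hiS]
        _ = (∑ S : Finset (Fin d), if i ∈ S then μ.prob S else 0) * ((μ.marg i)⁻¹ * (μ.marg i)⁻¹) :=
            (Finset.sum_mul _ _ _).symm
        _ = μ.marg i * ((μ.marg i)⁻¹ * (μ.marg i)⁻¹) := rfl
        _ = (μ.marg i)⁻¹ := by
            rw [← mul_assoc, mul_inv_cancel₀ (hm i).ne', one_mul]
    · rw [Matrix.diagonal_apply_ne _ hij]
      refine Finset.sum_eq_zero fun S _ => ?_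
      simp [Sampling.sketch, Matrix.smul_apply, Matrix.diagonal_mul_diagonal,
        Matrix.diagonal_apply_ne _ hij]
  -- the per-realization identity
  have key : ∀ S : Finset (Fin d),
      Lh * (1 - α • (Lh * μ.sketch S * Ldh))ᵀ * Ldag * (1 - α • (Lh * μ.sketch S * Ldh)) * Lh
        = P - (2 * α) • (P * (μ.sketch S * P))
          + (α * α) • (P * (μ.sketch S * (P * (μ.sketch S * P)))) := by
    intro S
    have hCt : (μ.sketch S)ᵀ = μ.sketch S := Matrix.diagonal_transpose _
    rw [Matrix.transpose_sub, Matrix.transpose_smul, Matrix.transpose_one,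
      Matrix.transpose_mul, Matrix.transpose_mul, hCt, hLht, hLdht]
    simp only [sub_mul, mul_sub, mul_one, one_mul, smul_mul_assoc, mul_smul_comm, smul_smul,
      smul_sub, mul_assoc]
    simp only [k3, k3', k2, k2', k1, k1', k4, k4']
    module
  -- sum it all up
  have hsumT : ∑ S : Finset (Fin d), μ.prob S •
        (Lh * (1 - α • (Lh * μ.sketch S * Ldh))ᵀ * Ldag
          * (1 - α • (Lh * μ.sketch S * Ldh)) * Lh)
      = P - (2 * α) • P
        + (α * α) • (P * ((∑ S : Finset (Fin d), μ.prob S • (μ.sketch S * (P * μ.sketch S))) * P)) := by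
    calc ∑ S : Finset (Fin d), μ.prob S •
          (Lh * (1 - α • (Lh * μ.sketch S * Ldh))ᵀ * Ldag
            * (1 - α • (Lh * μ.sketch S * Ldh)) * Lh)
        = ∑ S : Finset (Fin d),
            (μ.prob S • P - (2 * α) • (P * ((μ.prob S • μ.sketch S) * P))
              + (α * α) • (P * ((μ.prob S • (μ.sketch S * (P * μ.sketch S))) * P))) := by
          refine Finset.sum_congr rfl fun S _ => ?_
          rw [key S]
          simp only [smul_sub, smul_add, smul_smul, smul_mul_assoc, mul_smul_comm, mul_assoc]
          module
      _ = (∑ S : Finset (Fin d), μ.prob S • P)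
            - (∑ S : Finset (Fin d), (2 * α) • (P * ((μ.prob S • μ.sketch S) * P)))
            + (∑ S : Finset (Fin d), (α * α) • (P * ((μ.prob S • (μ.sketch S * (P * μ.sketch S))) * P))) := by
          rw [Finset.sum_add_distrib, Finset.sum_sub_distrib]
      _ = P - (2 * α) • P
            + (α * α) • (P * ((∑ S : Finset (Fin d), μ.prob S • (μ.sketch S * (P * μ.sketch S))) * P)) := by
          rw [← Finset.sum_smul, μ.total, one_smul, ← Finset.smul_sum, ← Finset.smul_sum,
            ← Finset.mul_sum, ← Finset.mul_sum, ← Finset.sum_mul, ← Finset.sum_mul,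
            hsum1, one_mul, k4']
  rw [hQ0, hsumT]
  set MM := ∑ S : Finset (Fin d), μ.prob S • (μ.sketch S * (P * μ.sketch S)) with hMMdef
  have split : (1 - α) • P - (P - (2 * α) • P + (α * α) • (P * (MM * P)))
      = (α - α * α * (1 + ω)) • P + (α * α) • ((1 + ω) • P - P * (MM * P)) := by
    module
  rw [split]
  -- inner bound : (1 + ω) • 1 - MM is psd
  have hinner : ((1 + ω) • (1 : Matrix (Fin d) (Fin d) ℝ) - MM).PosSemidef := by
    have hdiagA : (1 + ω) • (1 : Matrix (Fin d) (Fin d) ℝ)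
        - Matrix.diagonal (fun j => (μ.marg j)⁻¹)
        = Matrix.diagonal (fun j => (1 + ω) - (μ.marg j)⁻¹) := by
      ext i j
      by_cases hij : i = j
      · subst hij
        simp [Matrix.sub_apply, Matrix.smul_apply, Matrix.one_apply_eq,
          Matrix.diagonal_apply_eq]
      · simp [Matrix.sub_apply, Matrix.smul_apply, Matrix.one_apply_ne hij,
          Matrix.diagonal_apply_ne _ hij]
    have h1' : ∑ S : Finset (Fin d), μ.prob S • (μ.sketch S * ((1 - P) * μ.sketch S))
        = Matrix.diagonal (fun j => (μ.marg j)⁻¹) - MM := by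
      calc ∑ S : Finset (Fin d), μ.prob S • (μ.sketch S * ((1 - P) * μ.sketch S))
          = ∑ S : Finset (Fin d),
              (μ.prob S • (μ.sketch S * μ.sketch S) - μ.prob S • (μ.sketch S * (P * μ.sketch S))) := by
            refine Finset.sum_congr rfl fun S _ => ?_
            rw [sub_mul, one_mul, mul_sub, smul_sub]
        _ = (∑ S : Finset (Fin d), μ.prob S • (μ.sketch S * μ.sketch S))
            - ∑ S : Finset (Fin d), μ.prob S • (μ.sketch S * (P * μ.sketch S)) :=
            Finset.sum_sub_distrib _ _
        _ = Matrix.diagonal (fun j => (μ.marg j)⁻¹) - MM := by rw [hCC, hMMdef]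
    have hsplit2 : (1 + ω) • (1 : Matrix (Fin d) (Fin d) ℝ) - MM
        = Matrix.diagonal (fun j => (1 + ω) - (μ.marg j)⁻¹)
          + ∑ S : Finset (Fin d), μ.prob S • (μ.sketch S * ((1 - P) * μ.sketch S)) := by
      rw [h1', ← hdiagA]; abel
    rw [hsplit2]
    refine Matrix.PosSemidef.add ?_ (psd_sum fun S _ => ?_)
    · exact Matrix.PosSemidef.diagonal fun j => sub_nonneg.mpr (hsup j)
    · refine psd_smul ?_ (μ.nonneg S)
      have hCh : (μ.sketch S)ᴴ = μ.sketch S := by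
        rw [hct]; exact Matrix.diagonal_transpose _
      have h := h1mP.conjTranspose_mul_mul_same (μ.sketch S)
      rwa [hCh, mul_assoc] at h
  have hconj : ((1 + ω) • P - P * (MM * P)).PosSemidef := by
    have h2 := hinner.conjTranspose_mul_mul_same P
    rw [hPh] at h2
    have e2 : P * ((1 + ω) • (1 : Matrix (Fin d) (Fin d) ℝ) - MM) * P
        = (1 + ω) • P - P * (MM * P) := by
      rw [mul_sub, sub_mul, mul_smul_comm, mul_one, smul_mul_assoc, k4', mul_assoc]
    rwa [e2] at h2
  exact (psd_smul hPpsd hc0).add (psd_smul hconj (mul_nonneg hα0 hα0))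

end
end

section
/- (ISEGA+ control-variate recursion.) Let f_1, …, f_n : ℝ^d → ℝ be differentiable, convex, bounded below and L_i-smooth for symmetric positive semidefinite matrices L_i, and f = (1/n) Σ_i f_i. Let C_1, …, C_n be sketches of proper samplings S_i with marginals p_{i;j} and let D_i = Diag(p_{i;1}, …, p_{i;d}). For vectors φ_1, …, φ_n ∈ ℝ^d, define the updates φ_i⁺ = φ_i + D_i C_i ( L_i^{†1/2} ∇f_i(x) − φ_i ). Then for all x, y ∈ ℝ^d: E[ (1/n) Σ_{i=1}^n ‖φ_i⁺ − L_i^{†1/2} ∇f_i(y)‖²_{D_i^{-1}} ] ≤ (1/n) Σ_{i=1}^n ‖φ_i − L_i^{†1/2} ∇f_i(y)‖²_{D_i^{-1} − I} + 2 D_f(x, y), where D_f(x,y) = f(x) − f(y) − ⟨∇f(y), x − y⟩. -/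
open scoped BigOperators RealInnerProductSpace
open Matrix

noncomputable section

section AuxLemmas
open Finset
variable {d : ℕ}

lemma mact_apply (M : Matrix (Fin d) (Fin d) ℝ) (a : Vec d) (j : Fin d) :
    mact M a j = ∑ l, M j l * a l := by
  simp [mact, Matrix.toEuclideanLin_apply, Matrix.mulVec, dotProduct]

lemma vec_inner_apply (a b : Vec d) : ⟪a, b⟫ = ∑ j, a j * b j := by
  simp [PiLp.inner_apply, RCLike.inner_apply, conj_trivial]
  exact Finset.sum_congr rfl fun _ _ => mul_comm _ _

lemma vec_ext {a b : Vec d} (h : ∀ j, a j = b j) : a = b := PiLp.ext h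

lemma mact_diagonal (w : Fin d → ℝ) (a : Vec d) (j : Fin d) :
    mact (Matrix.diagonal w) a j = w j * a j := by
  simp [mact_apply, Matrix.diagonal_apply, ite_mul]

lemma quad_diagonal (w : Fin d → ℝ) (a : Vec d) :
    quad (Matrix.diagonal w) a = ∑ j, w j * a j ^ 2 := by
  simp only [quad, vec_inner_apply, mact_diagonal]
  exact Finset.sum_congr rfl fun _ _ => by ring

lemma mact_mul (A B : Matrix (Fin d) (Fin d) ℝ) (a : Vec d) :
    mact (A * B) a = mact A (mact B a) := by
  refine vec_ext fun j => ?_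
  simp only [mact_apply, Matrix.mul_apply, Finset.sum_mul, Finset.mul_sum, mul_assoc]
  exact Finset.sum_comm

lemma mact_sub (A : Matrix (Fin d) (Fin d) ℝ) (a b : Vec d) :
    mact A (a - b) = mact A a - mact A b := map_sub _ _ _

lemma inner_mact (M : Matrix (Fin d) (Fin d) ℝ) (a b : Vec d) :
    ⟪a, mact M b⟫ = ⟪mact Mᵀ a, b⟫ := by
  simp only [vec_inner_apply, mact_apply, Matrix.transpose_apply, Finset.mul_sum,
    Finset.sum_mul]
  rw [Finset.sum_comm]
  exact Finset.sum_congr rfl fun j _ => Finset.sum_congr rfl fun l _ => by ring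

lemma quad_mact (M A : Matrix (Fin d) (Fin d) ℝ) (g : Vec d) :
    quad M (mact A g) = quad (Aᵀ * M * A) g := by
  simp only [quad, mact_mul, inner_mact, Matrix.transpose_transpose]

lemma mact_neg (M : Matrix (Fin d) (Fin d) ℝ) (a : Vec d) : mact M (-a) = -(mact M a) :=
  map_neg (Matrix.toEuclideanLin M) a

lemma quad_neg (M : Matrix (Fin d) (Fin d) ℝ) (a : Vec d) : quad M (-a) = quad M a := by
  rw [quad, mact_neg, inner_neg_neg]; rfl

lemma inner_gradient (f : Vec d → ℝ) (y v : Vec d) :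
    ⟪gradient f y, v⟫ = fderiv ℝ f y v :=
  InnerProductSpace.toDual_symm_apply

end AuxLemmas
lemma convex_grad_le {d : ℕ} {f : Vec d → ℝ} (hdiff : Differentiable ℝ f)
    (hconv : ConvexOn ℝ Set.univ f) (y z : Vec d) :
    f y + ⟪gradient f y, z - y⟫ ≤ f z := by
  set A : ℝ →ᵃ[ℝ] Vec d := AffineMap.lineMap y z with hA
  have hφconv : ConvexOn ℝ Set.univ (f ∘ A) := by
    simpa using hconv.comp_affineMap A
  have h0 : A 0 = y := AffineMap.lineMap_apply_zero y z
  have h1 : A 1 = z := AffineMap.lineMap_apply_one y z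
  have hAd : HasDerivAt (fun t : ℝ => A t) (z - y) 0 := by
    have : HasDerivAt (fun t : ℝ => t • (z - y) + y) ((1 : ℝ) • (z - y)) 0 :=
      ((hasDerivAt_id (0 : ℝ)).smul_const (z - y)).add_const y
    simpa [hA, AffineMap.lineMap_apply] using this
  have hder : HasDerivAt (f ∘ A) (fderiv ℝ f y (z - y)) 0 := by
    have hl : HasFDerivAt f (fderiv ℝ f y) (A 0) := by
      rw [h0]; exact (hdiff y).hasFDerivAt
    exact hl.comp_hasDerivAt 0 hAd
  have hs := hφconv.le_slope_of_hasDerivAt (Set.mem_univ (0 : ℝ)) (Set.mem_univ (1 : ℝ))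
    one_pos hder
  rw [slope_def_field] at hs
  simp only [Function.comp_apply, h0, h1] at hs
  rw [inner_gradient]
  have : fderiv ℝ f y (z - y) ≤ f z - f y := by
    simpa using hs
  linarith
lemma key_smooth {d : ℕ} {f : Vec d → ℝ} {L Ldag : Matrix (Fin d) (Fin d) ℝ}
    (hdiff : Differentiable ℝ f) (hconv : ConvexOn ℝ Set.univ f)
    (hsmooth : MSmooth f L) (hMP : Ldag * L * Ldag = Ldag) (hsym : Ldagᵀ = Ldag)
    (x y : Vec d) :
    quad Ldag (gradient f x - gradient f y) ≤ 2 * (f x - f y - ⟪gradient f y, x - y⟫) := by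
  set g : Vec d := gradient f x - gradient f y with hg
  set z : Vec d := x - mact Ldag g with hz
  have hzx : z - x = -(mact Ldag g) := by rw [hz]; abel
  have h1 : f z ≤ f x + ⟪gradient f x, z - x⟫ + (1/2) * quad L (z - x) := hsmooth z x
  have hq : quad L (z - x) = quad Ldag g := by
    rw [hzx, quad_neg, quad_mact, hsym, hMP]
  have h2 : f y + ⟪gradient f y, z - y⟫ ≤ f z := convex_grad_le hdiff hconv y z
  have hzy : z - y = (x - y) - mact Ldag g := by rw [hz]; abel
  have e1 : ⟪gradient f x, z - x⟫ = -⟪gradient f x, mact Ldag g⟫ := by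
    rw [hzx, inner_neg_right]
  have e2 : ⟪gradient f y, z - y⟫ = ⟪gradient f y, x - y⟫ - ⟪gradient f y, mact Ldag g⟫ := by
    rw [hzy, inner_sub_right]
  have e3 : ⟪gradient f x, mact Ldag g⟫ - ⟪gradient f y, mact Ldag g⟫ = quad Ldag g := by
    rw [← inner_sub_left]; rfl
  linarith

lemma exp_sum {n : ℕ} {Ω : Type*} [Fintype Ω] (P : Fin n → Ω → ℝ)
    (hP : ∀ i, ∑ s, P i s = 1) (g : Fin n → Ω → ℝ) :
    ∑ ω : Fin n → Ω, (∏ i, P i (ω i)) * (∑ i, g i (ω i)) = ∑ i, ∑ s, P i s * g i s := by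
  have key : ∀ i : Fin n,
      ∑ ω : Fin n → Ω, (∏ j, P j (ω j)) * g i (ω i) = ∑ s, P i s * g i s := by
    intro i
    calc ∑ ω : Fin n → Ω, (∏ j, P j (ω j)) * g i (ω i)
        = ∑ ω : Fin n → Ω, ∏ j, (P j (ω j) * (if j = i then g i (ω j) else 1)) := by
          refine Finset.sum_congr rfl fun ω _ => ?_
          rw [Finset.prod_mul_distrib]
          congr 1
          simp
      _ = ∏ j, ∑ s, (P j s * (if j = i then g i s else 1)) := by
          rw [Fintype.prod_sum]
      _ = ∑ s, P i s * g i s := by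
          rw [Finset.prod_eq_single_of_mem i (Finset.mem_univ i)]
          · simp
          · intro b _ hb
            simp [hb, hP b]
  calc ∑ ω : Fin n → Ω, (∏ i, P i (ω i)) * (∑ i, g i (ω i))
      = ∑ ω : Fin n → Ω, ∑ i, (∏ j, P j (ω j)) * g i (ω i) := by
        refine Finset.sum_congr rfl fun ω _ => Finset.mul_sum _ _ _
    _ = ∑ i, ∑ ω : Fin n → Ω, (∏ j, P j (ω j)) * g i (ω i) := Finset.sum_comm
    _ = ∑ i, ∑ s, P i s * g i s := Finset.sum_congr rfl fun i _ => key i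
lemma vec_sub_apply {d : ℕ} (a b : Vec d) (j : Fin d) : (a - b) j = a j - b j := rfl
lemma vec_add_apply {d : ℕ} (a b : Vec d) (j : Fin d) : (a + b) j = a j + b j := rfl

lemma quad_diag_sub_one {d : ℕ} (w : Fin d → ℝ) (a : Vec d) :
    quad (Matrix.diagonal w - 1) a = ∑ j, (w j - 1) * a j ^ 2 := by
  have h : Matrix.diagonal w - 1 = Matrix.diagonal (fun j => w j - 1) := by
    rw [← Matrix.diagonal_one, Matrix.diagonal_sub]
  rw [h, quad_diagonal]

lemma sampling_ite {d : ℕ} (μ : Sampling d) (j : Fin d) (X Y : ℝ) :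
    ∑ S : Finset (Fin d), μ.prob S * (if j ∈ S then X else Y)
      = μ.marg j * X + (1 - μ.marg j) * Y := by
  have h1 : (1 : ℝ) - μ.marg j = ∑ S : Finset (Fin d), if j ∈ S then 0 else μ.prob S := by
    rw [← μ.total, Sampling.marg, ← Finset.sum_sub_distrib]
    refine Finset.sum_congr rfl fun S _ => ?_
    split_ifs <;> ring
  calc ∑ S : Finset (Fin d), μ.prob S * (if j ∈ S then X else Y)
      = ∑ S : Finset (Fin d),
          ((if j ∈ S then μ.prob S else 0) * X + (if j ∈ S then 0 else μ.prob S) * Y) := by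
        refine Finset.sum_congr rfl fun S _ => ?_
        split_ifs <;> ring
    _ = (∑ S : Finset (Fin d), if j ∈ S then μ.prob S else 0) * X
        + (∑ S : Finset (Fin d), if j ∈ S then 0 else μ.prob S) * Y := by
        rw [Finset.sum_add_distrib, Finset.sum_mul, Finset.sum_mul]
    _ = μ.marg j * X + (1 - μ.marg j) * Y := by rw [← h1, Sampling.marg]

lemma per_sampling {d : ℕ} (μ : Sampling d) (φ hx hy : Vec d) :
    ∑ S : Finset (Fin d), μ.prob S *
        quad (Matrix.diagonal fun j => (μ.marg j)⁻¹)
          ((φ + mact (Matrix.diagonal μ.marg * μ.sketch S) (hx - φ)) - hy)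
      = quad ((Matrix.diagonal fun j => (μ.marg j)⁻¹) - 1) (φ - hy) + ⟪hx - hy, hx - hy⟫ := by
  have hp : ∀ j, 0 < μ.marg j := μ.margPos
  have step1 : ∀ S : Finset (Fin d),
      quad (Matrix.diagonal fun j => (μ.marg j)⁻¹)
        ((φ + mact (Matrix.diagonal μ.marg * μ.sketch S) (hx - φ)) - hy)
      = ∑ j, (if j ∈ S then (μ.marg j)⁻¹ * (hx j - hy j) ^ 2
          else (μ.marg j)⁻¹ * (φ j - hy j) ^ 2) := by
    intro S
    rw [quad_diagonal]
    refine Finset.sum_congr rfl fun j _ => ?_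
    have hm : Matrix.diagonal μ.marg * μ.sketch S
        = Matrix.diagonal (fun j => μ.marg j * (if j ∈ S then (μ.marg j)⁻¹ else 0)) := by
      rw [Sampling.sketch, Matrix.diagonal_mul_diagonal]
    rw [vec_sub_apply, vec_add_apply, hm, mact_diagonal, vec_sub_apply]
    by_cases hj : j ∈ S
    · rw [if_pos hj, if_pos hj, mul_inv_cancel₀ (hp j).ne']
      ring
    · rw [if_neg hj, if_neg hj]
      ring
  calc ∑ S : Finset (Fin d), μ.prob S *
        quad (Matrix.diagonal fun j => (μ.marg j)⁻¹)
          ((φ + mact (Matrix.diagonal μ.marg * μ.sketch S) (hx - φ)) - hy)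
      = ∑ j, ∑ S : Finset (Fin d), μ.prob S *
          (if j ∈ S then (μ.marg j)⁻¹ * (hx j - hy j) ^ 2
            else (μ.marg j)⁻¹ * (φ j - hy j) ^ 2) := by
        rw [Finset.sum_comm]
        refine Finset.sum_congr rfl fun S _ => ?_
        rw [step1 S, Finset.mul_sum]
    _ = ∑ j, (((μ.marg j)⁻¹ - 1) * (φ j - hy j) ^ 2 + (hx j - hy j) ^ 2) := by
        refine Finset.sum_congr rfl fun j _ => ?_
        rw [sampling_ite]
        have hc : μ.marg j * (μ.marg j)⁻¹ = 1 := mul_inv_cancel₀ (hp j).ne'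
        linear_combination ((hx j - hy j) ^ 2 - (φ j - hy j) ^ 2) * hc
    _ = quad ((Matrix.diagonal fun j => (μ.marg j)⁻¹) - 1) (φ - hy) + ⟪hx - hy, hx - hy⟫ := by
        rw [Finset.sum_add_distrib, quad_diag_sub_one, vec_inner_apply]
        simp only [vec_sub_apply]
        congr 1
        exact Finset.sum_congr rfl fun j _ => pow_two _
lemma mact_one {d : ℕ} (a : Vec d) : mact (1 : Matrix (Fin d) (Fin d) ℝ) a = a := by
  refine vec_ext fun j => ?_
  simp [mact_apply, Matrix.one_apply]

lemma lhs_eq {d n : ℕ} (μs : Fin n → Sampling d) (T : Fin n → Finset (Fin d) → ℝ) (c : ℝ) :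
    ∑ ω : Fin n → Finset (Fin d), (∏ i, (μs i).prob (ω i)) * (c * ∑ i, T i (ω i))
      = c * ∑ i, ∑ S : Finset (Fin d), (μs i).prob S * T i S := by
  calc ∑ ω : Fin n → Finset (Fin d), (∏ i, (μs i).prob (ω i)) * (c * ∑ i, T i (ω i))
      = ∑ ω : Fin n → Finset (Fin d), (∏ i, (μs i).prob (ω i)) * (∑ i, c * T i (ω i)) := by
        refine Finset.sum_congr rfl fun ω _ => ?_
        rw [Finset.mul_sum]
    _ = ∑ i, ∑ S : Finset (Fin d), (μs i).prob S * (c * T i S) :=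
        exp_sum (fun i S => (μs i).prob S) (fun i => (μs i).total) (fun i S => c * T i S)
    _ = c * ∑ i, ∑ S : Finset (Fin d), (μs i).prob S * T i S := by
        rw [Finset.mul_sum]
        refine Finset.sum_congr rfl fun i _ => ?_
        rw [Finset.mul_sum]
        exact Finset.sum_congr rfl fun S _ => by ring
set_option maxHeartbeats 2000000 in
/-- ISEGA+ control-variate recursion. With `D_i = Diag(p_{i;·})` and updates
`φ_i⁺ = φ_i + D_i C_i (L_i^{†1/2} ∇f_i(x) − φ_i)`,
`E[(1/n) Σ_i ‖φ_i⁺ − L_i^{†1/2}∇f_i(y)‖²_{D_i⁻¹}]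
  ≤ (1/n) Σ_i ‖φ_i − L_i^{†1/2}∇f_i(y)‖²_{D_i⁻¹ − I} + 2 D_f(x,y)`. -/
theorem statement15 {d n : ℕ} (hn : 0 < n) (μs : Fin n → Sampling d)
    (fi : Fin n → Vec d → ℝ) (Li Lih Lidag Lidh : Fin n → Matrix (Fin d) (Fin d) ℝ)
    (hLi : ∀ i, (Li i).PosSemidef)
    (hfi : ∀ i, Differentiable ℝ (fi i) ∧ ConvexOn ℝ Set.univ (fi i) ∧
      BddBelow (Set.range (fi i)) ∧ MSmooth (fi i) (Li i))
    (hLih : ∀ i, (Lih i).PosSemidef ∧ Lih i * Lih i = Li i)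
    (hLidag : ∀ i, IsMoorePenrose (Li i) (Lidag i))
    (hLidh : ∀ i, (Lidh i).PosSemidef ∧ Lidh i * Lidh i = Lidag i)
    (f : Vec d → ℝ) (hf : f = fun x => (1 / (n : ℝ)) * ∑ i, fi i x)
    (φv : Fin n → Vec d) (x : Vec d)
    (φplus : Fin n → Finset (Fin d) → Vec d)
    (hφplus : φplus = fun i S =>
      φv i + mact (Matrix.diagonal ((μs i).marg) * (μs i).sketch S)
        (mact (Lidh i) (gradient (fi i) x) - φv i)) :
    ∀ y : Vec d,
      (∑ ω : Fin n → Finset (Fin d), (∏ i, (μs i).prob (ω i)) *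
          ((1 / (n : ℝ)) * ∑ i,
            quad (Matrix.diagonal fun j => ((μs i).marg j)⁻¹)
              (φplus i (ω i) - mact (Lidh i) (gradient (fi i) y))))
        ≤ (1 / (n : ℝ)) * (∑ i,
            quad ((Matrix.diagonal fun j => ((μs i).marg j)⁻¹) - 1)
              (φv i - mact (Lidh i) (gradient (fi i) y)))
          + 2 * (f x - f y - ⟪gradient f y, x - y⟫) := by
  intro y
  have hP : ∀ i, ∑ S : Finset (Fin d), (μs i).prob S = 1 := fun i => (μs i).total
  set hxv : Fin n → Vec d := fun i => mact (Lidh i) (gradient (fi i) x) with hhx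
  set hyv : Fin n → Vec d := fun i => mact (Lidh i) (gradient (fi i) y) with hhy
  set T : Fin n → Finset (Fin d) → ℝ := fun i S =>
    quad (Matrix.diagonal fun j => ((μs i).marg j)⁻¹) (φplus i S - hyv i) with hT
  set Qa : Fin n → ℝ := fun i =>
    quad ((Matrix.diagonal fun j => ((μs i).marg j)⁻¹) - 1) (φv i - hyv i) with hQa
  set u : Fin n → Vec d := fun i => gradient (fi i) x - gradient (fi i) y with hu
  set Df : Fin n → ℝ := fun i => fi i x - fi i y - ⟪gradient (fi i) y, x - y⟫ with hDfi
  -- symmetry facts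
  have hsymh : ∀ i, (Lidh i)ᵀ = Lidh i := fun i => by
    have h := (hLidh i).1.1
    rw [← Matrix.conjTranspose_eq_transpose_of_trivial]
    exact h
  -- step A+B : compute the LHS expectation
  have hLHS : (∑ ω : Fin n → Finset (Fin d), (∏ i, (μs i).prob (ω i)) *
        ((1 / (n : ℝ)) * ∑ i, T i (ω i)))
      = (1 / (n : ℝ)) * ∑ i, (Qa i + ⟪hxv i - hyv i, hxv i - hyv i⟫) := by
    rw [lhs_eq μs T (1 / (n : ℝ))]
    congr 1
    refine Finset.sum_congr rfl fun i _ => ?_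
    simp only [hT, hQa, hφplus]
    exact per_sampling (μs i) (φv i) (hxv i) (hyv i)
  -- the norm term equals quad Lidag u
  have hnorm : ∀ i, ⟪hxv i - hyv i, hxv i - hyv i⟫ = quad (Lidag i) (u i) := by
    intro i
    have hg : hxv i - hyv i = mact (Lidh i) (u i) := (mact_sub _ _ _).symm
    rw [hg]
    have h1 : ⟪mact (Lidh i) (u i), mact (Lidh i) (u i)⟫ = quad 1 (mact (Lidh i) (u i)) := by
      rw [quad, mact_one]
    rw [h1, quad_mact, Matrix.mul_one, hsymh i, (hLidh i).2]
  -- per-i smoothness bound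
  have hbound : ∀ i, quad (Lidag i) (u i) ≤ 2 * Df i := fun i =>
    key_smooth (hfi i).1 (hfi i).2.1 (hfi i).2.2.2 (hLidag i).2.1 (by
      rw [← (hLidh i).2, Matrix.transpose_mul, hsymh i]) x y
  -- gradient of the average
  have hfder : ⟪gradient f y, x - y⟫ = (1 / (n : ℝ)) * ∑ i, ⟪gradient (fi i) y, x - y⟫ := by
    have hF : HasFDerivAt f ((1 / (n : ℝ)) • ∑ i, fderiv ℝ (fi i) y) y := by
      rw [hf]
      exact HasFDerivAt.const_mul
        (HasFDerivAt.fun_sum fun i _ => ((hfi i).1 y).hasFDerivAt) (1 / (n : ℝ))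
    rw [inner_gradient, hF.fderiv]
    simp only [ContinuousLinearMap.smul_apply, ContinuousLinearMap.sum_apply, smul_eq_mul]
    congr 1
    exact Finset.sum_congr rfl fun i _ => (inner_gradient _ _ _).symm
  have hDf : f x - f y - ⟪gradient f y, x - y⟫ = (1 / (n : ℝ)) * ∑ i, Df i := by
    rw [hfder]
    simp only [hf, hDfi]
    rw [Finset.sum_sub_distrib, Finset.sum_sub_distrib, mul_sub, mul_sub]
  rw [hLHS, hDf]
  have hstep : ∑ i, (Qa i + ⟪hxv i - hyv i, hxv i - hyv i⟫)
      ≤ ∑ i, Qa i + ∑ i, 2 * Df i := by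
    rw [← Finset.sum_add_distrib]
    refine Finset.sum_le_sum fun i _ => ?_
    have := (hnorm i) ▸ hbound i
    linarith [this]
  have hnn : (0 : ℝ) ≤ 1 / (n : ℝ) := by positivity
  calc (1 / (n : ℝ)) * ∑ i, (Qa i + ⟪hxv i - hyv i, hxv i - hyv i⟫)
      ≤ (1 / (n : ℝ)) * (∑ i, Qa i + ∑ i, 2 * Df i) :=
        mul_le_mul_of_nonneg_left hstep hnn
    _ = (1 / (n : ℝ)) * ∑ i, Qa i + 2 * ((1 / (n : ℝ)) * ∑ i, Df i) := by
        have hB : ∑ i, 2 * Df i = 2 * ∑ i, Df i := by rw [Finset.mul_sum]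
        rw [mul_add, hB]; ring
end
end

section
/- (Fixed-sketch indistinguishability lower bound.) Let B be a symmetric positive definite d×d real matrix, S an s×d real matrix, and x ∈ ℝ^d with ‖x‖_B = 1. Define x† = B^{-1} Sᵀ (S B^{-1} Sᵀ)† S x and x^S = 2 x† − x, where (·)† is the Moore–Penrose pseudoinverse. Then: S x† = S x, ⟨x†, x† − x⟩_B = 0, ‖x^S‖_B = 1, S x^S = S x, and for every function D : ℝ^s → ℝ^d, max( ‖D(S x) − x‖²_B , ‖D(S x^S) − x^S‖²_B ) ≥ ‖x† − x‖²_B = 1 − ‖x†‖²_B. Moreover, if S has trivial kernel then x† = x. -/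
open scoped BigOperators RealInnerProductSpace
open Matrix

noncomputable section

lemma zero_of_conj {s d : ℕ} (A : Matrix (Fin d) (Fin d) ℝ) (hA : A.PosDef)
    (M : Matrix (Fin s) (Fin d) ℝ) (h : M * A * Mᵀ = 0) : M = 0 := by
  ext i j
  by_contra hne
  have hrow : M i ≠ 0 := fun h0 => hne (by simp [h0, Pi.zero_apply])
  have hpos : 0 < M i ⬝ᵥ A.mulVec (M i) := by simpa using hA.dotProduct_mulVec_pos hrow
  have hdiag : (M * A * Mᵀ) i i = M i ⬝ᵥ A.mulVec (M i) := by
    simp [Matrix.mul_apply, Matrix.mulVec, dotProduct, Finset.mul_sum, Finset.sum_mul]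
    rw [Finset.sum_comm]
    congr 1; ext k; congr 1; ext l; ring
  rw [h] at hdiag
  simp at hdiag
  linarith [hpos, hdiag]

/-- fixed-sketch indistinguishability lower bound. With
`x† = B⁻¹Sᵀ(SB⁻¹Sᵀ)†Sx` and `x^S = 2x† − x` for a unit `B`-norm vector `x`:
`Sx† = Sx`, `⟨x†, x†−x⟩_B = 0`, `‖x^S‖_B = 1`, `Sx^S = Sx`, every decoder incurs squared
error at least `‖x†−x‖²_B = 1 − ‖x†‖²_B` on one of `x, x^S`, and if `ker S = {0}` then
`x† = x`. -/
theorem statement17 {d s : ℕ} (B : Matrix (Fin d) (Fin d) ℝ) (hB : B.PosDef)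
    (S : Matrix (Fin s) (Fin d) ℝ) (Ndag : Matrix (Fin s) (Fin s) ℝ)
    (hNdag : IsMoorePenrose (S * B⁻¹ * Sᵀ) Ndag)
    (x : Fin d → ℝ) (hx : x ⬝ᵥ B.mulVec x = 1)
    (xdag xS : Fin d → ℝ)
    (hxdag : xdag = (B⁻¹ * Sᵀ * Ndag * S).mulVec x)
    (hxS : xS = (2 : ℝ) • xdag - x) :
    S.mulVec xdag = S.mulVec x ∧
    xdag ⬝ᵥ B.mulVec (xdag - x) = 0 ∧
    xS ⬝ᵥ B.mulVec xS = 1 ∧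
    S.mulVec xS = S.mulVec x ∧
    (∀ D : (Fin s → ℝ) → (Fin d → ℝ),
      (xdag - x) ⬝ᵥ B.mulVec (xdag - x)
        ≤ max ((D (S.mulVec x) - x) ⬝ᵥ B.mulVec (D (S.mulVec x) - x))
            ((D (S.mulVec xS) - xS) ⬝ᵥ B.mulVec (D (S.mulVec xS) - xS))) ∧
    (xdag - x) ⬝ᵥ B.mulVec (xdag - x) = 1 - xdag ⬝ᵥ B.mulVec xdag ∧
    ((∀ v : Fin d → ℝ, S.mulVec v = 0 → v = 0) → xdag = x) := by
  have hBt : Bᵀ = B := by simpa using hB.isHermitian.eq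
  have hBinv : (B⁻¹).PosDef := hB.inv
  have hBinvt : (B⁻¹)ᵀ = B⁻¹ := by simpa using hBinv.isHermitian.eq
  have hBB : B * B⁻¹ = 1 := Matrix.mul_nonsing_inv B (isUnit_iff_ne_zero.mpr hB.det_pos.ne')
  set N : Matrix (Fin s) (Fin s) ℝ := S * B⁻¹ * Sᵀ with hN
  -- key: N * Ndag * S = S
  have hM0 : (S - N * Ndag * S) * B⁻¹ * (S - N * Ndag * S)ᵀ = 0 := by
    have hPN : (N * Ndag) * N = N := hNdag.1
    have e0 : S - N * Ndag * S = (1 - N * Ndag) * S := by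
      rw [Matrix.sub_mul, Matrix.one_mul]
    rw [e0]
    have e1 : (1 - N * Ndag) * S * B⁻¹ * ((1 - N * Ndag) * S)ᵀ
        = ((1 - N * Ndag) * N) * (1 - N * Ndag)ᵀ := by
      rw [Matrix.transpose_mul, hN]
      simp only [Matrix.mul_assoc]
    rw [e1, Matrix.sub_mul, Matrix.one_mul, hPN, sub_self, Matrix.zero_mul]
  have hkey : N * Ndag * S = S := by
    have h2 : S - N * Ndag * S = 0 := zero_of_conj B⁻¹ hBinv _ hM0
    exact (sub_eq_zero.mp h2).symm
  -- 1. S xdag = S x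
  have h1 : S.mulVec xdag = S.mulVec x := by
    have hm : S * (B⁻¹ * Sᵀ * Ndag * S) = S := by
      calc S * (B⁻¹ * Sᵀ * Ndag * S) = N * Ndag * S := by
            rw [hN]; simp only [Matrix.mul_assoc]
      _ = S := hkey
    rw [hxdag, Matrix.mulVec_mulVec, hm]
  -- B xdag = Sᵀ Ndag S x
  have hBxdag : B.mulVec xdag = (Sᵀ * Ndag * S).mulVec x := by
    have hm : B * (B⁻¹ * Sᵀ * Ndag * S) = Sᵀ * Ndag * S := by
      calc B * (B⁻¹ * Sᵀ * Ndag * S) = (B * B⁻¹) * (Sᵀ * (Ndag * S)) := by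
            simp only [Matrix.mul_assoc]
      _ = Sᵀ * Ndag * S := by rw [hBB, Matrix.one_mul, Matrix.mul_assoc]
    rw [hxdag, Matrix.mulVec_mulVec, hm]
  -- 2. orthogonality
  have hsym : ∀ u v : Fin d → ℝ, u ⬝ᵥ B.mulVec v = v ⬝ᵥ B.mulVec u := by
    intro u v
    rw [Matrix.dotProduct_mulVec, ← Matrix.mulVec_transpose, hBt, dotProduct_comm]
  have h2 : xdag ⬝ᵥ B.mulVec (xdag - x) = 0 := by
    have : xdag ⬝ᵥ B.mulVec (xdag - x) = (B.mulVec xdag) ⬝ᵥ (xdag - x) := by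
      rw [Matrix.dotProduct_mulVec, ← Matrix.mulVec_transpose, hBt]
    rw [this, hBxdag]
    have : (Sᵀ * Ndag * S).mulVec x = Sᵀ.mulVec ((Ndag * S).mulVec x) := by
      rw [Matrix.mulVec_mulVec, Matrix.mul_assoc]
    rw [this, Matrix.mulVec_transpose, ← Matrix.dotProduct_mulVec,
      Matrix.mulVec_sub, h1, sub_self, dotProduct_zero]
  -- abbreviations
  set a := xdag ⬝ᵥ B.mulVec xdag with ha
  have hb : xdag ⬝ᵥ B.mulVec x = a := by
    have := h2
    rw [Matrix.mulVec_sub, dotProduct_sub] at this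
    linarith
  have hc : x ⬝ᵥ B.mulVec xdag = a := by rw [hsym x xdag, hb]
  -- 3. norm of xS
  have h3 : xS ⬝ᵥ B.mulVec xS = 1 := by
    rw [hxS]
    simp only [Matrix.mulVec_sub, Matrix.mulVec_smul, dotProduct_sub,
      sub_dotProduct, dotProduct_smul, smul_dotProduct, smul_eq_mul]
    rw [← ha] at *
    rw [hb, hc] at *
    linarith [hx]
  -- 4.
  have h4 : S.mulVec xS = S.mulVec x := by
    rw [hxS, Matrix.mulVec_sub, Matrix.mulVec_smul, h1]
    ext i; simp; ring
  -- 6.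
  have h6 : (xdag - x) ⬝ᵥ B.mulVec (xdag - x) = 1 - a := by
    simp only [Matrix.mulVec_sub, dotProduct_sub, sub_dotProduct]
    rw [← ha, hb, hc, hx]; ring
  refine ⟨h1, h2, h3, h4, ?_, h6, ?_⟩
  · intro D
    set c := D (S.mulVec x) with hcD
    have hsame : D (S.mulVec xS) = c := by rw [h4]
    rw [hsame]
    set q1 := (c - x) ⬝ᵥ B.mulVec (c - x)
    set q2 := (c - xS) ⬝ᵥ B.mulVec (c - xS)
    have hid : q1 + q2 = 2 * ((c - xdag) ⬝ᵥ B.mulVec (c - xdag)) + 2 * ((xdag - x) ⬝ᵥ B.mulVec (xdag - x)) := by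
      have e1 : c - x = (c - xdag) + (xdag - x) := by abel
      have e2 : c - xS = (c - xdag) - (xdag - x) := by rw [hxS]; ext i; simp; ring
      rw [show q1 = (c - x) ⬝ᵥ B.mulVec (c - x) from rfl,
        show q2 = (c - xS) ⬝ᵥ B.mulVec (c - xS) from rfl, e1, e2]
      simp only [Matrix.mulVec_add, Matrix.mulVec_sub, dotProduct_add,
        dotProduct_sub, add_dotProduct, sub_dotProduct]
      ring
    have hnn : 0 ≤ (c - xdag) ⬝ᵥ B.mulVec (c - xdag) := by simpa using hB.posSemidef.dotProduct_mulVec_nonneg (c - xdag)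
    have hq1 : q1 ≤ max q1 q2 := le_max_left _ _
    have hq2 : q2 ≤ max q1 q2 := le_max_right _ _
    linarith
  · intro hker
    have : S.mulVec (xdag - x) = 0 := by rw [Matrix.mulVec_sub, h1, sub_self]
    have := hker _ this
    have : xdag - x = 0 := this
    ext i
    have := congrFun this i
    simpa [sub_eq_zero] using this
end
end
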